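/- arXiv:1811.02995 — 4 statements merged into one kernel-verified Lean document; each statement's English description precedes it below -/
import Mathlib

section
/- Let Γ be a two-ended highly-arc-transitive digraph of prime out-valency p such that the fibres Γ_i (of the homomorphism to Z⃗) have more than 2 elements. Then every alternet of Γ is a complete bipartite digraph K⃗_{p,p}: for each arc (v,u), all p in-neighbours of u have the same out-neighbourhood, namely the set out(v) of size p, and these 2p vertices with all p² arcs between them form an alternet. -/
variable {V : Type*}

/-- The automorphism group of a digraph given by its arc relation `E`. -/
def autGroup (E : V → V → Prop) : Subgroup (Equiv.Perm V) where
  carrier := {g | ∀ u v : V, E u v ↔ E (g u) (g v)}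
  one_mem' := by intro u v; simp
  mul_mem' := by
    intro a b ha hb u v
    simpa [Equiv.Perm.mul_apply] using (hb u v).trans (ha (b u) (b v))
  inv_mem' := by
    intro a ha u v
    simpa using (ha (a⁻¹ u) (a⁻¹ v)).symm

/-- Connectedness of a digraph (in the underlying undirected sense). -/
def DConnected (E : V → V → Prop) : Prop :=
  ∀ u v : V, Relation.ReflTransGen (fun a b => E a b ∨ E b a) u v

/-- `f : Fin (k+1) → V` is a `k`-arc. -/
def IsKArc (E : V → V → Prop) (k : ℕ) (f : Fin (k + 1) → V) : Prop :=
  ∀ i : Fin k, E (f i.castSucc) (f i.succ)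

def KArcTransitive (E : V → V → Prop) (k : ℕ) : Prop :=
  ∀ f g : Fin (k + 1) → V, IsKArc E k f → IsKArc E k g →
    ∃ a ∈ autGroup E, ∀ i, (a : Equiv.Perm V) (f i) = g i

def HighlyArcTransitive (E : V → V → Prop) : Prop :=
  ∀ k : ℕ, KArcTransitive E k

def VertexTransitive (E : V → V → Prop) : Prop :=
  ∀ u v : V, ∃ a ∈ autGroup E, (a : Equiv.Perm V) u = v

def ArcTransitive (E : V → V → Prop) : Prop :=
  ∀ u v x y : V, E u v → E x y →
    ∃ a ∈ autGroup E, (a : Equiv.Perm V) u = x ∧ (a : Equiv.Perm V) v = y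

/-- Reachability in the underlying undirected graph avoiding the vertex set `S`. -/
def ReachAvoid (E : V → V → Prop) (S : Set V) : V → V → Prop :=
  Relation.ReflTransGen (fun a b => (E a b ∨ E b a) ∧ a ∉ S ∧ b ∉ S)

/-- `u` lies in an infinite component of the complement of `S`. -/
def InfComp (E : V → V → Prop) (S : Set V) (u : V) : Prop :=
  u ∉ S ∧ {w | ReachAvoid E S u w}.Infinite

/-- A connected digraph with exactly two ends. -/
def TwoEnded (E : V → V → Prop) : Prop :=
  DConnected E ∧
  (∀ S : Set V, S.Finite → ∀ u v w : V, InfComp E S u → InfComp E S v → InfComp E S w →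
    ReachAvoid E S u v ∨ ReachAvoid E S u w ∨ ReachAvoid E S v w) ∧
  ∃ S : Set V, S.Finite ∧ ∃ u v : V, InfComp E S u ∧ InfComp E S v ∧ ¬ ReachAvoid E S u v

/-- The stabilizer of a vertex `v` in the automorphism group. -/
def vStab (E : V → V → Prop) (v : V) : Subgroup (autGroup E) where
  carrier := {g | (g : Equiv.Perm V) v = v}
  one_mem' := rfl
  mul_mem' := by
    intro a b ha hb
    simp only [Set.mem_setOf_eq] at *
    simp [Subgroup.coe_mul, Equiv.Perm.mul_apply, ha, hb]
  inv_mem' := by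
    intro a ha
    simp only [Set.mem_setOf_eq] at *
    have := congrArg (((a : Equiv.Perm V))⁻¹ : Equiv.Perm V) ha
    simpa using this.symm

def outSet (E : V → V → Prop) (v : V) : Set V := {u | E v u}
def inSet (E : V → V → Prop) (v : V) : Set V := {u | E u v}

/-- The stabilizer of `v` acts quasi-primitively on the set `Ω`. -/
def QuasiPrimitivelyOn (E : V → V → Prop) (v : V) (Ω : Set V) : Prop :=
  (∀ u ∈ Ω, ∀ w ∈ Ω, ∃ g ∈ vStab E v, ((g : autGroup E) : Equiv.Perm V) u = w) ∧
  (∀ N : Subgroup (vStab E v), N.Normal →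
    (∀ n ∈ N, ∀ u ∈ Ω, (((n : vStab E v) : autGroup E) : Equiv.Perm V) u = u) ∨
    (∀ u ∈ Ω, ∀ w ∈ Ω, ∃ n ∈ N, (((n : vStab E v) : autGroup E) : Equiv.Perm V) u = w))
universe u v

/-- A bundled digraph. -/
structure Digr : Type (u + 1) where
  V : Type u
  E : V → V → Prop

/-- The type of arcs of a digraph. -/
def Digr.Arc (D : Digr) : Type _ := {p : D.V × D.V // D.E p.1 p.2}

/-- The partial line graph: vertices are the arcs, with an arc from `(x,y)` to `(w,z)` iff `y = w`. -/
def Pl (D : Digr) : Digr := ⟨D.Arc, fun a b => a.1.2 = b.1.1⟩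

/-- The `r`-fold iterated partial line graph. -/
def PlIter : ℕ → Digr → Digr
  | 0, D => D
  | r + 1, D => Pl (PlIter r D)

/-- The digraph `Δ_p` on `ℤ × ZMod p` with all arcs `((i,x),(i+1,y))`. -/
def Delta (p : ℕ) : Digr := ⟨ℤ × ZMod p, fun a b => b.1 = a.1 + 1⟩

/-- Two arcs are related if they share an initial vertex or a terminal vertex;
the alternet relation is the equivalence relation generated by this. -/
def altRel (D : Digr) : D.Arc → D.Arc → Prop :=
  Relation.EqvGen (fun a b => a.1.1 = b.1.1 ∨ a.1.2 = b.1.2)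

def altSetoid (D : Digr) : Setoid D.Arc :=
  ⟨altRel D, Relation.EqvGen.is_equivalence _⟩

/-- The digraph of alternets: vertices are alternets, with an arc `(A, B)` whenever
a sink of `A` (a terminal vertex of an arc of `A`) is a source of `B`
(an initial vertex of an arc of `B`). -/
def Al (D : Digr) : Digr :=
  ⟨Quotient (altSetoid D),
    fun A B => ∃ a b : D.Arc, Quotient.mk (altSetoid D) a = A ∧
      Quotient.mk (altSetoid D) b = B ∧ a.1.2 = b.1.1⟩

/-- Isomorphism of digraphs. -/
def DigrIso (D₁ : Digr.{u}) (D₂ : Digr.{v}) : Prop :=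
  ∃ e : D₁.V ≃ D₂.V, ∀ u v : D₁.V, D₁.E u v ↔ D₂.E (e u) (e v)


namespace St12
variable {V : Type*} {E : V → V → Prop}

lemma aut_arc {g : Equiv.Perm V} (hg : g ∈ autGroup E) {a b : V} (h : E a b) :
    E (g a) (g b) := (hg a b).mp h

lemma aut_arc_inv {g : Equiv.Perm V} (hg : g ∈ autGroup E) {a b : V} (h : E (g a) (g b)) :
    E a b := (hg a b).mpr h

lemma out_image {g : Equiv.Perm V} (hg : g ∈ autGroup E) (v : V) :
    outSet E (g v) = g '' outSet E v := by
  ext x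
  constructor
  · intro hx
    refine ⟨g⁻¹ x, ?_, by simp⟩
    have h2 := (hg v (g⁻¹ x)).mpr
    simp only [Equiv.Perm.inv_def, Equiv.apply_symm_apply] at h2
    exact h2 hx
  · rintro ⟨y, hy, rfl⟩
    exact aut_arc hg hy

lemma in_image {g : Equiv.Perm V} (hg : g ∈ autGroup E) (v : V) :
    inSet E (g v) = g '' inSet E v := by
  ext x
  constructor
  · intro hx
    refine ⟨g⁻¹ x, ?_, by simp⟩
    have h2 := (hg (g⁻¹ x) v).mpr
    simp only [Equiv.Perm.inv_def, Equiv.apply_symm_apply] at h2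
    exact h2 hx
  · rintro ⟨y, hy, rfl⟩
    exact aut_arc hg hy

lemma fin_of_ncard {s : Set V} {n : ℕ} (h : s.ncard = n) (hn : 0 < n) : s.Finite := by
  by_contra hinf
  rw [← Set.not_infinite, not_not] at hinf
  rw [hinf.ncard] at h
  omega

lemma vertex_trans (hhat : HighlyArcTransitive E) (u v : V) :
    ∃ g ∈ autGroup E, g u = v := by
  obtain ⟨a, ha, hmap⟩ := hhat 0 (fun _ => u) (fun _ => v)
    (fun i => i.elim0) (fun i => i.elim0)
  exact ⟨a, ha, hmap 0⟩

lemma arc_trans (hhat : HighlyArcTransitive E) {v u x y : V} (h1 : E v u) (h2 : E x y) :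
    ∃ g ∈ autGroup E, g v = x ∧ g u = y := by
  obtain ⟨a, ha, hmap⟩ := hhat 1 ![v, u] ![x, y]
    (by intro i; fin_cases i; simpa using h1)
    (by intro i; fin_cases i; simpa using h2)
  refine ⟨a, ha, ?_, ?_⟩
  · simpa using hmap 0
  · simpa using hmap 1

lemma shift_of_fix (hconn : DConnected E) (φ : V → ℤ)
    (hhom : ∀ u v : V, E u v → φ v = φ u + 1)
    {g : Equiv.Perm V} (hg : g ∈ autGroup E) {v : V} (hv : g v = v) :
    ∀ x, φ (g x) = φ x := by
  have key : ∀ x y : V, Relation.ReflTransGen (fun a b => E a b ∨ E b a) x y →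
      φ (g x) - φ x = φ (g y) - φ y := by
    intro x y h
    induction h with
    | refl => rfl
    | tail _ hstep ih =>
      rename_i b c _
      rcases hstep with h' | h'
      · have e1 := hhom _ _ h'
        have e2 := hhom _ _ ((hg b c).mp h')
        omega
      · have e1 := hhom _ _ h'
        have e2 := hhom _ _ ((hg c b).mp h')
        omega
  intro x
  have := key v x (hconn v x)
  rw [hv] at this
  omega

lemma in_fin (φ : V → ℤ) (hhom : ∀ u v : V, E u v → φ v = φ u + 1)
    (m : ℕ) (hm : 0 < m) (hfib : ∀ i : ℤ, (φ ⁻¹' {i}).ncard = m) (x : V) :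
    (inSet E x).Finite := by
  have hsub : inSet E x ⊆ φ ⁻¹' {φ x - 1} := by
    intro w hw
    have := hhom w x hw
    simp only [Set.mem_preimage, Set.mem_singleton_iff]
    omega
  exact (fin_of_ncard (hfib (φ x - 1)) hm).subset hsub

lemma in_card_eq (p : ℕ) (hp : 0 < p) (hout : ∀ v : V, (outSet E v).ncard = p)
    (φ : V → ℤ) (hhom : ∀ u v : V, E u v → φ v = φ u + 1)
    (m : ℕ) (hm : 0 < m) (hfib : ∀ i : ℤ, (φ ⁻¹' {i}).ncard = m)
    (hconst : ∀ u u' : V, (inSet E u).ncard = (inSet E u').ncard)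
    (u₀ : V) : (inSet E u₀).ncard = p := by
  classical
  set q : ℕ := (inSet E u₀).ncard with hq
  set i : ℤ := φ u₀ - 1 with hi
  set S : Set V := φ ⁻¹' {i} with hS
  set T : Set V := φ ⁻¹' {i + 1} with hT
  have hSfin : S.Finite := fin_of_ncard (hfib i) hm
  have hTfin : T.Finite := fin_of_ncard (hfib (i+1)) hm
  haveI : Fintype ↥S := hSfin.fintype
  haveI : Fintype ↥T := hTfin.fintype
  haveI instO : ∀ w : V, Fintype ↥(outSet E w) :=
    fun w => (fin_of_ncard (hout w) hp).fintype
  haveI instI : ∀ w : V, Fintype ↥(inSet E w) :=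
    fun w => (in_fin φ hhom m hm hfib w).fintype
  let A := {a : V × V // φ a.1 = i ∧ E a.1 a.2}
  have e1 : A ≃ Σ w : ↥S, ↥(outSet E w.1) :=
    { toFun := fun a => ⟨⟨a.1.1, a.2.1⟩, ⟨a.1.2, a.2.2⟩⟩
      invFun := fun s => ⟨(s.1.1, s.2.1), ⟨s.1.2, s.2.2⟩⟩
      left_inv := fun a => rfl
      right_inv := fun s => rfl }
  have e2 : A ≃ Σ x : ↥T, ↥(inSet E x.1) :=
    { toFun := fun a => ⟨⟨a.1.2, by
        have h1 := hhom a.1.1 a.1.2 a.2.2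
        have h2 : φ a.1.1 = i := a.2.1
        show φ a.1.2 = i + 1
        omega⟩, ⟨a.1.1, a.2.2⟩⟩
      invFun := fun s => ⟨(s.2.1, s.1.1), by
        have h1 : φ (s.1 : V) = i + 1 := s.1.2
        have h2 : φ (s.1 : V) = φ (s.2 : V) + 1 := hhom _ _ s.2.2
        exact ⟨show φ (s.2 : V) = i by omega, s.2.2⟩⟩
      left_inv := fun a => rfl
      right_inv := fun s => rfl }
  have c1 : Nat.card A = m * p := by
    rw [Nat.card_congr e1, Nat.card_eq_fintype_card, Fintype.card_sigma]
    have : ∀ w : ↥S, Fintype.card ↥(outSet E w.1) = p := by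
      intro w
      rw [← Set.toFinset_card, ← Set.ncard_eq_toFinset_card', hout]
    rw [Finset.sum_congr rfl (fun w _ => this w), Finset.sum_const, Finset.card_univ,
      smul_eq_mul]
    have : Fintype.card ↥S = m := by
      rw [← Set.toFinset_card, ← Set.ncard_eq_toFinset_card']
      exact hfib i
    rw [this]
  have c2 : Nat.card A = m * q := by
    rw [Nat.card_congr e2, Nat.card_eq_fintype_card, Fintype.card_sigma]
    have : ∀ x : ↥T, Fintype.card ↥(inSet E x.1) = q := by
      intro x
      rw [← Set.toFinset_card, ← Set.ncard_eq_toFinset_card', hconst x.1 u₀]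
    rw [Finset.sum_congr rfl (fun x _ => this x), Finset.sum_const, Finset.card_univ,
      smul_eq_mul]
    have : Fintype.card ↥T = m := by
      rw [← Set.toFinset_card, ← Set.ncard_eq_toFinset_card']
      exact hfib (i+1)
    rw [this]
  have hmp : m * p = m * q := by rw [← c1, ← c2]
  have : p = q := Nat.eq_of_mul_eq_mul_left hm hmp
  omega

lemma block {p : ℕ} (hp : p.Prime) (κ : V → Set V)
    (hκ : ∀ g : Equiv.Perm V, g ∈ autGroup E → ∀ x, κ (g x) = g '' κ x)
    (Ω : Set V) (hΩ : Ω.ncard = p)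
    (htrans : ∀ x ∈ Ω, ∀ y ∈ Ω, ∃ g : Equiv.Perm V, g ∈ autGroup E ∧ g x = y ∧ g '' Ω = Ω)
    {x₀ x₁ : V} (h0 : x₀ ∈ Ω) (h1 : x₁ ∈ Ω) (hne : x₀ ≠ x₁) (heq : κ x₀ = κ x₁) :
    ∀ y ∈ Ω, κ y = κ x₀ := by
  classical
  have hfin : Ω.Finite := fin_of_ncard hΩ hp.pos
  set cls : V → Set V := fun y => {z | z ∈ Ω ∧ κ z = κ y} with hcls
  have hclssub : ∀ y, cls y ⊆ Ω := fun y z hz => hz.1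
  have himg : ∀ y ∈ Ω, (cls y).ncard = (cls x₀).ncard := by
    intro y hy
    obtain ⟨g, hg, hgx, hgΩ⟩ := htrans x₀ h0 y hy
    have hcl : cls y = g '' cls x₀ := by
      ext z
      constructor
      · rintro ⟨hzΩ, hzκ⟩
        refine ⟨g⁻¹ z, ⟨?_, ?_⟩, by simp⟩
        · have : z ∈ g '' Ω := hgΩ.symm ▸ hzΩ
          obtain ⟨w, hw, rfl⟩ := this
          simpa using hw
        · have e1 : κ z = g '' κ (g⁻¹ z) := by
            rw [← hκ g hg]
            simp
          have e2 : κ y = g '' κ x₀ := by rw [← hgx, hκ g hg]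
          have : g '' κ (g⁻¹ z) = g '' κ x₀ := by rw [← e1, hzκ, e2]
          exact (Set.image_injective.mpr g.injective) this
      · rintro ⟨w, ⟨hwΩ, hwκ⟩, rfl⟩
        refine ⟨hgΩ ▸ Set.mem_image_of_mem g hwΩ, ?_⟩
        rw [hκ g hg, hwκ, ← hκ g hg, hgx]
    rw [hcl, Set.ncard_image_of_injective _ g.injective]
  set s : ℕ := (cls x₀).ncard with hs
  have hs2 : 2 ≤ s := by
    have : 1 < (cls x₀).ncard := by
      rw [Set.one_lt_ncard_iff (hfin.subset (hclssub x₀))]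
      exact ⟨x₀, x₁, ⟨h0, rfl⟩, ⟨h1, heq.symm⟩, hne⟩
    omega
  have hcount : ∃ t : ℕ, p = t * s := by
    set Ωf : Finset V := hfin.toFinset with hΩf
    set vals : Finset (Set V) := Ωf.image κ with hvals
    have hmem : ∀ x ∈ Ωf, κ x ∈ vals := fun x hx => Finset.mem_image_of_mem κ hx
    have hsum := Finset.card_eq_sum_card_fiberwise hmem
    have hterm : ∀ O ∈ vals, (Ωf.filter (fun z => κ z = O)).card = s := by
      intro O hO
      obtain ⟨y, hy, rfl⟩ := Finset.mem_image.mp hO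
      have hyΩ : y ∈ Ω := hfin.mem_toFinset.mp hy
      have : cls y = ↑(Ωf.filter (fun z => κ z = κ y)) := by
        ext z
        simp [hcls, hΩf, Set.Finite.mem_toFinset]
      rw [← Set.ncard_coe_finset, ← this, himg y hyΩ]
    rw [Finset.sum_congr rfl hterm, Finset.sum_const, smul_eq_mul] at hsum
    refine ⟨vals.card, ?_⟩
    rw [← hsum, ← Set.ncard_eq_toFinset_card _ hfin, hΩ]
  obtain ⟨t, ht⟩ := hcount
  have hdvd : s ∣ p := ⟨t, by rw [ht, Nat.mul_comm]⟩
  have hsp : s = p := by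
    rcases (Nat.Prime.eq_one_or_self_of_dvd hp s hdvd) with h | h
    · omega
    · exact h
  have hclseq : cls x₀ = Ω :=
    Set.eq_of_subset_of_ncard_le (hclssub x₀) (by rw [hΩ, ← hs, hsp]) hfin
  intro y hy
  have : y ∈ cls x₀ := hclseq.symm ▸ hy
  exact this.2

section Rigid

variable (hhat : HighlyArcTransitive E) (hconn : DConnected E)
  {φ : V → ℤ} (hhom : ∀ u v : V, E u v → φ v = φ u + 1)
  {p : ℕ} (hp : p.Prime) (hout : ∀ v : V, (outSet E v).ncard = p)
  {m : ℕ} (hm : 0 < m) (hfib : ∀ i : ℤ, (φ ⁻¹' {i}).ncard = m)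

include hhat hconn hhom hp hout hm hfib in
lemma rigid_false
    (hin : ∀ u : V, (inSet E u).ncard = p)
    (hbad : ∀ u x x' : V, E x u → E x' u → outSet E x = outSet E x' → x = x')
    (hbad_in : ∀ w u u' : V, E w u → E w u' → inSet E u = inSet E u' → u = u')
    (v : V) : False := by
  classical
  -- level preservation for automorphisms fixing v
  have hlev : ∀ g : Equiv.Perm V, g ∈ autGroup E → g v = v → ∀ x, φ (g x) = φ x :=
    fun g hg hv => shift_of_fix hconn φ hhom hg hv
  -- faithfulness on the fibre of v
  have faithful : ∀ g : Equiv.Perm V, g ∈ autGroup E → g v = v →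
      (∀ x, φ x = φ v → g x = x) → ∀ x, g x = x := by
    intro g hg hv hfix
    have hglev := hlev g hg hv
    have hglev' : ∀ y, φ (g⁻¹ y) = φ y := by
      intro y
      have h := hglev (g⁻¹ y)
      rw [show g (g⁻¹ y) = y from Equiv.apply_symm_apply g y] at h
      omega
    have main : ∀ d : ℤ, ∀ x, φ x = φ v + d → g x = x := by
      intro d
      induction d using Int.induction_on with
      | zero => intro x hx; exact hfix x (by omega)
      | succ n ih =>
        intro x hx
        -- show inSet E (g x) = inSet E x, then use hbad_in
        have hins : inSet E (g x) = inSet E x := by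
          ext z
          constructor
          · intro hz
            have h1 : E (g⁻¹ z) x := by
              have := aut_arc_inv (a := g⁻¹ z) (b := x) hg
              apply this
              simpa [inSet] using hz
            have h2 : φ (g⁻¹ z) = φ v + n := by
              have := hhom _ _ h1
              have := hglev' z
              omega
            have h3 : g (g⁻¹ z) = g⁻¹ z := ih _ h2
            have h4 : z = g⁻¹ z := by
              conv_lhs => rw [← (show g (g⁻¹ z) = z from Equiv.apply_symm_apply g z)]
              rw [h3]
            rw [h4]
            exact h1
          · intro hz
            have h2 : φ z = φ v + n := by
              have := hhom _ _ hz
              omega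
            have h3 : g z = z := ih _ h2
            have := aut_arc hg hz
            rwa [h3] at this
        have hne : (inSet E x).Nonempty := by
          apply Set.nonempty_of_ncard_ne_zero
          rw [hin x]
          exact Nat.Prime.ne_zero hp
        obtain ⟨w, hw⟩ := hne
        have hw' : w ∈ inSet E (g x) := by rw [hins]; exact hw
        exact (hbad_in w (g x) x hw' hw hins)
      | pred n ih =>
        intro x hx
        have houts : outSet E (g x) = outSet E x := by
          ext z
          constructor
          · intro hz
            have h1 : E x (g⁻¹ z) := by
              have := aut_arc_inv (a := x) (b := g⁻¹ z) hg
              apply this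
              simpa [outSet] using hz
            have h2 : φ (g⁻¹ z) = φ v + (-n : ℤ) := by
              have := hhom _ _ h1
              have := hglev' z
              omega
            have h3 : g (g⁻¹ z) = g⁻¹ z := ih _ (by rw [h2])
            have h4 : z = g⁻¹ z := by
              conv_lhs => rw [← (show g (g⁻¹ z) = z from Equiv.apply_symm_apply g z)]
              rw [h3]
            rw [h4]
            exact h1
          · intro hz
            have h2 : φ z = φ v + (-n : ℤ) := by
              have := hhom _ _ hz
              omega
            have h3 : g z = z := ih _ (by rw [h2])
            have := aut_arc hg hz
            rwa [h3] at this
        have hne : (outSet E x).Nonempty := by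
          apply Set.nonempty_of_ncard_ne_zero
          rw [hout x]
          exact Nat.Prime.ne_zero hp
        obtain ⟨u, hu⟩ := hne
        have hu' : E (g x) u := by
          have : u ∈ outSet E (g x) := by rw [houts]; exact hu
          exact this
        exact hbad u (g x) x hu' hu houts
    intro x
    exact main (φ x - φ v) x (by omega)

  -- the stabilizer of v is finite
  set Fib : Set V := φ ⁻¹' {φ v} with hFib
  have hFibfin : Fib.Finite := fin_of_ncard (hfib (φ v)) hm
  haveI : Finite ↥Fib := hFibfin.to_subtype
  let H := {g : Equiv.Perm V // g ∈ autGroup E ∧ g v = v}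
  have hmemFib : ∀ (g : H) (x : ↥Fib), g.1 x.1 ∈ Fib := by
    intro g x
    have h1 := hlev g.1 g.2.1 g.2.2 x.1
    have hx : φ (x : V) = φ v := x.2
    show φ (g.1 x.1) = φ v
    omega
  let Φ : H → (↥Fib → ↥Fib) := fun g x => ⟨g.1 x.1, hmemFib g x⟩
  have hΦinj : Function.Injective Φ := by
    intro g₁ g₂ hΦ
    have hptw : ∀ x : V, φ x = φ v → g₁.1 x = g₂.1 x := by
      intro x hx
      have := congrFun hΦ ⟨x, hx⟩
      exact Subtype.ext_iff.mp this
    have hmem : (g₁.1⁻¹ * g₂.1) ∈ autGroup E :=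
      (autGroup E).mul_mem ((autGroup E).inv_mem g₁.2.1) g₂.2.1
    have hvfix : (g₁.1⁻¹ * g₂.1) v = v := by
      show g₁.1⁻¹ (g₂.1 v) = v
      rw [g₂.2.2]
      exact Equiv.Perm.inv_eq_iff_eq.mpr g₁.2.2.symm
    have hfixf : ∀ x, φ x = φ v → (g₁.1⁻¹ * g₂.1) x = x := by
      intro x hx
      show g₁.1⁻¹ (g₂.1 x) = x
      rw [← hptw x hx]
      simp
    have hall := faithful _ hmem hvfix hfixf
    apply Subtype.ext
    apply Equiv.ext
    intro x
    have hx : g₁.1⁻¹ (g₂.1 x) = x := hall x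
    calc g₁.1 x = g₁.1 (g₁.1⁻¹ (g₂.1 x)) := by rw [hx]
    _ = g₂.1 x := by simp
  haveI hHfin : Finite H := Finite.of_injective Φ hΦinj
  -- two distinct successors at each vertex
  have hpair : ∀ w : V, ∃ a b : V, a ≠ b ∧ E w a ∧ E w b := by
    intro w
    have hfin : (outSet E w).Finite := fin_of_ncard (hout w) hp.pos
    have h1 : 1 < (outSet E w).ncard := by rw [hout w]; exact hp.one_lt
    obtain ⟨a, b, ha, hb, hab⟩ := (Set.one_lt_ncard_iff hfin).mp h1
    exact ⟨a, b, hab, ha, hb⟩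
  choose s₀ s₁ hne01 hE₀ hE₁ using hpair
  let sel : Bool → V → V := fun b x => if b then s₁ x else s₀ x
  have hsel : ∀ b x, E x (sel b x) := by
    intro b x
    cases b
    · simpa [sel] using hE₀ x
    · simpa [sel] using hE₁ x
  have hselne : ∀ x, sel true x ≠ sel false x := by
    intro x
    simpa [sel] using (hne01 x).symm
  set N := Nat.card H with hN
  have hbound : ∀ K : ℕ, 2 ^ K ≤ N := by
    intro K
    let ext : (Fin K → Bool) → ℕ → Bool := fun ε n => if h : n < K then ε ⟨n, h⟩ else true
    let path : (ℕ → Bool) → ℕ → V :=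
      fun ε n => Nat.rec (motive := fun _ => V) v (fun k x => sel (ε k) x) n
    have hpathS : ∀ ε n, path ε (n + 1) = sel (ε n) (path ε n) := fun ε n => rfl
    let Y := {f : Fin (K + 1) → V // IsKArc E K f ∧ f 0 = v}
    let inj : (Fin K → Bool) → Y := fun ε =>
      ⟨fun i => path (ext ε) i, by
        constructor
        · intro i
          show E (path (ext ε) (i.castSucc : Fin (K+1))) (path (ext ε) (i.succ : Fin (K+1)))
          rw [Fin.coe_castSucc, Fin.val_succ, hpathS]
          exact hsel _ _
        · rfl⟩
    have hinj : Function.Injective inj := by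
      intro ε₁ ε₂ h
      funext j
      have hval : ∀ i : Fin (K + 1), path (ext ε₁) i = path (ext ε₂) i :=
        fun i => congrFun (congrArg Subtype.val h) i
      have h1 := hval j.castSucc
      have h2 := hval j.succ
      rw [Fin.coe_castSucc] at h1
      rw [Fin.val_succ, hpathS, hpathS, h1] at h2
      have hj : (j : ℕ) < K := j.isLt
      have hext : ∀ ε : Fin K → Bool, ext ε (j : ℕ) = ε j := by
        intro ε
        simp only [ext, dif_pos hj]
      rw [hext ε₁, hext ε₂] at h2
      by_contra hcon
      cases hb₁ : ε₁ j <;> cases hb₂ : ε₂ j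
      · exact hcon (hb₁.trans hb₂.symm)
      · rw [hb₁, hb₂] at h2
        exact hselne _ h2.symm
      · rw [hb₁, hb₂] at h2
        exact hselne _ h2
      · exact hcon (hb₁.trans hb₂.symm)
    let f₀ : Y := inj (fun _ => true)
    let σ : H → Y := fun g =>
      ⟨fun i => g.1 (f₀.1 i), by
        constructor
        · intro i
          exact aut_arc g.2.1 (f₀.2.1 i)
        · show g.1 (f₀.1 0) = v
          rw [f₀.2.2, g.2.2]⟩
    have hσ : Function.Surjective σ := by
      intro y
      obtain ⟨a, ha, hmap⟩ := hhat K f₀.1 y.1 f₀.2.1 y.2.1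
      have hav : a v = v := by
        have h0 := hmap 0
        rw [f₀.2.2, y.2.2] at h0
        exact h0
      refine ⟨⟨a, ha, hav⟩, ?_⟩
      apply Subtype.ext
      funext i
      exact hmap i
    haveI : Finite Y := Finite.of_surjective σ hσ
    calc (2 : ℕ) ^ K = Nat.card (Fin K → Bool) := by
          simp [Nat.card_eq_fintype_card]
    _ ≤ Nat.card Y := Nat.card_le_card_of_injective inj hinj
    _ ≤ N := Nat.card_le_card_of_surjective σ hσ
  have hb1 := hbound N
  have hb2 := Nat.lt_two_pow_self (n := N)
  omega

include hhat hconn hhom hp hout hm hfib in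
lemma good_all (v₀ : V) :
    ∀ v u : V, E v u → ∀ w : V, E w u → outSet E w = outSet E v := by
  classical
  have hconst : ∀ u u' : V, (inSet E u).ncard = (inSet E u').ncard := by
    intro u u'
    obtain ⟨g, hg, hgu⟩ := vertex_trans hhat u u'
    rw [← hgu, in_image hg, Set.ncard_image_of_injective _ g.injective]
  have hin : ∀ u : V, (inSet E u).ncard = p :=
    in_card_eq p hp.pos hout φ hhom m hm hfib hconst
  by_cases hcase : ∃ (u x x' : V), x ≠ x' ∧ E x u ∧ E x' u ∧ outSet E x = outSet E x'
  · obtain ⟨u₀, x₀, x₁, hne, hx0, hx1, heq⟩ := hcase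
    have htrans : ∀ x ∈ inSet E u₀, ∀ y ∈ inSet E u₀,
        ∃ g : Equiv.Perm V, g ∈ autGroup E ∧ g x = y ∧ g '' inSet E u₀ = inSet E u₀ := by
      intro x hx y hy
      obtain ⟨g, hg, hgx, hgu⟩ := arc_trans hhat hx hy
      refine ⟨g, hg, hgx, ?_⟩
      rw [← in_image hg, hgu]
    have hall := block hp (outSet E) (fun g hg x => out_image hg x) (inSet E u₀) (hin u₀)
      htrans hx0 hx1 hne heq
    intro v u hvu w hwu
    obtain ⟨g, hg, hgx, hgu⟩ := arc_trans hhat hx0 hvu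
    have hw : w ∈ inSet E u := hwu
    rw [← hgu, in_image hg] at hw
    obtain ⟨y, hy, rfl⟩ := hw
    rw [out_image hg, hall y hy, ← out_image hg, hgx]
  · have hbad : ∀ u x x' : V, E x u → E x' u → outSet E x = outSet E x' → x = x' := by
      intro u x x' h1 h2 h3
      by_contra hne
      exact hcase ⟨u, x, x', hne, h1, h2, h3⟩
    have hbad_in : ∀ w u u' : V, E w u → E w u' → inSet E u = inSet E u' → u = u' := by
      intro w u u' h1 h2 h3
      by_contra hne
      have htrans : ∀ x ∈ outSet E w, ∀ y ∈ outSet E w,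
          ∃ g : Equiv.Perm V, g ∈ autGroup E ∧ g x = y ∧ g '' outSet E w = outSet E w := by
        intro x hx y hy
        obtain ⟨g, hg, hgw, hgx⟩ := arc_trans hhat hx hy
        refine ⟨g, hg, hgx, ?_⟩
        rw [← out_image hg, hgw]
      have hall := block hp (inSet E) (fun g hg x => in_image hg x) (outSet E w) (hout w)
        htrans h1 h2 hne h3
      have hfinin : (inSet E u).Finite := in_fin φ hhom m hm hfib u
      have h2c : 1 < (inSet E u).ncard := by rw [hin u]; exact hp.one_lt
      obtain ⟨a, b, ha, hb, hab⟩ := (Set.one_lt_ncard_iff hfinin).mp h2c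
      have houtw : ∀ x : V, x ∈ inSet E u → outSet E x = outSet E w := by
        intro x hx
        have hsub : outSet E w ⊆ outSet E x := by
          intro y hy
          have hiy := hall y hy
          have : x ∈ inSet E y := by rw [hiy]; exact hx
          exact this
        exact (Set.eq_of_subset_of_ncard_le hsub (by rw [hout, hout])
          (fin_of_ncard (hout x) hp.pos)).symm
      exact hab (hbad u a b ha hb (by rw [houtw a ha, houtw b hb]))
    exact (rigid_false hhat hconn hhom hp hout hm hfib hin hbad hbad_in v₀).elim

end Rigid
end St12

/-- In a two-ended highly-arc-transitive digraph of prime out-valency `p`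
whose fibres have size `m > 2`, every alternet is a complete bipartite digraph
`K⃗_{p,p}`: for each arc `(v,u)` all `p` in-neighbours of `u` have the same
out-neighbourhood `out(v)` of size `p`, and these `2p` vertices with all `p²` arcs between
them form an alternet. -/
theorem two_ended_prime_valency_alternets_complete_bipartite
    {V : Type u} (E : V → V → Prop)
    (h2 : TwoEnded E) (hhat : HighlyArcTransitive E)
    (p : ℕ) (hp : p.Prime) (hout : ∀ v : V, (outSet E v).ncard = p)
    (φ : V → ℤ) (hsurj : Function.Surjective φ)
    (hhom : ∀ u v : V, E u v → φ v = φ u + 1)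
    (m : ℕ) (hm : 2 < m) (hfib : ∀ i : ℤ, (φ ⁻¹' {i}).ncard = m) :
    ∀ v u : V, ∀ hvu : E v u,
      (∀ w : V, E w u → outSet E w = outSet E v) ∧
      (outSet E v).ncard = p ∧ (inSet E u).ncard = p ∧
      (∀ b : (Digr.mk V E).Arc,
        altRel (Digr.mk V E) ⟨(v, u), hvu⟩ b ↔ (E b.1.1 u ∧ E v b.1.2)) := by
  classical
  obtain ⟨v₀, -⟩ := hsurj 0
  have hconn : DConnected E := h2.1
  have hm0 : 0 < m := by omega
  have good := St12.good_all hhat hconn hhom hp hout hm0 hfib v₀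
  have hconst : ∀ u u' : V, (inSet E u).ncard = (inSet E u').ncard := by
    intro u u'
    obtain ⟨g, hg, hgu⟩ := St12.vertex_trans hhat u u'
    rw [← hgu, St12.in_image hg, Set.ncard_image_of_injective _ g.injective]
  have hin : ∀ u : V, (inSet E u).ncard = p :=
    St12.in_card_eq p hp.pos hout φ hhom m hm0 hfib hconst
  intro v u hvu
  have hio : ∀ x : V, E v x → inSet E x = inSet E u := by
    intro x hvx
    ext w'
    constructor
    · intro hw'
      have hg := good v x hvx w' hw'
      show E w' u
      have : u ∈ outSet E w' := by rw [hg]; exact hvu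
      exact this
    · intro hw'
      have hg := good v u hvu w' hw'
      show E w' x
      have : x ∈ outSet E w' := by rw [hg]; exact hvx
      exact this
  have aux : ∀ a b : (Digr.mk V E).Arc,
      (a.1.1 = b.1.1 ∨ a.1.2 = b.1.2) → (E a.1.1 u ∧ E v a.1.2) → (E b.1.1 u ∧ E v b.1.2) := by
    rintro a b hshare ⟨ha1, ha2⟩
    rcases hshare with h | h
    · constructor
      · rw [← h]; exact ha1
      · have hb2 : E a.1.1 b.1.2 := by
          have := b.2
          rw [← h] at this
          exact this
        have hgood := good v u hvu a.1.1 ha1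
        have : b.1.2 ∈ outSet E a.1.1 := hb2
        rw [hgood] at this
        exact this
    · constructor
      · have hb1 : E b.1.1 a.1.2 := by
          have := b.2
          rw [← h] at this
          exact this
        have : b.1.1 ∈ inSet E a.1.2 := hb1
        rw [hio a.1.2 ha2] at this
        exact this
      · rw [← h]; exact ha2
  have iffP : ∀ a b : (Digr.mk V E).Arc, altRel (Digr.mk V E) a b →
      ((E a.1.1 u ∧ E v a.1.2) ↔ (E b.1.1 u ∧ E v b.1.2)) := by
    intro a b h
    induction h with
    | rel x y hxy => exact ⟨aux x y hxy, aux y x (hxy.imp Eq.symm Eq.symm)⟩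
    | refl x => exact Iff.rfl
    | symm x y _ ih => exact ih.symm
    | trans x y z _ _ ih1 ih2 => exact ih1.trans ih2
  refine ⟨fun w hw => good v u hvu w hw, hout v, hin u, fun b => ?_⟩
  constructor
  · intro h
    exact (iffP _ b h).mp ⟨hvu, hvu⟩
  · rintro ⟨h1, h2⟩
    have step1 : altRel (Digr.mk V E) ⟨(v, u), hvu⟩ ⟨(b.1.1, u), h1⟩ :=
      Relation.EqvGen.rel _ _ (Or.inr rfl)
    have step2 : altRel (Digr.mk V E) ⟨(b.1.1, u), h1⟩ b :=
      Relation.EqvGen.rel _ _ (Or.inl rfl)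
    exact Relation.EqvGen.trans _ _ _ step1 step2
end

section
/- Let Γ be a two-ended highly-arc-transitive digraph of prime out-valency p with fibre size m > 2. Then Γ is isomorphic to the r-fold partial line graph Pl^r(Δ_p), where r satisfies p^{r+1} = m, and Δ_p is the digraph on Z × Z_p with all arcs ((i,x),(i+1,y)). -/
variable {V : Type*}

universe u v

namespace HATProof
open Set

variable {V : Type u}

lemma partition_dvd (t : ℕ) :
    ∀ (n : ℕ) (Ω : Set V) (R : V → V → Prop), Ω.Finite → Ω.ncard = n →
    (∀ x ∈ Ω, R x x) → (∀ x y, R x y → R y x) → (∀ x y z, R x y → R y z → R x z) →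
    (∀ x ∈ Ω, {y | y ∈ Ω ∧ R x y}.ncard = t) → t ∣ n := by
  intro n
  induction n using Nat.strong_induction_on with
  | _ n ih =>
    intro Ω R hfin hn hrefl hsymm htrans hcl
    rcases Ω.eq_empty_or_nonempty with h | ⟨x, hx⟩
    · have : n = 0 := by rw [← hn, h, Set.ncard_empty]
      simp [this]
    · set K := {y | y ∈ Ω ∧ R x y} with hK
      have hKsub : K ⊆ Ω := fun y hy => hy.1
      have hKfin : K.Finite := hfin.subset hKsub
      have hxK : x ∈ K := ⟨hx, hrefl x hx⟩
      have htt : K.ncard = t := hcl x hx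
      have ht1 : 1 ≤ t := by
        rw [← htt]
        exact (Set.ncard_pos hKfin).mpr ⟨x, hxK⟩
      have hn1 : 1 ≤ n := by
        rw [← hn]
        exact (Set.ncard_pos hfin).mpr ⟨x, hx⟩
      have hcard' : (Ω \ K).ncard = n - t := by
        rw [Set.ncard_diff hKsub hKfin, hn, htt]
      have hlt : n - t < n := by omega
      have hclass' : ∀ z ∈ Ω \ K, {y | y ∈ Ω \ K ∧ R z y}.ncard = t := by
        intro z hz
        have : {y | y ∈ Ω \ K ∧ R z y} = {y | y ∈ Ω ∧ R z y} := by
          ext y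
          constructor
          · rintro ⟨⟨hy, _⟩, hr⟩; exact ⟨hy, hr⟩
          · rintro ⟨hy, hr⟩
            refine ⟨⟨hy, fun hyK => ?_⟩, hr⟩
            exact hz.2 ⟨hz.1, htrans x y z hyK.2 (hsymm z y hr)⟩
        rw [this]; exact hcl z hz.1
      have hdvd' : t ∣ (n - t) :=
        ih _ hlt (Ω \ K) R (hfin.subset diff_subset) hcard'
          (fun y hy => hrefl y hy.1) hsymm htrans hclass'
      have hts : t ≤ n := by
        rw [← hn, ← htt]
        exact Set.ncard_le_ncard hKsub hfin
      obtain ⟨c, hc⟩ := hdvd'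
      refine ⟨c + 1, ?_⟩
      rw [Nat.mul_add, Nat.mul_one, ← hc]
      omega

lemma blocks_lemma {p : ℕ} (hp : p.Prime) (Ω : Set V) (hfin : Ω.Finite) (hcard : Ω.ncard = p)
    (R : V → V → Prop)
    (hrefl : ∀ x ∈ Ω, R x x) (hsymm : ∀ x y, R x y → R y x)
    (htrans : ∀ x y z, R x y → R y z → R x z)
    (T : Set (Equiv.Perm V))
    (htr : ∀ x ∈ Ω, ∀ y ∈ Ω, ∃ g ∈ T, g x = y)
    (hmaps : ∀ g ∈ T, ∀ x ∈ Ω, g x ∈ Ω)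
    (hR : ∀ g ∈ T, ∀ x ∈ Ω, ∀ y ∈ Ω, (R x y ↔ R (g x) (g y))) :
    (∀ x ∈ Ω, ∀ y ∈ Ω, R x y) ∨ (∀ x ∈ Ω, ∀ y ∈ Ω, R x y → x = y) := by
  have hpos : 0 < p := hp.pos
  have hne : Ω.Nonempty := (Set.ncard_pos hfin).mp (by omega)
  obtain ⟨x₀, hx₀⟩ := hne
  set t := {y | y ∈ Ω ∧ R x₀ y}.ncard with htdef
  have himg : ∀ g ∈ T, g '' Ω = Ω := by
    intro g hg
    apply Set.eq_of_subset_of_ncard_le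
    · rintro _ ⟨x, hxΩ, rfl⟩; exact hmaps g hg x hxΩ
    · rw [Set.ncard_image_of_injective Ω g.injective]
    · exact hfin
  have hconst : ∀ x ∈ Ω, {y | y ∈ Ω ∧ R x y}.ncard = t := by
    intro x hx
    obtain ⟨g, hg, hgx⟩ := htr x₀ hx₀ x hx
    have : {y | y ∈ Ω ∧ R x y} = g '' {y | y ∈ Ω ∧ R x₀ y} := by
      ext w
      constructor
      · rintro ⟨hwΩ, hr⟩
        have : w ∈ g '' Ω := by rw [himg g hg]; exact hwΩ
        obtain ⟨z, hzΩ, rfl⟩ := this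
        refine ⟨z, ⟨hzΩ, ?_⟩, rfl⟩
        rw [hR g hg x₀ hx₀ z hzΩ, hgx]
        exact hr
      · rintro ⟨z, ⟨hzΩ, hr⟩, rfl⟩
        refine ⟨hmaps g hg z hzΩ, ?_⟩
        rw [← hgx]
        exact (hR g hg x₀ hx₀ z hzΩ).mp hr
    rw [this, Set.ncard_image_of_injective _ g.injective]
  have hdvd : t ∣ p := partition_dvd t p Ω R hfin hcard hrefl hsymm htrans hconst
  rcases (Nat.Prime.eq_one_or_self_of_dvd hp t hdvd) with h1 | hP
  · right
    intro x hx y hy hr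
    have hcl := hconst x hx
    rw [h1] at hcl
    obtain ⟨a, ha⟩ := Set.ncard_eq_one.mp hcl
    have hxa : x ∈ ({a} : Set V) := ha ▸ (⟨hx, hrefl x hx⟩ : x ∈ {y | y ∈ Ω ∧ R x y})
    have hya : y ∈ ({a} : Set V) := ha ▸ (⟨hy, hr⟩ : y ∈ {y | y ∈ Ω ∧ R x y})
    rw [Set.mem_singleton_iff] at hxa hya
    rw [hxa, hya]
  · left
    intro x hx y hy
    have hcl := hconst x hx
    rw [hP] at hcl
    have heq : {y | y ∈ Ω ∧ R x y} = Ω := by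
      apply Set.eq_of_subset_of_ncard_le (fun z hz => hz.1) _ hfin
      rw [hcl, hcard]
    have hyy : y ∈ {y | y ∈ Ω ∧ R x y} := by rw [heq]; exact hy
    exact hyy.2

end HATProof
namespace HATProof

lemma mem_autGroup {E : V → V → Prop} {g : Equiv.Perm V} :
    g ∈ autGroup E ↔ ∀ u v, E u v ↔ E (g u) (g v) := Iff.rfl

/-- The working hypotheses. -/
structure Gd (E : V → V → Prop) (φ : V → ℤ) (p m : ℕ) : Prop where
  conn : DConnected E
  hat : HighlyArcTransitive E
  hom : ∀ u v, E u v → φ v = φ u + 1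
  hout : ∀ v, (outSet E v).ncard = p
  hfib : ∀ i : ℤ, (φ ⁻¹' {i}).ncard = m
  hp : p.Prime
  hm : 0 < m
  half : ∀ i : ℤ, ∀ u v : V, i < φ u → i < φ v → ReachAvoid E (φ ⁻¹' {i}) u v

namespace Gd

variable {E : V → V → Prop} {φ : V → ℤ} {p m : ℕ} (hS : Gd E φ p m)
include hS

lemma fibFin (i : ℤ) : (φ ⁻¹' {i}).Finite := by
  by_contra h
  have h0 := Set.Infinite.ncard h
  have h1 := hS.hfib i
  have h2 := hS.hm
  omega

lemma fib_nonempty (i : ℤ) : ∃ v : V, φ v = i := by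
  have := (Set.ncard_pos (hS.fibFin i)).mp (by rw [hS.hfib i]; exact hS.hm)
  obtain ⟨v, hv⟩ := this
  exact ⟨v, hv⟩

lemma out_sub (v : V) : outSet E v ⊆ φ ⁻¹' {φ v + 1} :=
  fun u hu => hS.hom v u hu

lemma outFin (v : V) : (outSet E v).Finite :=
  (hS.fibFin (φ v + 1)).subset (hS.out_sub v)

lemma out_nonempty (v : V) : (outSet E v).Nonempty :=
  (Set.ncard_pos (hS.outFin v)).mp (by rw [hS.hout v]; exact hS.hp.pos)

lemma in_sub (v : V) : inSet E v ⊆ φ ⁻¹' {φ v - 1} := by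
  intro u hu
  have := hS.hom u v hu
  simp only [Set.mem_preimage, Set.mem_singleton_iff]
  omega

lemma inFin (v : V) : (inSet E v).Finite :=
  (hS.fibFin (φ v - 1)).subset (hS.in_sub v)

lemma aut_image_out {g : Equiv.Perm V} (hg : g ∈ autGroup E) (v : V) :
    g '' outSet E v = outSet E (g v) := by
  ext w
  constructor
  · rintro ⟨x, hx, rfl⟩
    exact (mem_autGroup.mp hg v x).mp hx
  · intro hw
    refine ⟨g.symm w, ?_, g.apply_symm_apply w⟩
    have := (mem_autGroup.mp hg v (g.symm w)).mpr
    rw [g.apply_symm_apply] at this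
    exact this hw

lemma aut_image_in {g : Equiv.Perm V} (hg : g ∈ autGroup E) (v : V) :
    g '' inSet E v = inSet E (g v) := by
  ext w
  constructor
  · rintro ⟨x, hx, rfl⟩
    exact (mem_autGroup.mp hg x v).mp hx
  · intro hw
    refine ⟨g.symm w, ?_, g.apply_symm_apply w⟩
    have := (mem_autGroup.mp hg (g.symm w) v).mpr
    rw [g.apply_symm_apply] at this
    exact this hw

lemma vertex_trans (u v : V) : ∃ g ∈ autGroup E, g u = v := by
  obtain ⟨a, ha, h⟩ := hS.hat 0 (fun _ => u) (fun _ => v)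
    (fun i => i.elim0) (fun i => i.elim0)
  exact ⟨a, ha, h 0⟩

lemma arc_trans {u v x y : V} (huv : E u v) (hxy : E x y) :
    ∃ g ∈ autGroup E, g u = x ∧ g v = y := by
  have hf : IsKArc E 1 ![u, v] := by
    intro i
    fin_cases i
    simpa using huv
  have hg : IsKArc E 1 ![x, y] := by
    intro i
    fin_cases i
    simpa using hxy
  obtain ⟨a, ha, h⟩ := hS.hat 1 ![u, v] ![x, y] hf hg
  have h0 := h 0
  have h1 := h 1
  simp only [Matrix.cons_val_zero, Matrix.cons_val_one, Matrix.head_cons] at h0 h1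
  exact ⟨a, ha, h0, h1⟩

lemma aut_shift {g : Equiv.Perm V} (hg : g ∈ autGroup E) (x y : V) :
    φ (g x) - φ x = φ (g y) - φ y := by
  have hconn := hS.conn x y
  induction hconn with
  | refl => rfl
  | tail hxb hbc ih =>
    rename_i b c
    rcases hbc with hbc | hcb
    · have h1 := hS.hom b c hbc
      have h2 := hS.hom (g b) (g c) ((mem_autGroup.mp hg b c).mp hbc)
      omega
    · have h1 := hS.hom c b hcb
      have h2 := hS.hom (g c) (g b) ((mem_autGroup.mp hg c b).mp hcb)
      omega

lemma fix_shift {g : Equiv.Perm V} (hg : g ∈ autGroup E) {v : V} (hv : g v = v) (x : V) :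
    φ (g x) = φ x := by
  have := hS.aut_shift hg x v
  rw [hv] at this
  omega

lemma ncard_in_const (u v : V) : (inSet E u).ncard = (inSet E v).ncard := by
  obtain ⟨g, hg, rfl⟩ := hS.vertex_trans u v
  rw [← hS.aut_image_in hg u, Set.ncard_image_of_injective _ g.injective]

lemma hin (v : V) : (inSet E v).ncard = p := by
  classical
  obtain ⟨v₀, hv₀⟩ := hS.fib_nonempty 0
  suffices h : (inSet E v₀).ncard = p by
    rw [hS.ncard_in_const v v₀, h]
  have hcc : ∀ w : V, (inSet E w).ncard = (inSet E v₀).ncard :=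
    fun w => hS.ncard_in_const w v₀
  have hA : (φ ⁻¹' {(-1 : ℤ)}).Finite := hS.fibFin (-1)
  have hB : (φ ⁻¹' {(0 : ℤ)}).Finite := hS.fibFin 0
  have hEdsub : {e : V × V | E e.1 e.2 ∧ φ e.2 = 0}
      ⊆ (φ ⁻¹' {(-1 : ℤ)}) ×ˢ (φ ⁻¹' {(0 : ℤ)}) := by
    rintro ⟨a, b⟩ ⟨hE, hb⟩
    have h1 := hS.hom a b hE
    simp only [Set.mem_setOf_eq] at hb
    constructor
    · simp only [Set.mem_preimage, Set.mem_singleton_iff]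
      omega
    · simpa using hb
  have hEdFin : {e : V × V | E e.1 e.2 ∧ φ e.2 = 0}.Finite := (hA.prod hB).subset hEdsub
  have count1 : hEdFin.toFinset.card = hA.toFinset.card * p := by
    have hmem : ∀ e ∈ hEdFin.toFinset, e.1 ∈ hA.toFinset := by
      intro e he
      rw [Set.Finite.mem_toFinset] at he ⊢
      exact (hEdsub he).1
    rw [Finset.card_eq_sum_card_fiberwise hmem]
    have hfib1 : ∀ u ∈ hA.toFinset, (hEdFin.toFinset.filter (fun e => e.1 = u)).card = p := by
      intro u hu
      rw [Set.Finite.mem_toFinset] at hu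
      have hu1 : φ u = -1 := hu
      have himg : hEdFin.toFinset.filter (fun e => e.1 = u)
          = (hS.outFin u).toFinset.image (fun w => (u, w)) := by
        ext e
        simp only [Finset.mem_filter, Set.Finite.mem_toFinset, Set.mem_setOf_eq,
          Finset.mem_image]
        constructor
        · rintro ⟨⟨hE, hb⟩, h1⟩
          refine ⟨e.2, ?_, ?_⟩
          · rw [h1] at hE; exact hE
          · rw [← h1]
        · rintro ⟨w, hw, rfl⟩
          have h3 := hS.hom u w hw
          refine ⟨⟨hw, ?_⟩, rfl⟩
          show φ w = 0
          omega
      rw [himg, Finset.card_image_of_injective _ (by intro a b h; simpa using h)]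
      rw [← Set.ncard_eq_toFinset_card (outSet E u) (hS.outFin u)]
      exact hS.hout u
    rw [Finset.sum_congr rfl hfib1, Finset.sum_const, smul_eq_mul]
  have count2 : hEdFin.toFinset.card = hB.toFinset.card * (inSet E v₀).ncard := by
    have hmem : ∀ e ∈ hEdFin.toFinset, e.2 ∈ hB.toFinset := by
      intro e he
      rw [Set.Finite.mem_toFinset] at he ⊢
      exact (hEdsub he).2
    rw [Finset.card_eq_sum_card_fiberwise hmem]
    have hfib2 : ∀ w ∈ hB.toFinset,
        (hEdFin.toFinset.filter (fun e => e.2 = w)).card = (inSet E v₀).ncard := by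
      intro w hw
      rw [Set.Finite.mem_toFinset] at hw
      have hw1 : φ w = 0 := hw
      have himg : hEdFin.toFinset.filter (fun e => e.2 = w)
          = (hS.inFin w).toFinset.image (fun u => (u, w)) := by
        ext e
        simp only [Finset.mem_filter, Set.Finite.mem_toFinset, Set.mem_setOf_eq,
          Finset.mem_image]
        constructor
        · rintro ⟨⟨hE, hb⟩, h2⟩
          refine ⟨e.1, ?_, ?_⟩
          · rw [h2] at hE; exact hE
          · rw [← h2]
        · rintro ⟨x, hx, rfl⟩
          refine ⟨⟨hx, ?_⟩, rfl⟩
          show φ w = 0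
          omega
      rw [himg, Finset.card_image_of_injective _ (by intro a b h; simpa using h)]
      rw [← Set.ncard_eq_toFinset_card (inSet E w) (hS.inFin w)]
      exact hcc w
    rw [Finset.sum_congr rfl hfib2, Finset.sum_const, smul_eq_mul]
  have hAcard : hA.toFinset.card = m := by
    rw [← Set.ncard_eq_toFinset_card _ hA]
    exact hS.hfib (-1)
  have hBcard : hB.toFinset.card = m := by
    rw [← Set.ncard_eq_toFinset_card _ hB]
    exact hS.hfib 0
  rw [hAcard] at count1
  rw [hBcard] at count2
  have hmm : m * p = m * (inSet E v₀).ncard := by omega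
  exact (Nat.eq_of_mul_eq_mul_left hS.hm hmm).symm

lemma in_nonempty (v : V) : (inSet E v).Nonempty :=
  (Set.ncard_pos (hS.inFin v)).mp (by rw [hS.hin v]; exact hS.hp.pos)

lemma stab_out_trans {z x y : V} (hx : E z x) (hy : E z y) :
    ∃ g ∈ autGroup E, g z = z ∧ g x = y := hS.arc_trans hx hy

lemma stab_in_trans {z x y : V} (hx : E x z) (hy : E y z) :
    ∃ g ∈ autGroup E, g z = z ∧ g x = y := by
  obtain ⟨g, hg, h1, h2⟩ := hS.arc_trans hx hy
  exact ⟨g, hg, h2, h1⟩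

end Gd
end HATProof
namespace HATProof

/-- All out-neighbours of `z` have a common out-neighbourhood. -/
def Degen (E : V → V → Prop) (z : V) : Prop :=
  ∀ x ∈ outSet E z, ∀ y ∈ outSet E z, outSet E x = outSet E y

namespace Gd

variable {E : V → V → Prop} {φ : V → ℤ} {p m : ℕ} (hS : Gd E φ p m)
include hS

lemma degen_transport {z z' : V} (h : Degen E z) : Degen E z' := by
  obtain ⟨g, hg, hgz⟩ := hS.vertex_trans z z'
  intro x hx y hy
  rw [← hgz, ← hS.aut_image_out hg z] at hx hy
  obtain ⟨x₀, hx₀, rfl⟩ := hx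
  obtain ⟨y₀, hy₀, rfl⟩ := hy
  rw [← hS.aut_image_out hg x₀, ← hS.aut_image_out hg y₀, h x₀ hx₀ y₀ hy₀]

lemma degen_m_le_p {z : V} (h : Degen E z) : m ≤ p := by
  have hdeg : ∀ w : V, Degen E w := fun w => hS.degen_transport h
  -- a forward ray
  let w : ℕ → V := fun k => Nat.rec z (fun _ x => (hS.out_nonempty x).some) k
  have hwE : ∀ k, E (w k) (w (k + 1)) := fun k => (hS.out_nonempty (w k)).some_mem
  have hwφ : ∀ k, φ (w k) = φ z + k := by
    intro k
    induction k with
    | zero => show φ z = φ z + (0:ℕ); simp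
    | succ k ih =>
      have := hS.hom _ _ (hwE k)
      push_cast
      omega
  have hCfib : ∀ k, ∀ x ∈ outSet E (w k), φ x = φ z + k + 1 := by
    intro k x hx
    have := hS.hom _ _ hx
    rw [hwφ k] at this
    omega
  -- the out-neighbourhood along the ray is everything
  have hI : ∀ k, ∀ x ∈ outSet E (w k), outSet E x = outSet E (w (k + 1)) :=
    fun k x hx => hdeg (w k) x hx (w (k + 1)) (hwE k)
  have hII : ∀ k, ∀ x ∈ outSet E (w (k + 1)), inSet E x = outSet E (w k) := by
    intro k x hx
    symm
    apply Set.eq_of_subset_of_ncard_le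
    · intro u hu
      have : outSet E u = outSet E (w (k + 1)) := hI k u hu
      show E u x
      have : x ∈ outSet E u := by rw [this]; exact hx
      exact this
    · rw [hS.hin x, hS.hout (w k)]
    · exact hS.inFin x
  have hreach : ∀ y, ReachAvoid E (φ ⁻¹' {φ z}) (w 1) y → ∃ k, y ∈ outSet E (w k) := by
    intro y hy
    induction hy with
    | refl => exact ⟨0, (hS.out_nonempty z).some_mem⟩
    | tail hab hbc ih =>
      rename_i b c
      obtain ⟨k, hk⟩ := ih
      rcases hbc with ⟨hEbc | hEcb, hbS, hcS⟩
      · refine ⟨k + 1, ?_⟩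
        rw [← hI k b hk]
        exact hEbc
      · cases k with
        | zero =>
          exfalso
          apply hcS
          have h1 : φ b = φ z + 1 := by simpa using hCfib 0 b hk
          have h2 := hS.hom c b hEcb
          simp only [Set.mem_preimage, Set.mem_singleton_iff]
          omega
        | succ k' =>
          refine ⟨k', ?_⟩
          rw [← hII k' b hk]
          exact hEcb
  have hsub : φ ⁻¹' {φ z + 1} ⊆ outSet E (w 0) := by
    intro x hx
    have hx1 : φ x = φ z + 1 := hx
    have hw1 : φ z < φ (w 1) := by rw [hwφ 1]; omega
    obtain ⟨k, hk⟩ := hreach x (hS.half (φ z) (w 1) x hw1 (by omega))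
    have := hCfib k x hk
    have hk0 : k = 0 := by omega
    rwa [hk0] at hk
  calc m = (φ ⁻¹' {φ z + 1}).ncard := (hS.hfib _).symm
    _ ≤ (outSet E (w 0)).ncard := Set.ncard_le_ncard hsub (hS.outFin _)
    _ = p := hS.hout _

lemma no_twins (hmp : p < m) {z x y : V} (hx : E z x) (hy : E z y)
    (hxy : outSet E x = outSet E y) : x = y := by
  have hblocks := blocks_lemma hS.hp (outSet E z) (hS.outFin z) (hS.hout z)
    (fun a b => outSet E a = outSet E b)
    (fun a _ => rfl) (fun a b h => h.symm) (fun a b c h1 h2 => h1.trans h2)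
    {g : Equiv.Perm V | g ∈ autGroup E ∧ g z = z}
    (fun a ha b hb => by
      obtain ⟨g, hg, h1, h2⟩ := hS.stab_out_trans ha hb
      exact ⟨g, ⟨hg, h1⟩, h2⟩)
    (fun g hg a ha => by
      rw [← hg.2, ← hS.aut_image_out hg.1 z]
      exact ⟨a, ha, rfl⟩)
    (fun g hg a _ b _ => by
      constructor
      · intro h
        show outSet E (g a) = outSet E (g b)
        rw [← hS.aut_image_out hg.1 a, ← hS.aut_image_out hg.1 b]
        exact congrArg _ h
      · intro h
        have h' : outSet E (g a) = outSet E (g b) := h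
        show outSet E a = outSet E b
        rw [← hS.aut_image_out hg.1 a, ← hS.aut_image_out hg.1 b] at h'
        exact Set.image_injective.mpr g.injective h')
  rcases hblocks with hfull | htriv
  · exfalso
    have : Degen E z := fun a ha b hb => hfull a ha b hb
    have := hS.degen_m_le_p this
    omega
  · exact htriv x hx y hy hxy

end Gd
end HATProof
namespace HATProof

lemma image_fix {g : Equiv.Perm V} {S : Set V} (h : ∀ x ∈ S, g x = x) : g '' S = S := by
  have := Set.image_congr (f := fun x => g x) (g := id) (fun a ha => h a ha)
  rw [this, Set.image_id]

/-- Automorphisms fixing the fibre `j` pointwise. -/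
def Nfix (E : V → V → Prop) (φ : V → ℤ) (j : ℤ) : Set (Equiv.Perm V) :=
  {g | g ∈ autGroup E ∧ ∀ w, φ w = j → g w = w}

lemma nfix_one {E : V → V → Prop} {φ : V → ℤ} {j : ℤ} : (1 : Equiv.Perm V) ∈ Nfix E φ j :=
  ⟨one_mem _, fun _ _ => rfl⟩

lemma nfix_inv {E : V → V → Prop} {φ : V → ℤ} {j : ℤ} {n : Equiv.Perm V}
    (hn : n ∈ Nfix E φ j) : n⁻¹ ∈ Nfix E φ j := by
  refine ⟨inv_mem hn.1, fun w hw => ?_⟩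
  have := hn.2 w hw
  conv_lhs => rw [← this]
  simp

lemma nfix_mul {E : V → V → Prop} {φ : V → ℤ} {j : ℤ} {n₁ n₂ : Equiv.Perm V}
    (h1 : n₁ ∈ Nfix E φ j) (h2 : n₂ ∈ Nfix E φ j) : n₁ * n₂ ∈ Nfix E φ j := by
  refine ⟨mul_mem h1.1 h2.1, fun w hw => ?_⟩
  show n₁ (n₂ w) = w
  rw [h2.2 w hw, h1.2 w hw]

namespace Gd

variable {E : V → V → Prop} {φ : V → ℤ} {p m : ℕ} (hS : Gd E φ p m)
include hS

lemma nfix_out {j : ℤ} {n : Equiv.Perm V} (hn : n ∈ Nfix E φ j) {a : V} (ha : φ a = j - 1) :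
    outSet E (n a) = outSet E a := by
  rw [← hS.aut_image_out hn.1 a]
  apply image_fix
  intro x hx
  have := hS.hom a x hx
  exact hn.2 x (by omega)

lemma nfix_in {j : ℤ} {n : Equiv.Perm V} (hn : n ∈ Nfix E φ j) {a : V} (ha : φ a = j + 1) :
    inSet E (n a) = inSet E a := by
  rw [← hS.aut_image_in hn.1 a]
  apply image_fix
  intro x hx
  have := hS.hom x a hx
  exact hn.2 x (by omega)

/-- Conjugation preserves `Nfix` by stabilizing elements. -/
lemma nfix_conj {j : ℤ} {v : V} (hv : φ v = j) {g : Equiv.Perm V}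
    (hg : g ∈ autGroup E) (hgv : g v = v) {n : Equiv.Perm V} (hn : n ∈ Nfix E φ j) :
    g * n * g⁻¹ ∈ Nfix E φ j := by
  refine ⟨mul_mem (mul_mem hg hn.1) (inv_mem hg), fun w hw => ?_⟩
  show g (n (g⁻¹ w)) = w
  have hginv : g⁻¹ v = v := by
    conv_lhs => rw [← hgv]
    simp
  have hφ : φ (g⁻¹ w) = j := by
    rw [hS.fix_shift (inv_mem hg) hginv w]
    exact hw
  rw [hn.2 _ hφ]
  simp

/-- The orbit relation of `Nfix j`, as used for the block dichotomies. -/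
lemma nfix_blocks {j : ℤ} {v : V} (hv : φ v = j) (Ω : Set V) (hfin : Ω.Finite)
    (hcard : Ω.ncard = p)
    (htr : ∀ a ∈ Ω, ∀ b ∈ Ω, ∃ g ∈ autGroup E, g v = v ∧ g a = b)
    (hmaps : ∀ g : Equiv.Perm V, g ∈ autGroup E → g v = v → ∀ a ∈ Ω, g a ∈ Ω) :
    (∀ a ∈ Ω, ∀ b ∈ Ω, ∃ n, n ∈ Nfix E φ j ∧ n a = b) ∨
    (∀ a ∈ Ω, ∀ b ∈ Ω, (∃ n, n ∈ Nfix E φ j ∧ n a = b) → a = b) := by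
  apply blocks_lemma hS.hp Ω hfin hcard
    (fun a b => ∃ n, n ∈ Nfix E φ j ∧ n a = b)
    (fun a _ => ⟨1, nfix_one, rfl⟩)
    (fun a b ⟨n, hn, hab⟩ => ⟨n⁻¹, nfix_inv hn, by rw [← hab]; simp⟩)
    (fun a b c ⟨n1, h1, e1⟩ ⟨n2, h2, e2⟩ =>
      ⟨n2 * n1, nfix_mul h2 h1, by show n2 (n1 a) = c; rw [e1, e2]⟩)
    {g : Equiv.Perm V | g ∈ autGroup E ∧ g v = v}
    (fun a ha b hb => by
      obtain ⟨g, hg, h1, h2⟩ := htr a ha b hb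
      exact ⟨g, ⟨hg, h1⟩, h2⟩)
    (fun g hg a ha => hmaps g hg.1 hg.2 a ha)
  intro g hg a _ b _
  constructor
  · rintro ⟨n, hn, hab⟩
    refine ⟨g * n * g⁻¹, hS.nfix_conj hv hg.1 hg.2 hn, ?_⟩
    show g (n (g⁻¹ (g a))) = g b
    rw [show (g⁻¹ (g a)) = a by simp, hab]
  · rintro ⟨n, hn, hab⟩
    have hginv : g⁻¹ v = v := by conv_lhs => rw [← hg.2]; simp
    refine ⟨g⁻¹ * n * g⁻¹⁻¹, hS.nfix_conj hv (inv_mem hg.1) hginv hn, ?_⟩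
    show g⁻¹ (n (g⁻¹⁻¹ a)) = b
    simp only [inv_inv]
    rw [hab]
    simp

/-- In "case B" configurations, fibre kernels also fix the previous fibre. -/
lemma cb_down (hcb : ∀ v x y : V, E x v → E y v → outSet E x = outSet E y → x = y)
    {j : ℤ} {g : Equiv.Perm V} (hg : g ∈ Nfix E φ j) :
    ∀ w, φ w = j - 1 → g w = w := by
  intro w hw
  obtain ⟨v, hv⟩ := hS.out_nonempty w
  have hφv : φ v = j := by have := hS.hom w v hv; omega
  have hblocks := hS.nfix_blocks hφv (inSet E v) (hS.inFin v) (hS.hin v)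
    (fun a ha b hb => hS.stab_in_trans ha hb)
    (fun g' hg' hgv a ha => by
      have : g' a ∈ inSet E (g' v) := (hS.aut_image_in hg' v) ▸ ⟨a, ha, rfl⟩
      rwa [hgv] at this)
  rcases hblocks with hfull | htriv
  · exfalso
    have h2 : 1 < (inSet E v).ncard := by rw [hS.hin v]; exact hS.hp.one_lt
    obtain ⟨a, b, ha, hb, hab⟩ := (Set.one_lt_ncard_iff (hS.inFin v)).mp h2
    obtain ⟨n, hn, hnab⟩ := hfull a ha b hb
    have hφa : φ a = j - 1 := by
      have := hS.hom a v ha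
      omega
    have hout : outSet E b = outSet E a := by
      rw [← hnab]
      exact hS.nfix_out hn hφa
    exact hab (hcb v a b ha hb hout.symm)
  · have hwv : w ∈ inSet E v := hv
    have hgwv : g w ∈ inSet E v := by
      have := (mem_autGroup.mp hg.1 w v).mp hv
      rwa [hg.2 v hφv] at this
    exact (htriv w hwv (g w) hgwv ⟨g, hg, rfl⟩).symm

/-- In "case B" configurations, fibre kernels also fix the next fibre. -/
lemma cb_up (hcb : ∀ v x y : V, E x v → E y v → outSet E x = outSet E y → x = y)
    {j : ℤ} {g : Equiv.Perm V} (hg : g ∈ Nfix E φ j) :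
    ∀ w, φ w = j + 1 → g w = w := by
  intro w hw
  obtain ⟨v, hv⟩ := hS.in_nonempty w
  have hφv : φ v = j := by have := hS.hom v w hv; omega
  have hblocks := hS.nfix_blocks hφv (outSet E v) (hS.outFin v) (hS.hout v)
    (fun a ha b hb => hS.stab_out_trans ha hb)
    (fun g' hg' hgv a ha => by
      have : g' a ∈ outSet E (g' v) := (hS.aut_image_out hg' v) ▸ ⟨a, ha, rfl⟩
      rwa [hgv] at this)
  rcases hblocks with hfull | htriv
  · exfalso
    -- all members of `outSet v` share their in-neighbourhood
    have hIall : ∀ x ∈ outSet E v, ∀ y ∈ outSet E v, inSet E x = inSet E y := by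
      intro x hx y hy
      obtain ⟨n, hn, hnxy⟩ := hfull x hx y hy
      rw [← hnxy]
      exact (hS.nfix_in hn (by have := hS.hom v x hx; omega)).symm
    -- hence each in-neighbour of `w` has the same out-neighbourhood as `v`
    have houtall : ∀ u ∈ inSet E w, outSet E u = outSet E v := by
      intro u hu
      symm
      apply Set.eq_of_subset_of_ncard_le
      · intro y hy
        have : inSet E y = inSet E w := hIall y hy w hv
        show E u y
        have : u ∈ inSet E y := by rw [this]; exact hu
        exact this
      · rw [hS.hout, hS.hout]
      · exact hS.outFin u
    have h2 : 1 < (inSet E w).ncard := by rw [hS.hin w]; exact hS.hp.one_lt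
    obtain ⟨a, b, ha, hb, hab⟩ := (Set.one_lt_ncard_iff (hS.inFin w)).mp h2
    have := hcb w a b ha hb ((houtall a ha).trans (houtall b hb).symm)
    exact hab this
  · have hwv : w ∈ outSet E v := hv
    have hgwv : g w ∈ outSet E v := by
      have := (mem_autGroup.mp hg.1 v w).mp hv
      rwa [hg.2 v hφv] at this
    exact (htriv w hwv (g w) hgwv ⟨g, hg, rfl⟩).symm

lemma cb_nfix (hcb : ∀ v x y : V, E x v → E y v → outSet E x = outSet E y → x = y)
    {j : ℤ} {g : Equiv.Perm V} (hg : g ∈ Nfix E φ j) : g = 1 := by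
  have hup : ∀ d : ℕ, g ∈ Nfix E φ (j + d) ∧ g ∈ Nfix E φ (j - d) := by
    intro d
    induction d with
    | zero => constructor <;> simpa using hg
    | succ d ih =>
      constructor
      · refine ⟨hg.1, fun w hw => ?_⟩
        exact hS.cb_up hcb ih.1 w (by push_cast at hw ⊢; omega)
      · refine ⟨hg.1, fun w hw => ?_⟩
        exact hS.cb_down hcb ih.2 w (by push_cast at hw ⊢; omega)
  apply Equiv.ext
  intro x
  show g x = x
  rcases le_or_gt j (φ x) with h | h
  · have := (hup (φ x - j).toNat).1.2 x (by omega)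
    exact this
  · have := (hup (j - φ x).toNat).2.2 x (by omega)
    exact this

lemma cb_false (hcb : ∀ v x y : V, E x v → E y v → outSet E x = outSet E y → x = y) :
    False := by
  classical
  obtain ⟨u₀, _⟩ := hS.fib_nonempty 0
  have hpair : ∀ v : V, ∃ a b : V, a ∈ outSet E v ∧ b ∈ outSet E v ∧ a ≠ b := by
    intro v
    have h2 : 1 < (outSet E v).ncard := by rw [hS.hout]; exact hS.hp.one_lt
    exact (Set.one_lt_ncard_iff (hS.outFin v)).mp h2
  choose n₀ n₁ h₀ h₁ hne using hpair
  set K := m ^ m with hKdef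
  let pa : (ℕ → Fin 2) → ℕ → V := fun σ k =>
    Nat.rec u₀ (fun l x => if σ l = 0 then n₀ x else n₁ x) k
  have hpaE : ∀ σ k, E (pa σ k) (pa σ (k + 1)) := by
    intro σ k
    show E (pa σ k) (if σ k = 0 then n₀ (pa σ k) else n₁ (pa σ k))
    split
    · exact h₀ (pa σ k)
    · exact h₁ (pa σ k)
  have hagree : ∀ σ τ : ℕ → Fin 2, ∀ k, (∀ l, l < k → σ l = τ l) → pa σ k = pa τ k := by
    intro σ τ k
    induction k with
    | zero => intro _; rfl
    | succ k ih =>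
      intro hl
      have hk := ih (fun l hlk => hl l (Nat.lt_succ_of_lt hlk))
      show (if σ k = 0 then n₀ (pa σ k) else n₁ (pa σ k))
        = (if τ k = 0 then n₀ (pa τ k) else n₁ (pa τ k))
      rw [hk, hl k (Nat.lt_succ_self k)]
  let ext : (Fin K → Fin 2) → ℕ → Fin 2 := fun σ l => if h : l < K then σ ⟨l, h⟩ else 0
  let Θ : (Fin K → Fin 2) → (Fin (K + 1) → V) := fun σ i => pa (ext σ) i.val
  have hΘarc : ∀ σ, IsKArc E K (Θ σ) := by
    intro σ i
    show E (pa (ext σ) i.castSucc.val) (pa (ext σ) i.succ.val)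
    exact hpaE _ _
  have hΘ0 : ∀ σ, Θ σ 0 = u₀ := fun σ => rfl
  have hΘinj : Function.Injective Θ := by
    intro σ τ hστ
    have hall : ∀ l, ∀ (h : l < K), σ ⟨l, h⟩ = τ ⟨l, h⟩ := by
      intro l
      induction l using Nat.strong_induction_on with
      | _ l ih =>
        intro hl
        by_contra hne2
        have hag : pa (ext σ) l = pa (ext τ) l := by
          apply hagree
          intro l' hl'
          show ext σ l' = ext τ l'
          have hl'K : l' < K := lt_trans hl' hl
          show (if h : l' < K then σ ⟨l', h⟩ else 0) = (if h : l' < K then τ ⟨l', h⟩ else 0)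
          rw [dif_pos hl'K, dif_pos hl'K]
          exact ih l' hl' hl'K
        have hextne : ext σ l ≠ ext τ l := by
          show (if h : l < K then σ ⟨l, h⟩ else 0) ≠ (if h : l < K then τ ⟨l, h⟩ else 0)
          rw [dif_pos hl, dif_pos hl]
          exact hne2
        have hd : pa (ext σ) (l + 1) ≠ pa (ext τ) (l + 1) := by
          show (if ext σ l = 0 then n₀ (pa (ext σ) l) else n₁ (pa (ext σ) l))
            ≠ (if ext τ l = 0 then n₀ (pa (ext τ) l) else n₁ (pa (ext τ) l))
          rw [hag]
          rcases Fin.exists_fin_two.mp ⟨ext σ l, rfl⟩ with h1 | h1 <;>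
          rcases Fin.exists_fin_two.mp ⟨ext τ l, rfl⟩ with h2 | h2 <;>
            first
              | (exfalso; exact hextne (h1.trans h2.symm))
              | (rw [h1, h2]; simp; exact hne (pa (ext τ) l))
              | (rw [h1, h2]; simp; exact (hne (pa (ext τ) l)).symm)
        apply hd
        exact congrFun hστ ⟨l + 1, Nat.succ_lt_succ hl⟩
    funext i
    have := hall i.val i.isLt
    simpa using this
  have hauto : ∀ σ : Fin K → Fin 2, ∃ a : Equiv.Perm V,
      a ∈ autGroup E ∧ ∀ i, a (Θ (fun _ => 0) i) = Θ σ i := by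
    intro σ
    obtain ⟨a, ha, h⟩ := hS.hat K (Θ (fun _ => 0)) (Θ σ) (hΘarc (fun _ => 0)) (hΘarc σ)
    exact ⟨a, ha, h⟩
  choose A hA hAe using hauto
  have hAfix : ∀ σ, A σ u₀ = u₀ := by
    intro σ
    have h := hAe σ 0
    rw [hΘ0 σ] at h
    rw [hΘ0 (fun _ => 0)] at h
    exact h
  have hfin1 := hS.fibFin 1
  haveI := hfin1.fintype
  have hmemres : ∀ σ (x : ↥(φ ⁻¹' {(1:ℤ)})), A σ (x : V) ∈ φ ⁻¹' {(1:ℤ)} := by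
    intro σ x
    have h1 := hS.fix_shift (hA σ) (hAfix σ) (x : V)
    have hx : φ (x : V) = 1 := x.2
    simp only [Set.mem_preimage, Set.mem_singleton_iff]
    rw [h1, hx]
  have hρinj : Function.Injective
      (fun (σ : Fin K → Fin 2) (x : ↥(φ ⁻¹' {(1:ℤ)})) => (⟨A σ x, hmemres σ x⟩ : ↥(φ ⁻¹' {(1:ℤ)}))) := by
    intro σ τ h
    have hfix : (A τ)⁻¹ * A σ ∈ Nfix E φ 1 := by
      refine ⟨mul_mem (inv_mem (hA τ)) (hA σ), fun w hw => ?_⟩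
      have h1 : A σ w = A τ w := by
        have h2 := congrFun h ⟨w, hw⟩
        exact congrArg Subtype.val h2
      show (A τ)⁻¹ (A σ w) = w
      rw [h1]
      simp
    have hone := hS.cb_nfix hcb hfix
    have hAeq : A σ = A τ := (inv_mul_eq_one.mp hone).symm
    apply hΘinj
    funext i
    rw [← hAe σ i, ← hAe τ i, hAeq]
  have hcard1 : Fintype.card ↥(φ ⁻¹' {(1:ℤ)}) = m := by
    have h := hS.hfib 1
    rwa [Set.ncard_eq_toFinset_card', Set.toFinset_card] at h
  have hle := Fintype.card_le_of_injective _ hρinj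
  rw [Fintype.card_fun, Fintype.card_fun, hcard1, Fintype.card_fin, Fintype.card_fin] at hle
  have hlt := Nat.lt_two_pow_self (n := m ^ m)
  rw [hKdef] at hle
  omega

/-- Case A holds: vertices sharing an out-neighbour have equal out-neighbourhoods. -/
lemma caseA : ∀ (v x y : V), E x v → E y v → outSet E x = outSet E y := by
  by_contra hnot
  push_neg at hnot
  obtain ⟨v, x, y, hxv, hyv, hxy⟩ := hnot
  have hblocks := blocks_lemma hS.hp (inSet E v) (hS.inFin v) (hS.hin v)
    (fun a b => outSet E a = outSet E b)
    (fun a _ => rfl) (fun a b h => h.symm) (fun a b c h1 h2 => h1.trans h2)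
    {g : Equiv.Perm V | g ∈ autGroup E ∧ g v = v}
    (fun a ha b hb => by
      obtain ⟨g, hg, h1, h2⟩ := hS.stab_in_trans ha hb
      exact ⟨g, ⟨hg, h1⟩, h2⟩)
    (fun g hg a ha => by
      have : g a ∈ inSet E (g v) := (hS.aut_image_in hg.1 v) ▸ ⟨a, ha, rfl⟩
      rwa [hg.2] at this)
    (fun g hg a _ b _ => by
      constructor
      · intro h
        show outSet E (g a) = outSet E (g b)
        rw [← hS.aut_image_out hg.1 a, ← hS.aut_image_out hg.1 b]
        exact congrArg _ h
      · intro h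
        have h' : outSet E (g a) = outSet E (g b) := h
        show outSet E a = outSet E b
        rw [← hS.aut_image_out hg.1 a, ← hS.aut_image_out hg.1 b] at h'
        exact Set.image_injective.mpr g.injective h')
  rcases hblocks with hfull | htriv
  · exact hxy (hfull x hxv y hyv)
  · apply hS.cb_false
    intro v' x' y' hx' hy' heq
    obtain ⟨g, hg, hgv⟩ := hS.vertex_trans v' v
    have hgx : g x' ∈ inSet E v := by
      rw [← hgv]
      exact (mem_autGroup.mp hg x' v').mp hx'
    have hgy : g y' ∈ inSet E v := by
      rw [← hgv]
      exact (mem_autGroup.mp hg y' v').mp hy'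
    have heq2 : outSet E (g x') = outSet E (g y') := by
      rw [← hS.aut_image_out hg x', ← hS.aut_image_out hg y']
      exact congrArg _ heq
    exact g.injective (htriv (g x') hgx (g y') hgy heq2)

lemma caseA_dual {v x y : V} (hx : E v x) (hy : E v y) : inSet E x = inSet E y := by
  ext u
  constructor
  · intro hu
    have h1 : outSet E u = outSet E v := hS.caseA x u v hu hx
    show E u y
    have : y ∈ outSet E u := by rw [h1]; exact hy
    exact this
  · intro hu
    have h1 : outSet E u = outSet E v := hS.caseA y u v hu hy
    show E u x
    have : x ∈ outSet E u := by rw [h1]; exact hx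
    exact this

lemma class_eq_inSet {u v : V} (huv : E u v) :
    {u' | outSet E u' = outSet E u} = inSet E v := by
  ext u'
  constructor
  · intro h
    show E u' v
    have : v ∈ outSet E u' := by
      rw [Set.mem_setOf_eq] at h
      rw [h]
      exact huv
    exact this
  · intro hu'
    exact hS.caseA v u' u hu' huv

end Gd
end HATProof
namespace HATProof

/-- Quotient by equality of out-neighbourhoods. -/
def outSetoid (E : V → V → Prop) : Setoid V :=
  ⟨fun a b => outSet E a = outSet E b, ⟨fun _ => rfl, Eq.symm, Eq.trans⟩⟩

def QV (E : V → V → Prop) := Quotient (outSetoid E)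

def qmk (E : V → V → Prop) (a : V) : QV E := Quotient.mk (outSetoid E) a

def QE (E : V → V → Prop) : QV E → QV E → Prop :=
  fun A B => ∃ a b : V, qmk E a = A ∧ qmk E b = B ∧ E a b

noncomputable def Qφ (E : V → V → Prop) (φ : V → ℤ) : QV E → ℤ :=
  fun A => φ A.out

lemma qmk_surjective (E : V → V → Prop) : Function.Surjective (qmk E) :=
  fun A => ⟨A.out, A.out_eq⟩

lemma qmk_eq_iff {E : V → V → Prop} {a b : V} :
    qmk E a = qmk E b ↔ outSet E a = outSet E b := by
  constructor
  · intro h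
    exact Quotient.exact h
  · intro h
    exact Quotient.sound h

lemma qE_mk {E : V → V → Prop} {a b : V} (h : E a b) : QE E (qmk E a) (qmk E b) :=
  ⟨a, b, rfl, rfl, h⟩

lemma qE_lift {E : V → V → Prop} {a : V} {B : QV E} (h : QE E (qmk E a) B) :
    ∃ b : V, qmk E b = B ∧ E a b := by
  obtain ⟨a₀, b₀, ha₀, hb₀, hE⟩ := h
  refine ⟨b₀, hb₀, ?_⟩
  have houts : outSet E a₀ = outSet E a := qmk_eq_iff.mp ha₀
  have : b₀ ∈ outSet E a := by rw [← houts]; exact hE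
  exact this

namespace Gd

variable {E : V → V → Prop} {φ : V → ℤ} {p m : ℕ} (hS : Gd E φ p m)
include hS

lemma rel_same_fib {a b : V} (h : outSet E a = outSet E b) : φ a = φ b := by
  obtain ⟨w, hw⟩ := hS.out_nonempty a
  have h1 := hS.hom a w hw
  have hw2 : w ∈ outSet E b := by rw [← h]; exact hw
  have h2 := hS.hom b w hw2
  omega

lemma Qφ_mk (a : V) : Qφ E φ (qmk E a) = φ a := by
  have h : qmk E ((qmk E a).out) = qmk E a := Quotient.out_eq _
  exact hS.rel_same_fib (qmk_eq_iff.mp h)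

lemma qhom {A B : QV E} (h : QE E A B) : Qφ E φ B = Qφ E φ A + 1 := by
  obtain ⟨a, b, ha, hb, hE⟩ := h
  rw [← ha, ← hb, hS.Qφ_mk, hS.Qφ_mk]
  exact hS.hom a b hE

lemma qconn : DConnected (QE E) := by
  intro A B
  obtain ⟨a, rfl⟩ := qmk_surjective E A
  obtain ⟨b, rfl⟩ := qmk_surjective E B
  exact Relation.ReflTransGen.lift (qmk E)
    (fun x y (hxy : E x y ∨ E y x) => hxy.imp (fun h => qE_mk h) (fun h => qE_mk h)) _ _ (hS.conn a b)

lemma qout_eq (u : V) : outSet (QE E) (qmk E u) = qmk E '' (outSet E u) := by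
  ext B
  constructor
  · intro hB
    obtain ⟨b, hb, hE⟩ := qE_lift hB
    exact ⟨b, hE, hb⟩
  · rintro ⟨b, hb, rfl⟩
    exact qE_mk hb

lemma qhout (hmp : p < m) (A : QV E) : (outSet (QE E) A).ncard = p := by
  obtain ⟨u, rfl⟩ := qmk_surjective E A
  rw [hS.qout_eq u]
  rw [Set.ncard_image_of_injOn ?_]
  · exact hS.hout u
  · intro a ha b hb hab
    exact hS.no_twins hmp ha hb (qmk_eq_iff.mp hab)

lemma qfib_eq (i : ℤ) : Qφ E φ ⁻¹' {i} = qmk E '' (φ ⁻¹' {i}) := by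
  ext A
  constructor
  · intro hA
    obtain ⟨a, rfl⟩ := qmk_surjective E A
    have : φ a = i := by rw [← hS.Qφ_mk a]; exact hA
    exact ⟨a, this, rfl⟩
  · rintro ⟨a, ha, rfl⟩
    have : Qφ E φ (qmk E a) = i := by rw [hS.Qφ_mk a]; exact ha
    exact this

lemma qfib_count (i : ℤ) : m = (Qφ E φ ⁻¹' {i}).ncard * p := by
  classical
  have hDfin := hS.fibFin i
  set D := hDfin.toFinset with hD
  have himgfin : (Qφ E φ ⁻¹' {i}).Finite := by
    rw [hS.qfib_eq i]
    exact hDfin.image _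
  have hmem : ∀ a ∈ D, qmk E a ∈ D.image (qmk E) := fun a ha => Finset.mem_image_of_mem _ ha
  have hcount := Finset.card_eq_sum_card_fiberwise hmem
  have hfibcard : ∀ c ∈ D.image (qmk E), (D.filter (fun a => qmk E a = c)).card = p := by
    intro c hc
    obtain ⟨u, hu, rfl⟩ := Finset.mem_image.mp hc
    rw [Set.Finite.mem_toFinset] at hu
    obtain ⟨v, hv⟩ := hS.out_nonempty u
    have hclass : {u' | outSet E u' = outSet E u} = inSet E v := hS.class_eq_inSet hv
    have hfilter : D.filter (fun a => qmk E a = qmk E u) = (hS.inFin v).toFinset := by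
      ext a
      simp only [Finset.mem_filter, Set.Finite.mem_toFinset]
      constructor
      · rintro ⟨ha, heq⟩
        have : a ∈ {u' | outSet E u' = outSet E u} := qmk_eq_iff.mp heq
        rw [hclass] at this
        exact this
      · intro ha
        have h1 : outSet E a = outSet E u := by
          have : a ∈ {u' | outSet E u' = outSet E u} := by rw [hclass]; exact ha
          exact this
        refine ⟨?_, qmk_eq_iff.mpr h1⟩
        rw [Set.Finite.mem_toFinset]
        have := hS.rel_same_fib h1
        show φ a = i
        have hui : φ u = i := hu
        omega
    rw [hfilter, ← Set.ncard_eq_toFinset_card _ (hS.inFin v)]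
    exact hS.hin v
  rw [Finset.sum_congr rfl hfibcard, Finset.sum_const, smul_eq_mul] at hcount
  have hDcard : D.card = m := by
    rw [hD, ← Set.ncard_eq_toFinset_card _ hDfin]
    exact hS.hfib i
  have himgcard : (Qφ E φ ⁻¹' {i}).ncard = (D.image (qmk E)).card := by
    rw [hS.qfib_eq i, ← Set.ncard_coe_finset (D.image (qmk E))]
    congr 1
    rw [Finset.coe_image, hD, Set.Finite.coe_toFinset]
  rw [himgcard, ← hDcard, hcount]

lemma p_dvd_m : p ∣ m := ⟨(Qφ E φ ⁻¹' {0}).ncard, by rw [Nat.mul_comm]; exact hS.qfib_count 0⟩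

lemma qhfib (i : ℤ) : (Qφ E φ ⁻¹' {i}).ncard = m / p := by
  have h := hS.qfib_count i
  have hp0 : 0 < p := hS.hp.pos
  rw [h]
  exact (Nat.mul_div_cancel _ hp0).symm

lemma p_le_m : p ≤ m := by
  obtain ⟨u, _⟩ := hS.fib_nonempty 0
  calc p = (outSet E u).ncard := (hS.hout u).symm
    _ ≤ (φ ⁻¹' {φ u + 1}).ncard := Set.ncard_le_ncard (hS.out_sub u) (hS.fibFin _)
    _ = m := hS.hfib _

lemma qhalf : ∀ i : ℤ, ∀ A B : QV E, i < Qφ E φ A → i < Qφ E φ B →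
    ReachAvoid (QE E) (Qφ E φ ⁻¹' {i}) A B := by
  intro i A B hA hB
  obtain ⟨a, rfl⟩ := qmk_surjective E A
  obtain ⟨b, rfl⟩ := qmk_surjective E B
  rw [hS.Qφ_mk] at hA hB
  refine Relation.ReflTransGen.lift (qmk E) ?_ _ _ (hS.half i a b hA hB)
  rintro x y ⟨hxy, hx, hy⟩
  refine ⟨hxy.imp (fun h => qE_mk h) (fun h => qE_mk h), ?_, ?_⟩
  · intro hmem
    apply hx
    have : Qφ E φ (qmk E x) = i := hmem
    rw [hS.Qφ_mk] at this
    exact this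
  · intro hmem
    apply hy
    have : Qφ E φ (qmk E y) = i := hmem
    rw [hS.Qφ_mk] at this
    exact this

end Gd
end HATProof
namespace HATProof

lemma aut_image_out' {E : V → V → Prop} {g : Equiv.Perm V} (hg : g ∈ autGroup E) (v : V) :
    g '' outSet E v = outSet E (g v) := by
  ext w
  constructor
  · rintro ⟨x, hx, rfl⟩
    exact (mem_autGroup.mp hg v x).mp hx
  · intro hw
    refine ⟨g.symm w, ?_, g.apply_symm_apply w⟩
    have := (mem_autGroup.mp hg v (g.symm w)).mpr
    rw [g.apply_symm_apply] at this
    exact this hw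

lemma qrel {E : V → V → Prop} {g : Equiv.Perm V} (hg : g ∈ autGroup E) {x y : V}
    (h : outSet E x = outSet E y) : outSet E (g x) = outSet E (g y) := by
  rw [← aut_image_out' hg x, ← aut_image_out' hg y, h]

/-- The automorphism induced on the quotient. -/
def qaut {E : V → V → Prop} (g : Equiv.Perm V) (hg : g ∈ autGroup E) : Equiv.Perm (QV E) where
  toFun := Quotient.map g (fun x y h => qrel hg h)
  invFun := Quotient.map ⇑g⁻¹ (fun x y h => qrel (inv_mem hg) h)
  left_inv := by
    intro A
    induction A using Quotient.ind with
    | _ a => exact congrArg (Quotient.mk _) (g.symm_apply_apply a)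
  right_inv := by
    intro A
    induction A using Quotient.ind with
    | _ a => exact congrArg (Quotient.mk _) (g.apply_symm_apply a)

lemma qaut_mk {E : V → V → Prop} (g : Equiv.Perm V) (hg : g ∈ autGroup E) (x : V) :
    qaut g hg (qmk E x) = qmk E (g x) := rfl

lemma qaut_arc {E : V → V → Prop} (g : Equiv.Perm V) (hg : g ∈ autGroup E) {A B : QV E}
    (h : QE E A B) : QE E (qaut g hg A) (qaut g hg B) := by
  obtain ⟨a, b, ha, hb, hE⟩ := h
  refine ⟨g a, g b, ?_, ?_, (mem_autGroup.mp hg a b).mp hE⟩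
  · rw [← ha]; rfl
  · rw [← hb]; rfl

lemma qaut_inv_comp {E : V → V → Prop} (g : Equiv.Perm V) (hg : g ∈ autGroup E) (A : QV E) :
    qaut g⁻¹ (inv_mem hg) (qaut g hg A) = A := by
  induction A using Quotient.ind with
  | _ a =>
    show qmk E (g⁻¹ (g a)) = qmk E a
    simp

lemma qaut_mem {E : V → V → Prop} (g : Equiv.Perm V) (hg : g ∈ autGroup E) :
    qaut g hg ∈ autGroup (QE E) := by
  intro A B
  constructor
  · exact qaut_arc g hg
  · intro h
    have h2 := qaut_arc g⁻¹ (inv_mem hg) h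
    rwa [qaut_inv_comp, qaut_inv_comp] at h2

lemma qarc_lift {E : V → V → Prop} : ∀ (k : ℕ) (f' : Fin (k + 1) → QV E),
    IsKArc (QE E) k f' → ∃ f : Fin (k + 1) → V, IsKArc E k f ∧ ∀ i, qmk E (f i) = f' i := by
  intro k
  induction k with
  | zero =>
    intro f' _
    refine ⟨fun _ => (f' 0).out, fun i => i.elim0, fun i => ?_⟩
    have h0 : i = 0 := Fin.fin_one_eq_zero i
    subst h0
    exact Quotient.out_eq _
  | succ k ih =>
    intro f' hf'
    have hres : IsKArc (QE E) k (fun j => f' j.castSucc) := by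
      intro i
      have h := hf' i.castSucc
      rwa [Fin.succ_castSucc] at h
    obtain ⟨f, hf, hq⟩ := ih _ hres
    have hlast := hf' (Fin.last k)
    have hqlast : qmk E (f (Fin.last k)) = f' (Fin.last k).castSucc := hq (Fin.last k)
    have harc : QE E (qmk E (f (Fin.last k))) (f' (Fin.last k).succ) := by
      rw [hqlast]; exact hlast
    obtain ⟨b, hb, hEb⟩ := qE_lift harc
    refine ⟨Fin.snoc f b, ?_, ?_⟩
    · intro i
      refine Fin.lastCases ?_ ?_ i
      · rw [Fin.succ_last, Fin.snoc_last, Fin.snoc_castSucc]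
        exact hEb
      · intro j
        rw [Fin.succ_castSucc, Fin.snoc_castSucc, Fin.snoc_castSucc]
        exact hf j
    · intro i
      refine Fin.lastCases ?_ ?_ i
      · rw [Fin.snoc_last, ← Fin.succ_last]
        exact hb
      · intro j
        rw [Fin.snoc_castSucc]
        exact hq j

namespace Gd

variable {E : V → V → Prop} {φ : V → ℤ} {p m : ℕ} (hS : Gd E φ p m)
include hS

lemma qhat : HighlyArcTransitive (QE E) := by
  intro k f' g' hf' hg'
  obtain ⟨f, hf, hqf⟩ := qarc_lift k f' hf'
  obtain ⟨g, hg, hqg⟩ := qarc_lift k g' hg'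
  obtain ⟨a, ha, he⟩ := hS.hat k f g hf hg
  refine ⟨qaut a ha, qaut_mem a ha, fun i => ?_⟩
  rw [← hqf i, ← hqg i]
  show qaut a ha (qmk E (f i)) = qmk E (g i)
  rw [qaut_mk, he i]

lemma qGd (hmp : p < m) : Gd (QE E) (Qφ E φ) p (m / p) where
  conn := hS.qconn
  hat := hS.qhat
  hom := fun _ _ h => hS.qhom h
  hout := hS.qhout hmp
  hfib := hS.qhfib
  hp := hS.hp
  hm := Nat.div_pos hS.p_le_m hS.hp.pos
  half := hS.qhalf

end Gd
end HATProof
namespace HATProof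

universe w₁ w₂ w₃

lemma digr_iso_trans {D₁ : Digr.{w₁}} {D₂ : Digr.{w₂}} {D₃ : Digr.{w₃}}
    (h1 : DigrIso D₁ D₂) (h2 : DigrIso D₂ D₃) : DigrIso D₁ D₃ := by
  obtain ⟨e, he⟩ := h1
  obtain ⟨f, hf⟩ := h2
  exact ⟨e.trans f, fun u v => (he u v).trans (hf (e u) (e v))⟩

lemma digr_iso_pl {D₁ : Digr.{w₁}} {D₂ : Digr.{w₂}} (h : DigrIso D₁ D₂) :
    DigrIso (Pl D₁) (Pl D₂) := by
  obtain ⟨e, he⟩ := h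
  refine ⟨{ toFun := fun x => ⟨(e x.1.1, e x.1.2), (he _ _).mp x.2⟩
            invFun := fun y => ⟨(e.symm y.1.1, e.symm y.1.2), ?_⟩
            left_inv := ?_
            right_inv := ?_ }, ?_⟩
  · apply (he (e.symm y.1.1) (e.symm y.1.2)).mpr
    rw [e.apply_symm_apply, e.apply_symm_apply]
    exact y.2
  · intro x
    apply Subtype.ext
    show (e.symm (e x.1.1), e.symm (e x.1.2)) = x.1
    rw [e.symm_apply_apply, e.symm_apply_apply]
  · intro y
    apply Subtype.ext
    show (e (e.symm y.1.1), e (e.symm y.1.2)) = y.1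
    rw [e.apply_symm_apply, e.apply_symm_apply]
  · intro a b
    show a.1.2 = b.1.1 ↔ e a.1.2 = e b.1.1
    exact (Equiv.apply_eq_iff_eq e).symm

namespace Gd

variable {E : V → V → Prop} {φ : V → ℤ} {p m : ℕ} (hS : Gd E φ p m)
include hS

lemma pl_iso (hmp : p < m) : DigrIso (Pl (Digr.mk (QV E) (QE E))) (Digr.mk V E) := by
  classical
  have hinne : ∀ x : V, ∃ z : V, E z x := fun x => hS.in_nonempty x
  choose z hz using hinne
  let ψ : V → (Pl (Digr.mk (QV E) (QE E))).V := fun x =>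
    ⟨(qmk E (z x), qmk E x), qE_mk (hz x)⟩
  have hinj : Function.Injective ψ := by
    intro x y h
    have hval : ((qmk E (z x), qmk E x) : QV E × QV E) = (qmk E (z y), qmk E y) :=
      congrArg Subtype.val h
    have h1 : qmk E (z x) = qmk E (z y) := congrArg Prod.fst hval
    have h2 : qmk E x = qmk E y := congrArg Prod.snd hval
    have houtz : outSet E (z x) = outSet E (z y) := qmk_eq_iff.mp h1
    have houtxy : outSet E x = outSet E y := qmk_eq_iff.mp h2
    have hy' : E (z x) y := by
      have hmem : y ∈ outSet E (z y) := hz y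
      rw [← houtz] at hmem
      exact hmem
    exact hS.no_twins hmp (hz x) hy' houtxy
  have hsurj : Function.Surjective ψ := by
    rintro ⟨⟨A, B⟩, hAB⟩
    have hAB' := hAB
    obtain ⟨a₀, b₀, ha₀, hb₀, hE⟩ := hAB'
    have ha₀' : qmk E a₀ = A := ha₀
    have hb₀' : qmk E b₀ = B := hb₀
    refine ⟨b₀, Subtype.ext ?_⟩
    show (qmk E (z b₀), qmk E b₀) = (A, B)
    have h1 : qmk E (z b₀) = A := by
      rw [← ha₀']
      exact qmk_eq_iff.mpr (hS.caseA b₀ (z b₀) a₀ (hz b₀) hE)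
    rw [h1, hb₀']
  let eqv := Equiv.ofBijective ψ ⟨hinj, hsurj⟩
  have key : ∀ x y : V, (Pl (Digr.mk (QV E) (QE E))).E (ψ x) (ψ y) ↔ E x y := by
    intro x y
    show qmk E x = qmk E (z y) ↔ E x y
    constructor
    · intro h
      have hmem : y ∈ outSet E (z y) := hz y
      have hout : outSet E x = outSet E (z y) := qmk_eq_iff.mp h
      rw [← hout] at hmem
      exact hmem
    · intro h
      exact qmk_eq_iff.mpr (hS.caseA y x (z y) h (hz y))
  refine ⟨eqv.symm, ?_⟩
  intro a b
  have ha : ψ (eqv.symm a) = a := eqv.apply_symm_apply a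
  have hb : ψ (eqv.symm b) = b := eqv.apply_symm_apply b
  have hk := key (eqv.symm a) (eqv.symm b)
  rw [ha, hb] at hk
  exact hk

lemma base_iso (hpm : p = m) : DigrIso (Delta p) (Digr.mk V E) := by
  classical
  haveI : NeZero p := ⟨hS.hp.ne_zero⟩
  have hcomplete : ∀ u w : V, φ w = φ u + 1 → E u w := by
    intro u w hw
    have hset : outSet E u = φ ⁻¹' {φ u + 1} := by
      apply Set.eq_of_subset_of_ncard_le (hS.out_sub u) ?_ (hS.fibFin _)
      rw [hS.hfib, hS.hout, hpm]
    have hmem : w ∈ outSet E u := by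
      rw [hset]
      exact hw
    exact hmem
  have hfe : ∀ i : ℤ, Nonempty (ZMod p ≃ ↥(φ ⁻¹' {i})) := by
    intro i
    haveI := (hS.fibFin i).fintype
    apply Fintype.card_eq.mp
    rw [ZMod.card p]
    have hc : Fintype.card ↥(φ ⁻¹' {i}) = m := by
      have h := hS.hfib i
      rwa [Set.ncard_eq_toFinset_card', Set.toFinset_card] at h
    rw [hc, hpm]
  let eqv : ∀ i : ℤ, ZMod p ≃ ↥(φ ⁻¹' {i}) := fun i => (hfe i).some
  let e : (ℤ × ZMod p) ≃ V :=
    (Equiv.sigmaEquivProd ℤ (ZMod p)).symm.trans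
      ((Equiv.sigmaCongrRight eqv).trans (Equiv.sigmaFiberEquiv φ))
  refine ⟨e, ?_⟩
  rintro ⟨i, x⟩ ⟨j, y⟩
  have hei : φ (e (i, x)) = i := (eqv i x).2
  have hej : φ (e (j, y)) = j := (eqv j y).2
  show j = i + 1 ↔ E (e (i, x)) (e (j, y))
  constructor
  · intro hji
    apply hcomplete
    rw [hei, hej, hji]
  · intro hE
    have h := hS.hom _ _ hE
    rw [hei, hej] at h
    exact h

end Gd

lemma good_main : ∀ (m : ℕ) {V : Type u} (E : V → V → Prop) (φ : V → ℤ) (p : ℕ),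
    Gd E φ p m → ∃ r : ℕ, p ^ (r + 1) = m ∧ DigrIso (PlIter r (Delta p)) (Digr.mk V E) := by
  intro m
  induction m using Nat.strong_induction_on with
  | _ m ih =>
    intro V E φ p hS
    rcases eq_or_lt_of_le hS.p_le_m with hpm | hmp
    · exact ⟨0, by rw [pow_one]; exact hpm, hS.base_iso hpm⟩
    · have hq := hS.qGd hmp
      have hm0 : 0 < m := hS.hm
      have hlt : m / p < m := Nat.div_lt_self hm0 hS.hp.one_lt
      obtain ⟨r', hr', hiso⟩ := ih (m / p) hlt (QE E) (Qφ E φ) p hq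
      obtain ⟨c, hc⟩ := hS.p_dvd_m
      have hcval : m / p = c := by rw [hc]; exact Nat.mul_div_cancel_left _ hS.hp.pos
      refine ⟨r' + 1, ?_, ?_⟩
      · rw [pow_succ, hr', hcval, hc, mul_comm]
      · show DigrIso (Pl (PlIter r' (Delta p))) (Digr.mk V E)
        exact digr_iso_trans (digr_iso_pl hiso) (hS.pl_iso hmp)

end HATProof
/-- A two-ended highly-arc-transitive digraph of prime out-valency `p`
with fibre size `m > 2` is isomorphic to the `r`-fold partial line graph
`Pl^r(Δ_p)`, where `p^(r+1) = m`. -/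
theorem two_ended_prime_valency_classification
    {V : Type u} (E : V → V → Prop)
    (h2 : TwoEnded E) (hhat : HighlyArcTransitive E)
    (p : ℕ) (hp : p.Prime) (hout : ∀ v : V, (outSet E v).ncard = p)
    (φ : V → ℤ) (hsurj : Function.Surjective φ)
    (hhom : ∀ u v : V, E u v → φ v = φ u + 1)
    (m : ℕ) (hm : 2 < m) (hfib : ∀ i : ℤ, (φ ⁻¹' {i}).ncard = m) :
    ∃ r : ℕ, p ^ (r + 1) = m ∧ DigrIso (PlIter r (Delta p)) (Digr.mk V E) := by
  classical
  obtain ⟨hconn, hcond2, -⟩ := h2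
  have hm0 : 0 < m := by omega
  have hfibFin : ∀ i : ℤ, (φ ⁻¹' {i}).Finite := by
    intro i
    by_contra h
    have h0 := Set.Infinite.ncard h
    have h1 := hfib i
    omega
  have hvt : ∀ u v : V, ∃ g ∈ autGroup E, g u = v := by
    intro u v
    obtain ⟨a, ha, h⟩ := hhat 0 (fun _ => u) (fun _ => v) (fun i => i.elim0) (fun i => i.elim0)
    exact ⟨a, ha, h 0⟩
  have honempty : ∀ v : V, (outSet E v).Nonempty := by
    intro v
    apply Set.nonempty_of_ncard_ne_zero
    rw [hout v]
    exact hp.pos.ne'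
  have hinne : ∀ v : V, ∃ u : V, E u v := by
    intro v
    obtain ⟨w, hw⟩ := honempty v
    obtain ⟨g, hg, hgw⟩ := hvt w v
    refine ⟨g v, ?_⟩
    have h1 := (HATProof.mem_autGroup.mp hg v w).mp hw
    rwa [hgw] at h1
  have hcross : ∀ (i : ℤ) (a b : V), ReachAvoid E (φ ⁻¹' {i}) a b → i < φ a → i < φ b := by
    intro i a b h ha
    induction h with
    | refl => exact ha
    | tail hab hbc ih =>
      rename_i b' c'
      obtain ⟨hE, hbS, hcS⟩ := hbc
      have hci : φ c' ≠ i := fun hh => hcS (by simpa using hh)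
      rcases hE with h1 | h1
      · have := hhom _ _ h1; omega
      · have := hhom _ _ h1; omega
  have hinfpos : ∀ (i : ℤ) (a : V), i < φ a → InfComp E (φ ⁻¹' {i}) a := by
    intro i a ha
    have hex : ∀ v : V, ∃ w, E v w := fun v => honempty v
    choose nxt hnxt using hex
    constructor
    · intro h
      have : φ a = i := by simpa using h
      omega
    · let f : ℕ → V := fun k => Nat.rec a (fun _ x => nxt x) k
      have hfE : ∀ k, E (f k) (f (k + 1)) := fun k => hnxt (f k)
      have hfφ : ∀ k, φ (f k) = φ a + k := by
        intro k
        induction k with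
        | zero => show φ a = φ a + ((0:ℕ):ℤ); simp
        | succ k ihk =>
          have := hhom _ _ (hfE k)
          push_cast
          push_cast at ihk
          omega
      have hreach : ∀ k, ReachAvoid E (φ ⁻¹' {i}) a (f k) := by
        intro k
        induction k with
        | zero => exact Relation.ReflTransGen.refl
        | succ k ihk =>
          refine Relation.ReflTransGen.tail ihk ⟨Or.inl (hfE k), ?_, ?_⟩
          · intro h
            have h1 : φ (f k) = i := by simpa using h
            have h2 := hfφ k
            omega
          · intro h
            have h1 : φ (f (k + 1)) = i := by simpa using h
            have h2 := hfφ (k + 1)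
            omega
      apply Set.infinite_of_injective_forall_mem (f := f)
      · intro k l h
        have h1 := hfφ k
        have h2 := hfφ l
        rw [h] at h1
        omega
      · intro k
        exact hreach k
  have hinfneg : ∀ (i : ℤ) (a : V), φ a < i → InfComp E (φ ⁻¹' {i}) a := by
    intro i a ha
    choose pre hpre using hinne
    constructor
    · intro h
      have : φ a = i := by simpa using h
      omega
    · let f : ℕ → V := fun k => Nat.rec a (fun _ x => pre x) k
      have hfE : ∀ k, E (f (k + 1)) (f k) := fun k => hpre (f k)
      have hfφ : ∀ k, φ (f k) = φ a - k := by
        intro k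
        induction k with
        | zero => show φ a = φ a - ((0:ℕ):ℤ); simp
        | succ k ihk =>
          have := hhom _ _ (hfE k)
          push_cast
          push_cast at ihk
          omega
      have hreach : ∀ k, ReachAvoid E (φ ⁻¹' {i}) a (f k) := by
        intro k
        induction k with
        | zero => exact Relation.ReflTransGen.refl
        | succ k ihk =>
          refine Relation.ReflTransGen.tail ihk ⟨Or.inr (hfE k), ?_, ?_⟩
          · intro h
            have h1 : φ (f k) = i := by simpa using h
            have h2 := hfφ k
            omega
          · intro h
            have h1 : φ (f (k + 1)) = i := by simpa using h
            have h2 := hfφ (k + 1)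
            omega
      apply Set.infinite_of_injective_forall_mem (f := f)
      · intro k l h
        have h1 := hfφ k
        have h2 := hfφ l
        rw [h] at h1
        omega
      · intro k
        exact hreach k
  have hhalf : ∀ i : ℤ, ∀ u v : V, i < φ u → i < φ v → ReachAvoid E (φ ⁻¹' {i}) u v := by
    intro i u v hu hv
    obtain ⟨w, hw⟩ := hsurj (i - 1)
    have h3 := hcond2 (φ ⁻¹' {i}) (hfibFin i) u v w (hinfpos i u hu) (hinfpos i v hv)
      (hinfneg i w (by omega))
    rcases h3 with h | h | h
    · exact h
    · exfalso
      have := hcross i u w h hu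
      omega
    · exfalso
      have := hcross i v w h hv
      omega
  have hS : HATProof.Gd E φ p m := ⟨hconn, hhat, hhom, hout, hfib, hp, hm0, hhalf⟩
  exact HATProof.good_main m E φ p hS
end

section
/- The automorphism group of the digraph Δ_p (vertex set Z × Z_p, arcs ((i,x),(i+1,y)) for all x, y ∈ Z_p) is isomorphic to the unrestricted wreath product Sym(Z_p) Wr Z, i.e., the semidirect product of the full direct product ∏_{i∈Z} Sym(Z_p) with Z acting by shifting coordinates. -/
variable {V : Type*}

universe u v

/-- The shift action of `ℤ` on the unrestricted direct product `∏_{i ∈ ℤ} Sym(ZMod p)`,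
translating the coordinates. -/
def shiftHom (p : ℕ) : Multiplicative ℤ →* MulAut (∀ _ : ℤ, Equiv.Perm (ZMod p)) where
  toFun n :=
    { toFun := fun f i => f (i - n.toAdd)
      invFun := fun f i => f (i + n.toAdd)
      left_inv := by intro f; funext i; simp
      right_inv := by intro f; funext i; simp
      map_mul' := fun f g => rfl }
  map_one' := by ext f i x; simp
  map_mul' := by intro a b; ext f i x; simp [sub_sub]


namespace AutDeltaAux

variable (p : ℕ)

abbrev Wr (p : ℕ) :=
  SemidirectProduct (∀ _ : ℤ, Equiv.Perm (ZMod p)) (Multiplicative ℤ) (shiftHom p)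

/-- The action of the wreath product on `ℤ × ZMod p`. -/
def wHom : Wr p →* Equiv.Perm (ℤ × ZMod p) where
  toFun g :=
    { toFun := fun v => (v.1 + g.right.toAdd, g.left (v.1 + g.right.toAdd) v.2)
      invFun := fun v => (v.1 - g.right.toAdd, (g.left v.1)⁻¹ v.2)
      left_inv := fun v => by simp
      right_inv := fun v => by simp }
  map_one' := by
    ext v <;> simp
  map_mul' := fun g h => by
    ext v
    · show v.1 + (g.right * h.right).toAdd = (v.1 + h.right.toAdd) + g.right.toAdd
      simp [toAdd_mul]; ring
    · show ((g.left * shiftHom p g.right h.left) (v.1 + (g.right * h.right).toAdd)) v.2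
        = g.left ((v.1 + h.right.toAdd) + g.right.toAdd)
            (h.left (v.1 + h.right.toAdd) v.2)
      have h1 : v.1 + (g.right * h.right).toAdd = v.1 + h.right.toAdd + g.right.toAdd := by
        rw [toAdd_mul]; ring
      have h2 : v.1 + h.right.toAdd + g.right.toAdd - g.right.toAdd
          = v.1 + h.right.toAdd := by ring
      rw [h1]
      simp only [Pi.mul_apply, Equiv.Perm.mul_apply, shiftHom,
        MonoidHom.coe_mk, OneHom.coe_mk, MulEquiv.coe_mk, Equiv.coe_fn_mk, h2]

lemma wHom_mem (g : Wr p) : wHom p g ∈ autGroup (Delta p).E := by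
  intro u v
  show (v.1 = u.1 + 1) ↔ (v.1 + g.right.toAdd = (u.1 + g.right.toAdd) + 1)
  omega

lemma wHom_injective : Function.Injective (wHom p) := by
  intro g h e
  have e' : ∀ v : ℤ × ZMod p, wHom p g v = wHom p h v := fun v => by rw [e]
  have hn : g.right = h.right := by
    have h0 := congrArg Prod.fst (e' (0, 0))
    have : g.right.toAdd = h.right.toAdd := by simpa [wHom] using h0
    exact Multiplicative.toAdd.injective this
  ext1
  · funext i
    ext x
    have h0 := congrArg Prod.snd (e' (i - g.right.toAdd, x))
    simp only [wHom, MonoidHom.coe_mk, OneHom.coe_mk, Equiv.coe_fn_mk, hn,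
      sub_add_cancel] at h0
    exact h0
  · exact hn

lemma wHom_surjective (a : Equiv.Perm (ℤ × ZMod p)) (ha : a ∈ autGroup (Delta p).E) :
    ∃ g : Wr p, wHom p g = a := by
  have H : ∀ u v : ℤ × ZMod p, (v.1 = u.1 + 1) ↔ ((a v).1 = (a u).1 + 1) := ha
  -- the first coordinate does not depend on the second
  have hfst : ∀ i : ℤ, ∀ x : ZMod p, (a (i, x)).1 = (a (i, 0)).1 := by
    intro i x
    have h1 : (a (i + 1, 0)).1 = (a (i, x)).1 + 1 := (H (i, x) (i + 1, 0)).1 rfl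
    have h2 : (a (i + 1, 0)).1 = (a (i, 0)).1 + 1 := (H (i, 0) (i + 1, 0)).1 rfl
    omega
  set n : ℤ := (a (0, 0)).1 with hn
  have hlin : ∀ i : ℤ, (a (i, 0)).1 = i + n := by
    intro i
    induction i using Int.induction_on with
    | zero => omega
    | succ k ih =>
        have := (H ((k : ℤ), 0) ((k : ℤ) + 1, 0)).1 rfl
        omega
    | pred k ih =>
        have := (H ((-(k : ℤ)) - 1, 0) (-(k : ℤ), 0)).1 (by ring)
        omega
  have key : ∀ i : ℤ, ∀ x : ZMod p, (a (i, x)).1 = i + n := fun i x => by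
    rw [hfst, hlin]
  -- build the permutations level by level
  have hinj : ∀ j : ℤ, Function.Injective (fun x : ZMod p => (a (j - n, x)).2) := by
    intro j x y hxy
    have : a (j - n, x) = a (j - n, y) := by
      apply Prod.ext
      · rw [key, key]
      · exact hxy
    exact congrArg Prod.snd (a.injective this)
  have hsurj : ∀ j : ℤ, Function.Surjective (fun x : ZMod p => (a (j - n, x)).2) := by
    intro j z
    obtain ⟨⟨i, x⟩, hx⟩ := a.surjective (j, z)
    have h1 : (a (i, x)).1 = i + n := key i x
    have h2 : i = j - n := by rw [hx] at h1; simp at h1; omega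
    refine ⟨x, ?_⟩
    show (a (j - n, x)).2 = z
    rw [← h2, hx]
  refine ⟨⟨fun j => Equiv.ofBijective _ ⟨hinj j, hsurj j⟩, Multiplicative.ofAdd n⟩, ?_⟩
  ext v
  · show v.1 + (Multiplicative.ofAdd n).toAdd = (a v).1
    simp [key v.1 v.2]
  · show (a (v.1 + (Multiplicative.ofAdd n).toAdd - n, v.2)).2 = (a v).2
    simp

end AutDeltaAux

/-- The automorphism group of `Δ_p` is isomorphic to the unrestricted
wreath product `Sym(ZMod p) Wr ℤ`, i.e. the semidirect product of `∏_{i ∈ ℤ} Sym(ZMod p)`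
with `ℤ` acting by shifting coordinates. -/
theorem aut_Delta_iso_wreath (p : ℕ) :
    Nonempty (↥(autGroup (Delta p).E) ≃*
      SemidirectProduct (∀ _ : ℤ, Equiv.Perm (ZMod p)) (Multiplicative ℤ) (shiftHom p)) := by
  refine ⟨?_⟩
  let f : AutDeltaAux.Wr p →* ↥(autGroup (Delta p).E) :=
    (AutDeltaAux.wHom p).codRestrict _ (AutDeltaAux.wHom_mem p)
  have hb : Function.Bijective f := by
    constructor
    · intro g h e
      exact AutDeltaAux.wHom_injective p (congrArg Subtype.val e)
    · rintro ⟨a, ha⟩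
      obtain ⟨g, hg⟩ := AutDeltaAux.wHom_surjective p a ha
      exact ⟨g, Subtype.ext hg⟩
  exact (MulEquiv.ofBijective f hb).symm
end

section
/- Let Γ be a two-ended highly-arc-transitive digraph of out-valency 2 with fibre size m > 2. Then the stabilizer of a vertex in Aut(Γ) is an elementary abelian 2-group (isomorphic to (Z_2)^Z). -/
variable {V : Type*}

open Cardinal in
lemma _cardinal_open_dummy : (2:Cardinal) ^ Cardinal.aleph0 = Cardinal.continuum := Cardinal.two_power_aleph0

universe u

structure HATSetup (V : Type u) where
  E : V → V → Prop
  φ : V → ℤ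
  m : ℕ
  hm : 2 ≤ m
  hconn : DConnected E
  hhat : HighlyArcTransitive E
  hout : ∀ v, (outSet E v).ncard = 2
  hin : ∀ v, (inSet E v).ncard = 2
  hsurj : Function.Surjective φ
  hhom : ∀ u v, E u v → φ v = φ u + 1
  hfib : ∀ i, (φ ⁻¹' {i}).ncard = m

namespace HATSetup

variable {V : Type u} (G : HATSetup V)

lemma mem_aut {g : Equiv.Perm V} : g ∈ autGroup G.E ↔ ∀ u v, G.E u v ↔ G.E (g u) (g v) :=
  Iff.rfl

lemma fib_finite (i : ℤ) : (G.φ ⁻¹' {i}).Finite := by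
  by_contra h
  have := Set.Infinite.ncard (by simpa using h)
  rw [G.hfib i] at this
  have := G.hm
  omega

lemma fib_ncard_pos (i : ℤ) : 0 < (G.φ ⁻¹' {i}).ncard := by
  rw [G.hfib]; have := G.hm; omega

lemma out_sub_fib (v : V) : outSet G.E v ⊆ G.φ ⁻¹' {G.φ v + 1} := by
  intro w hw
  simp only [Set.mem_preimage, Set.mem_singleton_iff]
  exact G.hhom v w hw

lemma in_sub_fib (v : V) : inSet G.E v ⊆ G.φ ⁻¹' {G.φ v - 1} := by
  intro w hw
  simp only [Set.mem_preimage, Set.mem_singleton_iff]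
  have := G.hhom w v hw
  omega

lemma out_finite (v : V) : (outSet G.E v).Finite :=
  (G.fib_finite _).subset (G.out_sub_fib v)

lemma in_finite (v : V) : (inSet G.E v).Finite :=
  (G.fib_finite _).subset (G.in_sub_fib v)

lemma out_two (v : V) : ∃ p : V × V, p.1 ≠ p.2 ∧ outSet G.E v = {p.1, p.2} := by
  obtain ⟨a, b, hab, h⟩ := Set.ncard_eq_two.mp (G.hout v)
  exact ⟨(a, b), hab, h⟩

lemma in_two (v : V) : ∃ p : V × V, p.1 ≠ p.2 ∧ inSet G.E v = {p.1, p.2} := by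
  obtain ⟨a, b, hab, h⟩ := Set.ncard_eq_two.mp (G.hin v)
  exact ⟨(a, b), hab, h⟩

noncomputable def fstOut (v : V) : V := (G.out_two v).choose.1
noncomputable def sndOut (v : V) : V := (G.out_two v).choose.2

lemma fstOut_ne_sndOut (v : V) : G.fstOut v ≠ G.sndOut v := (G.out_two v).choose_spec.1

lemma outSet_eq_pair (v : V) : outSet G.E v = {G.fstOut v, G.sndOut v} :=
  (G.out_two v).choose_spec.2

lemma edge_fstOut (v : V) : G.E v (G.fstOut v) := by
  have : G.fstOut v ∈ outSet G.E v := by rw [G.outSet_eq_pair]; left; rfl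
  exact this

lemma edge_sndOut (v : V) : G.E v (G.sndOut v) := by
  have : G.sndOut v ∈ outSet G.E v := by rw [G.outSet_eq_pair]; right; rfl
  exact this

lemma out_nonempty (v : V) : ∃ w, G.E v w := ⟨G.fstOut v, G.edge_fstOut v⟩

lemma in_nonempty (v : V) : ∃ w, G.E w v := by
  obtain ⟨p, _, h⟩ := G.in_two v
  exact ⟨p.1, by
    have : p.1 ∈ inSet G.E v := by rw [h]; left; rfl
    exact this⟩

lemma aut_image_out {g : Equiv.Perm V} (hg : g ∈ autGroup G.E) (v : V) :
    g '' outSet G.E v = outSet G.E (g v) := by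
  ext w
  constructor
  · rintro ⟨x, hx, rfl⟩
    exact (hg v x).mp hx
  · intro hw
    refine ⟨g.symm w, ?_, by simp⟩
    have hw' : G.E (g v) (g (g.symm w)) := by
      rwa [Equiv.apply_symm_apply]
    exact (hg v (g.symm w)).mpr hw'

lemma aut_image_in {g : Equiv.Perm V} (hg : g ∈ autGroup G.E) (v : V) :
    g '' inSet G.E v = inSet G.E (g v) := by
  ext w
  constructor
  · rintro ⟨x, hx, rfl⟩
    exact (hg x v).mp hx
  · intro hw
    refine ⟨g.symm w, ?_, by simp⟩
    have hw' : G.E (g (g.symm w)) (g v) := by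
      rwa [Equiv.apply_symm_apply]
    exact (hg (g.symm w) v).mpr hw'

/-- Every automorphism shifts the level function by a constant. -/
lemma aut_shift {g : Equiv.Perm V} (hg : g ∈ autGroup G.E) (x y : V) :
    G.φ (g x) - G.φ x = G.φ (g y) - G.φ y := by
  have key : ∀ a b : V, (G.E a b ∨ G.E b a) → G.φ (g a) - G.φ a = G.φ (g b) - G.φ b := by
    rintro a b (h | h)
    · have h1 := G.hhom a b h
      have h2 := G.hhom (g a) (g b) ((hg a b).mp h)
      omega
    · have h1 := G.hhom b a h
      have h2 := G.hhom (g b) (g a) ((hg b a).mp h)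
      omega
  induction G.hconn x y with
  | refl => rfl
  | tail _ hstep ih => exact ih.trans (key _ _ hstep)

lemma shift0_of_fix {g : Equiv.Perm V} (hg : g ∈ autGroup G.E) {v : V} (hv : g v = v)
    (x : V) : G.φ (g x) = G.φ x := by
  have := G.aut_shift hg x v
  rw [hv] at this
  omega

lemma vtrans (u v : V) : ∃ a ∈ autGroup G.E, (a : Equiv.Perm V) u = v := by
  obtain ⟨a, ha, haeq⟩ := G.hhat 0 (fun _ => u) (fun _ => v)
    (fun i => i.elim0) (fun i => i.elim0)
  exact ⟨a, ha, haeq 0⟩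

end HATSetup

namespace HATSetup

variable {V : Type u} (G : HATSetup V)

noncomputable def arcOfAux (fst snd : V → V) (v0 : V) (s : ℕ → Bool) : ℕ → V
  | 0 => v0
  | k+1 => if s k then fst (arcOfAux fst snd v0 s k) else snd (arcOfAux fst snd v0 s k)

noncomputable def arcOf (v0 : V) (s : ℕ → Bool) : ℕ → V :=
  arcOfAux G.fstOut G.sndOut v0 s

lemma arc_succ (v0 : V) (s : ℕ → Bool) (k : ℕ) :
    G.arcOf v0 s (k+1) = if s k then G.fstOut (G.arcOf v0 s k) else G.sndOut (G.arcOf v0 s k) := by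
  simp only [arcOf, arcOfAux]

lemma arc_edge (v0 : V) (s : ℕ → Bool) (k : ℕ) :
    G.E (G.arcOf v0 s k) (G.arcOf v0 s (k+1)) := by
  rw [G.arc_succ]
  cases s k
  · simpa using G.edge_sndOut _
  · simpa using G.edge_fstOut _

lemma arc_zero (v0 : V) (s : ℕ → Bool) : G.arcOf v0 s 0 = v0 := rfl

lemma arc_det (v0 : V) (s t : ℕ → Bool) (j : ℕ)
    (h1 : G.arcOf v0 s j = G.arcOf v0 t j)
    (h2 : G.arcOf v0 s (j+1) = G.arcOf v0 t (j+1)) : s j = t j := by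
  by_contra hne
  have hs := G.arc_succ v0 s j
  have ht := G.arc_succ v0 t j
  rw [hs, ht, ← h1] at h2
  rcases Bool.eq_false_or_eq_true (s j) with h | h <;>
    rcases Bool.eq_false_or_eq_true (t j) with h' | h' <;>
      simp [h, h'] at h2 hne <;>
        [skip; skip] <;>
          first
            | exact G.fstOut_ne_sndOut _ h2.symm
            | exact G.fstOut_ne_sndOut _ h2

/-- Rigidity: with no twins, a level preserving automorphism fixing one fibre pointwise
is the identity. -/
lemma rigid
    (hNoIn : ∀ x y : V, G.φ x = G.φ y → inSet G.E x = inSet G.E y → x = y)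
    (hNoOut : ∀ x y : V, G.φ x = G.φ y → outSet G.E x = outSet G.E y → x = y)
    {g : Equiv.Perm V} (hg : g ∈ autGroup G.E) (hsh : ∀ x, G.φ (g x) = G.φ x)
    (c : ℤ) (hfix : ∀ x, G.φ x = c → g x = x) : ∀ x, g x = x := by
  have main : ∀ j : ℕ, ∀ x, (G.φ x = c + j ∨ G.φ x = c - j) → g x = x := by
    intro j
    induction j with
    | zero => intro x hx; apply hfix; simpa using by omega
    | succ j ih =>
      intro x hx
      rcases hx with hx | hx
      · -- use in-sets
        have hin : ∀ u ∈ inSet G.E x, g u = u := by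
          intro u hu
          have : G.φ u = G.φ x - 1 := by have := G.hhom u x hu; omega
          exact ih u (Or.inl (by omega))
        have himg : inSet G.E (g x) = inSet G.E x := by
          rw [← G.aut_image_in hg x]
          ext w; constructor
          · rintro ⟨y, hy, rfl⟩; rwa [hin y hy]
          · intro hw; exact ⟨w, hw, hin w hw⟩
        exact hNoIn (g x) x (hsh x) himg
      · have hout : ∀ u ∈ outSet G.E x, g u = u := by
          intro u hu
          have : G.φ u = G.φ x + 1 := G.hhom x u hu
          exact ih u (Or.inr (by omega))
        have himg : outSet G.E (g x) = outSet G.E x := by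
          rw [← G.aut_image_out hg x]
          ext w; constructor
          · rintro ⟨y, hy, rfl⟩; rwa [hout y hy]
          · intro hw; exact ⟨w, hw, hout w hw⟩
        exact hNoOut (g x) x (hsh x) himg
  intro x
  rcases le_or_gt c (G.φ x) with h | h
  · exact main (G.φ x - c).toNat x (Or.inl (by omega))
  · exact main (c - G.φ x).toNat x (Or.inr (by omega))

lemma exists_twin : ∃ u u' : V, u ≠ u' ∧ G.φ u = G.φ u' ∧
    (inSet G.E u = inSet G.E u' ∨ outSet G.E u = outSet G.E u') := by
  classical
  by_contra hno
  push_neg at hno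
  have hNoIn : ∀ x y : V, G.φ x = G.φ y → inSet G.E x = inSet G.E y → x = y := by
    intro x y h1 h2
    by_contra hne
    exact (hno x y hne h1).1 h2
  have hNoOut : ∀ x y : V, G.φ x = G.φ y → outSet G.E x = outSet G.E y → x = y := by
    intro x y h1 h2
    by_contra hne
    exact (hno x y hne h1).2 h2
  -- pick a base vertex
  obtain ⟨v0, -⟩ : ∃ v0 : V, G.φ v0 = 0 := G.hsurj 0
  set F0 : Set V := G.φ ⁻¹' {G.φ v0} with hF0
  have hF0fin : F0.Finite := G.fib_finite _
  letI : Fintype F0 := hF0fin.fintype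
  have hcardF0 : Fintype.card F0 = G.m := by
    have := G.hfib (G.φ v0)
    rwa [Set.ncard_eq_toFinset_card', Set.toFinset_card] at this
  set n : ℕ := G.m ^ G.m with hn
  -- for each s : Fin n → Bool, an automorphism mapping the base arc to the s-arc
  have harc : ∀ s : Fin n → Bool, ∃ a ∈ autGroup G.E,
      ∀ k : ℕ, k ≤ n → (a : Equiv.Perm V) (G.arcOf v0 (fun _ => false) k)
        = G.arcOf v0 (fun j => if h : j < n then s ⟨j, h⟩ else false) k := by
    intro s
    set t : ℕ → Bool := fun j => if h : j < n then s ⟨j, h⟩ else false with ht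
    have h1 : IsKArc G.E n (fun i : Fin (n+1) => G.arcOf v0 (fun _ => false) i.val) := by
      intro i
      have := G.arc_edge v0 (fun _ => false) i.val
      simpa [Fin.coe_castSucc, Fin.val_succ] using this
    have h2 : IsKArc G.E n (fun i : Fin (n+1) => G.arcOf v0 t i.val) := by
      intro i
      have := G.arc_edge v0 t i.val
      simpa [Fin.coe_castSucc, Fin.val_succ] using this
    obtain ⟨a, ha, hmap⟩ := G.hhat n _ _ h1 h2
    refine ⟨a, ha, ?_⟩
    intro k hk
    have := hmap ⟨k, by omega⟩
    simpa using this
  choose a ha hmap using harc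
  have hfix0 : ∀ s, (a s : Equiv.Perm V) v0 = v0 := by
    intro s
    have := hmap s 0 (by omega)
    simpa [arc_zero] using this
  have hsh : ∀ s, ∀ x, G.φ ((a s : Equiv.Perm V) x) = G.φ x := by
    intro s x
    exact G.shift0_of_fix (ha s) (hfix0 s) x
  -- the map to functions on F0
  have hmem : ∀ s (x : F0), (a s : Equiv.Perm V) x.val ∈ F0 := by
    intro s x
    have := hsh s x.val
    have hx := x.property
    simp only [hF0, Set.mem_preimage, Set.mem_singleton_iff] at hx ⊢
    rw [this, hx]
  set Θ : (Fin n → Bool) → (F0 → F0) := fun s x => ⟨(a s : Equiv.Perm V) x.val, hmem s x⟩ with hΘ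
  have hΘinj : Function.Injective Θ := by
    intro s tt hst
    -- a s and a tt agree on F0
    have hagree : ∀ x, G.φ x = G.φ v0 → (a s : Equiv.Perm V) x = (a tt : Equiv.Perm V) x := by
      intro x hx
      have : Θ s ⟨x, by simpa [hF0] using hx⟩ = Θ tt ⟨x, by simpa [hF0] using hx⟩ := by rw [hst]
      simpa [hΘ, Subtype.ext_iff] using this
    set g : Equiv.Perm V := (a tt : Equiv.Perm V)⁻¹ * (a s : Equiv.Perm V) with hgdef
    have hgaut : g ∈ autGroup G.E := by
      exact mul_mem (inv_mem (ha tt)) (ha s)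
    have hgsh : ∀ x, G.φ (g x) = G.φ x := by
      intro x
      have h1 := hsh s x
      have h2 := hsh tt ((a tt : Equiv.Perm V)⁻¹ ((a s : Equiv.Perm V) x))
      simp only [hgdef, Equiv.Perm.mul_apply] at *
      rw [← h1]
      have : (a tt : Equiv.Perm V) ((a tt : Equiv.Perm V)⁻¹ ((a s:Equiv.Perm V) x)) = (a s:Equiv.Perm V) x := by
        simp
      rw [this] at h2
      omega
    have hgfix : ∀ x, G.φ x = G.φ v0 → g x = x := by
      intro x hx
      simp only [hgdef, Equiv.Perm.mul_apply]
      rw [hagree x hx]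
      simp
    have hgid := G.rigid hNoIn hNoOut hgaut hgsh (G.φ v0) hgfix
    have heq : ∀ x, (a s : Equiv.Perm V) x = (a tt : Equiv.Perm V) x := by
      intro x
      have := hgid ((a s : Equiv.Perm V)⁻¹ ((a s : Equiv.Perm V) x))
      have h2 := hgid x
      simp only [hgdef, Equiv.Perm.mul_apply] at h2
      have := congrArg (a tt : Equiv.Perm V) h2
      simpa using this
    -- now the arcs coincide
    funext j
    have harceq : ∀ k, k ≤ n →
        G.arcOf v0 (fun i => if h : i < n then s ⟨i, h⟩ else false) k
          = G.arcOf v0 (fun i => if h : i < n then tt ⟨i, h⟩ else false) k := by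
      intro k hk
      rw [← hmap s k hk, ← hmap tt k hk, heq]
    have := G.arc_det v0 _ _ j.val (harceq j.val (by omega)) (harceq (j.val+1) (by omega))
    simpa [j.is_lt] using this
  have hcard := Fintype.card_le_of_injective Θ hΘinj
  rw [Fintype.card_fun, Fintype.card_fun, hcardF0, Fintype.card_bool, Fintype.card_fin] at hcard
  have := Nat.lt_two_pow_self (n := n)
  rw [hn] at *
  omega

end HATSetup
namespace HATSetup

variable {V : Type u} (G : HATSetup V)

lemma ncard2_unique {s : Set V} (h : s.ncard = 2) {a b c : V}
    (ha : a ∈ s) (hb : b ∈ s) (hc : c ∈ s) (hab : a ≠ b) (hac : a ≠ c) : b = c := by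
  obtain ⟨x, y, hxy, rfl⟩ := Set.ncard_eq_two.mp h
  simp only [Set.mem_insert_iff, Set.mem_singleton_iff] at ha hb hc
  rcases ha with rfl | rfl <;> rcases hb with rfl | rfl <;> rcases hc with rfl | rfl <;> tauto

lemma pair_eq_of_subset {a b : V} (hab : a ≠ b) {s : Set V} (hs : s.ncard = 2)
    (hfin : s.Finite) (ha : a ∈ s) (hb : b ∈ s) : s = {a, b} := by
  have hsub : ({a, b} : Set V) ⊆ s := by
    intro x hx
    rcases hx with rfl | hx
    · exact ha
    · simp only [Set.mem_singleton_iff] at hx; subst hx; exact hb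
  exact (Set.eq_of_subset_of_ncard_le hsub (by rw [hs, Set.ncard_pair hab]) hfin).symm

lemma exists_outpair : ∃ u u' : V, u ≠ u' ∧ outSet G.E u = outSet G.E u' := by
  obtain ⟨u, u', hne, hlev, h | h⟩ := G.exists_twin
  · -- in-twins: get out-twins
    obtain ⟨p, hpne, hp⟩ := G.in_two u
    have ha : G.E p.1 u := by
      have : p.1 ∈ inSet G.E u := by rw [hp]; left; rfl
      exact this
    have hb : G.E p.2 u := by
      have : p.2 ∈ inSet G.E u := by rw [hp]; right; rfl
      exact this
    have ha' : G.E p.1 u' := by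
      have : p.1 ∈ inSet G.E u' := by rw [← h, hp]; left; rfl
      exact this
    have hb' : G.E p.2 u' := by
      have : p.2 ∈ inSet G.E u' := by rw [← h, hp]; right; rfl
      exact this
    have h1 : outSet G.E p.1 = {u, u'} :=
      pair_eq_of_subset hne (G.hout p.1) (G.out_finite p.1) ha ha'
    have h2 : outSet G.E p.2 = {u, u'} :=
      pair_eq_of_subset hne (G.hout p.2) (G.out_finite p.2) hb hb'
    exact ⟨p.1, p.2, hpne, h1.trans h2.symm⟩
  · exact ⟨u, u', hne, h⟩

lemma outpair_everywhere (v : V) : ∃ u, u ≠ v ∧ outSet G.E u = outSet G.E v := by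
  obtain ⟨u, u', hne, hout⟩ := G.exists_outpair
  obtain ⟨a, ha, hav⟩ := G.vtrans u v
  refine ⟨(a : Equiv.Perm V) u', ?_, ?_⟩
  · intro hcon
    rw [← hav] at hcon
    exact hne ((a : Equiv.Perm V).injective hcon).symm
  · rw [← hav, ← G.aut_image_out ha, ← G.aut_image_out ha, hout]

lemma otw_exists_unique (v : V) : ∃! u, u ≠ v ∧ outSet G.E u = outSet G.E v := by
  obtain ⟨u, hne, heq⟩ := G.outpair_everywhere v
  refine ⟨u, ⟨hne, heq⟩, ?_⟩
  rintro y ⟨hyne, hyeq⟩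
  have hw : G.E v (G.fstOut v) := G.edge_fstOut v
  have hyw : G.E y (G.fstOut v) := by
    have : G.fstOut v ∈ outSet G.E y := by rw [hyeq]; exact hw
    exact this
  have huw : G.E u (G.fstOut v) := by
    have : G.fstOut v ∈ outSet G.E u := by rw [heq]; exact hw
    exact this
  exact ncard2_unique (G.hin (G.fstOut v)) hw hyw huw (Ne.symm hyne) (Ne.symm hne)

noncomputable def otw (v : V) : V := (G.otw_exists_unique v).choose

lemma otw_ne (v : V) : G.otw v ≠ v := (G.otw_exists_unique v).choose_spec.1.1
lemma out_otw (v : V) : outSet G.E (G.otw v) = outSet G.E v :=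
  (G.otw_exists_unique v).choose_spec.1.2
lemma otw_unique {u v : V} (hne : u ≠ v) (h : outSet G.E u = outSet G.E v) : u = G.otw v :=
  ((G.otw_exists_unique v).choose_spec.2 u ⟨hne, h⟩).trans rfl

lemma otw_invol (v : V) : G.otw (G.otw v) = v :=
  (G.otw_unique (G.otw_ne v).symm (G.out_otw v).symm).symm

lemma otw_level (v : V) : G.φ (G.otw v) = G.φ v := by
  have h1 : G.E (G.otw v) (G.fstOut v) := by
    have : G.fstOut v ∈ outSet G.E (G.otw v) := by rw [G.out_otw]; exact G.edge_fstOut v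
    exact this
  have h2 := G.hhom _ _ h1
  have h3 := G.hhom _ _ (G.edge_fstOut v)
  omega

lemma edge_otw {v w : V} (h : G.E v w) : G.E (G.otw v) w := by
  have : w ∈ outSet G.E (G.otw v) := by rw [G.out_otw]; exact h
  exact this

lemma lem_inw {v w : V} (h : G.E v w) : inSet G.E w = {v, G.otw v} :=
  pair_eq_of_subset (G.otw_ne v).symm (G.hin w) (G.in_finite w) h (G.edge_otw h)

-- in-twins
lemma inpair_everywhere (v : V) : ∃ u, u ≠ v ∧ inSet G.E u = inSet G.E v := by
  obtain ⟨p, hpv⟩ := G.in_nonempty v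
  have hv : v ∈ outSet G.E p := hpv
  rw [G.outSet_eq_pair] at hv
  rcases hv with hv | hv
  · refine ⟨G.sndOut p, ?_, ?_⟩
    · rw [hv]; exact (G.fstOut_ne_sndOut p).symm
    · rw [G.lem_inw (G.edge_sndOut p), G.lem_inw hpv]
  · simp only [Set.mem_singleton_iff] at hv
    refine ⟨G.fstOut p, ?_, ?_⟩
    · rw [hv]; exact G.fstOut_ne_sndOut p
    · rw [G.lem_inw (G.edge_fstOut p), G.lem_inw hpv]

lemma itw_exists_unique (v : V) : ∃! u, u ≠ v ∧ inSet G.E u = inSet G.E v := by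
  obtain ⟨u, hne, heq⟩ := G.inpair_everywhere v
  refine ⟨u, ⟨hne, heq⟩, ?_⟩
  rintro y ⟨hyne, hyeq⟩
  obtain ⟨p, hpv⟩ := G.in_nonempty v
  have hyw : G.E p y := by
    have : p ∈ inSet G.E y := by rw [hyeq]; exact hpv
    exact this
  have huw : G.E p u := by
    have : p ∈ inSet G.E u := by rw [heq]; exact hpv
    exact this
  exact ncard2_unique (G.hout p) hpv hyw huw (Ne.symm hyne) (Ne.symm hne)

noncomputable def itw (v : V) : V := (G.itw_exists_unique v).choose

lemma itw_ne (v : V) : G.itw v ≠ v := (G.itw_exists_unique v).choose_spec.1.1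
lemma in_itw (v : V) : inSet G.E (G.itw v) = inSet G.E v :=
  (G.itw_exists_unique v).choose_spec.1.2
lemma itw_unique {u v : V} (hne : u ≠ v) (h : inSet G.E u = inSet G.E v) : u = G.itw v :=
  ((G.itw_exists_unique v).choose_spec.2 u ⟨hne, h⟩).trans rfl

lemma itw_invol (v : V) : G.itw (G.itw v) = v :=
  (G.itw_unique (G.itw_ne v).symm (G.in_itw v).symm).symm

lemma itw_level (v : V) : G.φ (G.itw v) = G.φ v := by
  obtain ⟨p, hpv⟩ := G.in_nonempty v
  have h1 : G.E p (G.itw v) := by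
    have : p ∈ inSet G.E (G.itw v) := by rw [G.in_itw]; exact hpv
    exact this
  have h2 := G.hhom _ _ h1
  have h3 := G.hhom _ _ hpv
  omega

lemma edge_itw {v w : V} (h : G.E v w) : G.E v (G.itw w) := by
  have : v ∈ inSet G.E (G.itw w) := by rw [G.in_itw]; exact h
  exact this

lemma lem_outv {v w : V} (h : G.E v w) : outSet G.E v = {w, G.itw w} :=
  pair_eq_of_subset (G.itw_ne w).symm (G.hout v) (G.out_finite v) h (G.edge_itw h)

lemma aut_otw {a : Equiv.Perm V} (ha : a ∈ autGroup G.E) (v : V) :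
    a (G.otw v) = G.otw (a v) := by
  apply G.otw_unique
  · intro hcon
    exact G.otw_ne v (a.injective hcon)
  · rw [← G.aut_image_out ha, ← G.aut_image_out ha, G.out_otw]

lemma aut_itw {a : Equiv.Perm V} (ha : a ∈ autGroup G.E) (v : V) :
    a (G.itw v) = G.itw (a v) := by
  apply G.itw_unique
  · intro hcon
    exact G.itw_ne v (a.injective hcon)
  · rw [← G.aut_image_in ha, ← G.aut_image_in ha, G.in_itw]

end HATSetup
namespace HATSetup

variable {V : Type u} (G : HATSetup V)

def upS (v0 : V) : ℕ → Set V
  | 0 => {v0, G.otw v0}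
  | n+1 => {y | ∃ x ∈ upS v0 n, G.E x y}

def downS (v0 : V) : ℕ → Set V
  | 0 => {v0, G.otw v0}
  | n+1 => {y | ∃ x ∈ downS v0 n, G.E y x}

lemma up_level (v0 : V) : ∀ n, ∀ x ∈ G.upS v0 n, G.φ x = G.φ v0 + n := by
  intro n
  induction n with
  | zero =>
    rintro x (rfl | hx)
    · simp
    · simp only [Set.mem_singleton_iff] at hx; subst hx
      simp [G.otw_level]
  | succ n ih =>
    rintro x ⟨y, hy, hxy⟩
    have := G.hhom _ _ hxy
    have := ih y hy
    push_cast
    omega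

lemma down_level (v0 : V) : ∀ n, ∀ x ∈ G.downS v0 n, G.φ x = G.φ v0 - n := by
  intro n
  induction n with
  | zero =>
    rintro x (rfl | hx)
    · simp
    · simp only [Set.mem_singleton_iff] at hx; subst hx
      simp [G.otw_level]
  | succ n ih =>
    rintro x ⟨y, hy, hxy⟩
    have := G.hhom _ _ hxy
    have := ih y hy
    push_cast
    omega

lemma up_tw (halign : ∀ v : V, G.itw v = G.otw v) (v0 : V) : ∀ n, ∀ x ∈ G.upS v0 n, G.otw x ∈ G.upS v0 n := by
  intro n
  induction n with
  | zero =>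
    rintro x (rfl | hx)
    · right; rfl
    · simp only [Set.mem_singleton_iff] at hx; subst hx
      left; exact (G.otw_invol v0).symm ▸ (G.otw_invol v0)
  | succ n ih =>
    rintro x ⟨y, hy, hxy⟩
    refine ⟨y, hy, ?_⟩
    rw [← halign]
    exact G.edge_itw hxy

lemma down_tw (v0 : V) : ∀ n, ∀ x ∈ G.downS v0 n, G.otw x ∈ G.downS v0 n := by
  intro n
  induction n with
  | zero =>
    rintro x (rfl | hx)
    · right; rfl
    · simp only [Set.mem_singleton_iff] at hx; subst hx
      left; exact G.otw_invol v0
  | succ n ih =>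
    rintro x ⟨y, hy, hxy⟩
    exact ⟨y, hy, G.edge_otw hxy⟩

lemma up_in (halign : ∀ v : V, G.itw v = G.otw v) (v0 : V) (n : ℕ) {x : V} (hx : x ∈ G.upS v0 (n+1)) :
    inSet G.E x ⊆ G.upS v0 n := by
  obtain ⟨y, hy, hxy⟩ := hx
  rw [G.lem_inw hxy]
  rintro z (rfl | hz)
  · exact hy
  · simp only [Set.mem_singleton_iff] at hz; subst hz
    exact G.up_tw halign v0 n y hy

lemma down_out (halign : ∀ v : V, G.itw v = G.otw v) (v0 : V) (n : ℕ) {x : V} (hx : x ∈ G.downS v0 (n+1)) :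
    outSet G.E x ⊆ G.downS v0 n := by
  obtain ⟨y, hy, hxy⟩ := hx
  rw [G.lem_outv hxy, halign]
  rintro z (rfl | hz)
  · exact hy
  · simp only [Set.mem_singleton_iff] at hz; subst hz
    exact G.down_tw v0 n y hy

lemma line_closed (halign : ∀ v : V, G.itw v = G.otw v) (v0 : V) :
    ∀ y, Relation.ReflTransGen (fun a b => G.E a b ∨ G.E b a) v0 y →
      ∃ n, y ∈ G.upS v0 n ∨ y ∈ G.downS v0 n := by
  intro y hy
  induction hy with
  | refl => exact ⟨0, Or.inl (Or.inl rfl)⟩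
  | @tail b c _ hstep ih =>
    obtain ⟨n, hb | hb⟩ := ih
    · rcases hstep with h | h
      · exact ⟨n+1, Or.inl ⟨b, hb, h⟩⟩
      · match n, hb with
        | 0, hb => exact ⟨1, Or.inr ⟨b, hb, h⟩⟩
        | n+1, hb =>
          refine ⟨n, Or.inl ?_⟩
          exact G.up_in halign v0 n hb h
    · rcases hstep with h | h
      · match n, hb with
        | 0, hb => exact ⟨1, Or.inl ⟨b, hb, h⟩⟩
        | n+1, hb =>
          refine ⟨n, Or.inr ?_⟩
          exact G.down_out halign v0 n hb h
      · exact ⟨n+1, Or.inr ⟨b, hb, h⟩⟩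

lemma itw_ne_otw (hm2 : 2 < G.m) (v : V) : G.itw v ≠ G.otw v := by
  intro halignv
  -- alignment propagates everywhere
  have halign : ∀ u : V, G.itw u = G.otw u := by
    intro u
    obtain ⟨a, ha, hau⟩ := G.vtrans v u
    rw [← hau, ← G.aut_itw ha, ← G.aut_otw ha, halignv]
  -- the component of v is contained in the line through v
  set F : Set V := G.φ ⁻¹' {G.φ v} with hF
  have hnotsub : ¬ F ⊆ {v, G.otw v} := by
    intro hsub
    have h1 := Set.ncard_le_ncard hsub ((Set.finite_singleton _).insert _)
    have h2 : ({v, G.otw v} : Set V).ncard ≤ 2 := by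
      apply (Set.ncard_insert_le _ _).trans
      simp
    rw [hF, G.hfib] at h1
    omega
  obtain ⟨z, hzF, hznot⟩ := Set.not_subset.mp hnotsub
  obtain ⟨n, hz | hz⟩ := G.line_closed halign v z (G.hconn v z)
  · have := G.up_level v n z hz
    have hzlev : G.φ z = G.φ v := hzF
    have hn : n = 0 := by omega
    subst hn
    exact hznot hz
  · have := G.down_level v n z hz
    have hzlev : G.φ z = G.φ v := hzF
    have hn : n = 0 := by omega
    subst hn
    exact hznot hz

end HATSetup
namespace HATSetup

variable {V : Type u} (G : HATSetup V)

def blkSetoid : Setoid V where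
  r v w := w = v ∨ w = G.itw v
  iseqv := by
    refine ⟨fun v => Or.inl rfl, ?_, ?_⟩
    · rintro x y (rfl | rfl)
      · exact Or.inl rfl
      · right; rw [G.itw_invol]
    · rintro x y z (rfl | rfl) h
      · exact h
      · rcases h with rfl | rfl
        · exact Or.inr rfl
        · left; rw [G.itw_invol]

def QV := Quotient G.blkSetoid

def mkQ (v : V) : G.QV := Quotient.mk G.blkSetoid v

lemma mkQ_surjective : Function.Surjective G.mkQ := fun b => Quotient.exists_rep b

lemma mk_eq_iff {x y : V} : G.mkQ x = G.mkQ y ↔ (y = x ∨ y = G.itw x) := by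
  constructor
  · intro h
    exact Quotient.exact h
  · intro h
    exact Quotient.sound h

lemma mk_itw (v : V) : G.mkQ (G.itw v) = G.mkQ v := by
  rw [G.mk_eq_iff]; right; rw [G.itw_invol]

lemma in_eq_of_mk_eq {x y : V} (h : G.mkQ x = G.mkQ y) : inSet G.E x = inSet G.E y := by
  rcases G.mk_eq_iff.mp h with rfl | rfl
  · rfl
  · exact (G.in_itw x).symm

def EQ : G.QV → G.QV → Prop := fun b c => ∃ v w, G.E v w ∧ G.mkQ v = b ∧ G.mkQ w = c

lemma EQ_mk {v w : V} (h : G.E v w) : G.EQ (G.mkQ v) (G.mkQ w) := ⟨v, w, h, rfl, rfl⟩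

/-- the class of the out-neighbours of `v` -/
lemma out_mk_eq {v w w' : V} (h : G.E v w) (h' : G.E v w') : G.mkQ w = G.mkQ w' := by
  have := G.lem_outv h
  have hw' : w' ∈ outSet G.E v := h'
  rw [this] at hw'
  rcases hw' with rfl | hw'
  · rfl
  · simp only [Set.mem_singleton_iff] at hw'; subst hw'
    exact (G.mk_itw w).symm

lemma edge_iff_mk {v w : V} : G.E v w ↔ G.mkQ w = G.mkQ (G.fstOut v) := by
  constructor
  · intro h
    exact G.out_mk_eq h (G.edge_fstOut v)
  · intro h
    rcases G.mk_eq_iff.mp h with h' | h'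
    · rw [← h']; exact G.edge_fstOut v
    · have hw : w = G.itw (G.fstOut v) := by
        rw [h', G.itw_invol]
      rw [hw]
      exact G.edge_itw (G.edge_fstOut v)

lemma EQ_iff {v : V} {c : G.QV} :
    G.EQ (G.mkQ v) c ↔ ∃ w, (G.E v w ∨ G.E (G.itw v) w) ∧ G.mkQ w = c := by
  constructor
  · rintro ⟨v₁, w, hE, hv, hw⟩
    rcases G.mk_eq_iff.mp hv with h' | h'
    · subst h'; exact ⟨w, Or.inl hE, hw⟩
    · refine ⟨w, Or.inr ?_, hw⟩
      rw [h', G.itw_invol]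
      exact hE
  · rintro ⟨w, hE | hE, hw⟩
    · exact ⟨v, w, hE, rfl, hw⟩
    · exact ⟨G.itw v, w, hE, G.mk_itw v, hw⟩

lemma no_common_out (hm2 : 2 < G.m) {v w : V} (h : G.E v w) : ¬ G.E (G.itw v) w := by
  intro h'
  have h1 := G.lem_inw h
  have h2 : G.itw v ∈ inSet G.E w := h'
  rw [h1] at h2
  rcases h2 with h2 | h2
  · exact G.itw_ne v h2
  · simp only [Set.mem_singleton_iff] at h2
    exact G.itw_ne_otw hm2 v h2

-- the induced permutation on the quotient
noncomputable def qperm {a : Equiv.Perm V} (ha : a ∈ autGroup G.E) : Equiv.Perm G.QV :=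
  Quotient.congr (a : V ≃ V) (by
    intro x y
    constructor
    · rintro (rfl | rfl)
      · exact Or.inl rfl
      · right; exact G.aut_itw ha x
    · rintro h
      rcases h with h | h
      · exact Or.inl (a.injective h)
      · right
        apply a.injective
        rw [h, G.aut_itw ha])

lemma qperm_mk {a : Equiv.Perm V} (ha : a ∈ autGroup G.E) (v : V) :
    G.qperm ha (G.mkQ v) = G.mkQ (a v) := rfl

lemma qperm_aut {a : Equiv.Perm V} (ha : a ∈ autGroup G.E) :
    G.qperm ha ∈ autGroup G.EQ := by
  intro b c
  obtain ⟨v, rfl⟩ := G.mkQ_surjective b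
  obtain ⟨w, rfl⟩ := G.mkQ_surjective c
  rw [G.qperm_mk ha, G.qperm_mk ha]
  constructor
  · rintro ⟨v₁, w₁, hE, hv, hw⟩
    refine ⟨a v₁, a w₁, (ha v₁ w₁).mp hE, ?_, ?_⟩
    · rw [← G.qperm_mk ha, hv, G.qperm_mk ha]
    · rw [← G.qperm_mk ha, hw, G.qperm_mk ha]
  · rintro ⟨v₁, w₁, hE, hv, hw⟩
    refine ⟨a.symm v₁, a.symm w₁, ?_, ?_, ?_⟩
    · have := (ha (a.symm v₁) (a.symm w₁)).mpr
      simp only [Equiv.apply_symm_apply] at this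
      exact this hE
    · apply (G.qperm ha).injective
      rw [G.qperm_mk ha]
      have : a (a.symm v₁) = v₁ := a.apply_symm_apply v₁
      rw [this, hv, G.qperm_mk ha]
    · apply (G.qperm ha).injective
      rw [G.qperm_mk ha]
      have : a (a.symm w₁) = w₁ := a.apply_symm_apply w₁
      rw [this, hw, G.qperm_mk ha]
end HATSetup
namespace HATSetup

variable {V : Type u} (G : HATSetup V)

lemma lift_arc : ∀ (k : ℕ) (f' : Fin (k+1) → G.QV), IsKArc G.EQ k f' →
    ∃ f : Fin (k+1) → V, IsKArc G.E k f ∧ ∀ i, G.mkQ (f i) = f' i := by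
  intro k
  induction k with
  | zero =>
    intro f' _
    obtain ⟨v, hv⟩ := G.mkQ_surjective (f' 0)
    refine ⟨fun _ => v, fun i => i.elim0, ?_⟩
    intro i
    have h0 : i = 0 := Fin.eq_zero i
    rw [h0, hv]
  | succ k ih =>
    intro f' hf'
    have htarc : IsKArc G.EQ k (fun i => f' i.succ) := by
      intro i
      have h := hf' i.succ
      have hcs : (i.succ).castSucc = (i.castSucc).succ := by
        ext; simp
      rw [hcs] at h
      exact h
    obtain ⟨g, hgarc, hgmk⟩ := ih _ htarc
    have h01 : G.EQ (f' 0) (G.mkQ (g 0)) := by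
      have h := hf' 0
      have h1 : (0 : Fin (k+1)).castSucc = 0 := rfl
      rw [h1] at h
      have h2 : f' (Fin.succ 0) = G.mkQ (g 0) := (hgmk 0).symm
      rwa [h2] at h
    obtain ⟨v₁, w₁, hE, hv₁, hw₁⟩ := h01
    have hvg : G.E v₁ (g 0) := by
      have : v₁ ∈ inSet G.E w₁ := hE
      rw [G.in_eq_of_mk_eq hw₁] at this
      exact this
    refine ⟨Fin.cases v₁ g, ?_, ?_⟩
    · intro i
      induction i using Fin.cases with
      | zero =>
        have e1 : (0 : Fin (k+1)).castSucc = 0 := rfl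
        rw [e1]
        exact hvg
      | succ j =>
        have e1 : (j.succ).castSucc = (j.castSucc).succ := by ext; simp
        rw [e1]
        simpa using hgarc j
    · intro i
      induction i using Fin.cases with
      | zero => simpa using hv₁
      | succ j => simpa using hgmk j

def phiQ : G.QV → ℤ :=
  Quotient.lift G.φ (by
    rintro x y (rfl | rfl)
    · rfl
    · exact (G.itw_level x).symm)

lemma phiQ_mk (v : V) : G.phiQ (G.mkQ v) = G.φ v := rfl

lemma fibQ_ncard (i : ℤ) : (G.phiQ ⁻¹' {i}).ncard * 2 = G.m := by
  classical
  set F : Set V := G.φ ⁻¹' {i} with hF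
  have hFfin : F.Finite := G.fib_finite i
  set A : Finset V := hFfin.toFinset with hA
  set B : Finset G.QV := A.image G.mkQ with hB
  have hmem : ∀ x ∈ A, G.mkQ x ∈ B := by
    intro x hx
    exact Finset.mem_image_of_mem _ hx
  have hsum := Finset.card_eq_sum_card_fiberwise hmem
  have hfiber : ∀ b ∈ B, (A.filter (fun x => G.mkQ x = b)).card = 2 := by
    intro b hb
    obtain ⟨v, hv, rfl⟩ := Finset.mem_image.mp hb
    have hvF : v ∈ F := by rwa [hA, Set.Finite.mem_toFinset] at hv
    have heq : A.filter (fun x => G.mkQ x = G.mkQ v) = {v, G.itw v} := by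
      ext x
      simp only [Finset.mem_filter, Finset.mem_insert, Finset.mem_singleton]
      constructor
      · rintro ⟨hxA, hxv⟩
        rcases G.mk_eq_iff.mp hxv with h | h
        · left; rw [← h]
        · right; rw [h, G.itw_invol]
      · rintro (rfl | rfl)
        · exact ⟨hv, rfl⟩
        · constructor
          · rw [hA, Set.Finite.mem_toFinset]
            show G.φ (G.itw v) ∈ ({i} : Set ℤ)
            rw [G.itw_level]
            exact hvF
          · exact G.mk_itw v
    rw [heq]
    rw [Finset.card_insert_of_notMem (by simp [(G.itw_ne v).symm, Ne.symm (G.itw_ne v)]), Finset.card_singleton]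
  have hcardA : A.card = G.m := by
    rw [hA, ← Set.ncard_eq_toFinset_card F hFfin, hF]
    exact G.hfib i
  have hpre : G.phiQ ⁻¹' {i} = ↑B := by
    ext b
    constructor
    · intro hbp
      obtain ⟨v, rfl⟩ := G.mkQ_surjective b
      have : G.φ v = i := hbp
      refine Finset.mem_coe.mpr (Finset.mem_image_of_mem _ ?_)
      rw [hA, Set.Finite.mem_toFinset]
      exact this
    · intro hbB
      obtain ⟨v, hv, rfl⟩ := Finset.mem_image.mp (Finset.mem_coe.mp hbB)
      have hvF : v ∈ F := by rwa [hA, Set.Finite.mem_toFinset] at hv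
      exact hvF
  have hncard : (G.phiQ ⁻¹' {i}).ncard = B.card := by
    rw [hpre, Set.ncard_coe_finset]
  rw [hncard]
  rw [hsum, Finset.sum_congr rfl hfiber, Finset.sum_const, smul_eq_mul] at hcardA
  omega

noncomputable def GQ (hm2 : 2 < G.m) : HATSetup G.QV where
  E := G.EQ
  φ := G.phiQ
  m := G.m / 2
  hm := by
    have := G.fibQ_ncard 0
    omega
  hconn := by
    intro b c
    obtain ⟨v, rfl⟩ := G.mkQ_surjective b
    obtain ⟨w, rfl⟩ := G.mkQ_surjective c
    refine Relation.ReflTransGen.lift G.mkQ ?_ _ _ (G.hconn v w)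
    rintro a b (h | h)
    · exact Or.inl (G.EQ_mk h)
    · exact Or.inr (G.EQ_mk h)
  hhat := by
    intro k f' g' hf' hg'
    obtain ⟨f, hf, hfmk⟩ := G.lift_arc k f' hf'
    obtain ⟨g, hg, hgmk⟩ := G.lift_arc k g' hg'
    obtain ⟨a, ha, hmap⟩ := G.hhat k f g hf hg
    refine ⟨G.qperm ha, G.qperm_aut ha, ?_⟩
    intro i
    rw [← hfmk i, G.qperm_mk ha, hmap i, hgmk i]
  hout := by
    intro b
    obtain ⟨v, rfl⟩ := G.mkQ_surjective b
    have hset : outSet G.EQ (G.mkQ v) = {G.mkQ (G.fstOut v), G.mkQ (G.fstOut (G.itw v))} := by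
      ext c
      constructor
      · intro hc
        obtain ⟨w, hE | hE, rfl⟩ := G.EQ_iff.mp hc
        · left; exact G.out_mk_eq hE (G.edge_fstOut v)
        · right
          show G.mkQ w ∈ ({G.mkQ (G.fstOut (G.itw v))} : Set G.QV)
          rw [Set.mem_singleton_iff]
          exact G.out_mk_eq hE (G.edge_fstOut (G.itw v))
      · rintro (rfl | hc)
        · exact G.EQ_mk (G.edge_fstOut v)
        · rw [Set.mem_singleton_iff] at hc
          subst hc
          rw [← G.mk_itw v]
          exact G.EQ_mk (G.edge_fstOut (G.itw v))
    rw [hset]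
    apply Set.ncard_pair
    intro hcon
    have hins := G.in_eq_of_mk_eq hcon
    have h1 : G.E v (G.fstOut (G.itw v)) := by
      have : v ∈ inSet G.E (G.fstOut v) := G.edge_fstOut v
      rw [hins] at this
      exact this
    exact G.no_common_out hm2 h1 (G.edge_fstOut (G.itw v))
  hin := by
    intro b
    obtain ⟨w, rfl⟩ := G.mkQ_surjective b
    obtain ⟨p, hp⟩ := G.in_nonempty w
    have hset : inSet G.EQ (G.mkQ w) = {G.mkQ p, G.mkQ (G.otw p)} := by
      ext c
      constructor
      · rintro ⟨v₁, w₁, hE, rfl, hw₁⟩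
        have : v₁ ∈ inSet G.E w := by
          rw [← G.in_eq_of_mk_eq hw₁]
          exact hE
        rw [G.lem_inw hp] at this
        rcases this with rfl | h
        · left; rfl
        · right
          rw [Set.mem_singleton_iff] at h ⊢
          rw [h]
      · rintro (rfl | hc)
        · exact ⟨p, w, hp, rfl, rfl⟩
        · rw [Set.mem_singleton_iff] at hc
          subst hc
          exact ⟨G.otw p, w, G.edge_otw hp, rfl, rfl⟩
    rw [hset]
    apply Set.ncard_pair
    intro hcon
    rcases G.mk_eq_iff.mp hcon with h | h
    · exact G.otw_ne p h
    · exact G.itw_ne_otw hm2 p h.symm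
  hsurj := by
    intro i
    obtain ⟨v, hv⟩ := G.hsurj i
    exact ⟨G.mkQ v, hv⟩
  hhom := by
    rintro b c ⟨v, w, hE, rfl, rfl⟩
    exact G.hhom v w hE
  hfib := by
    intro i
    have h1 := G.fibQ_ncard i
    have h2 := G.fibQ_ncard 0
    show (G.phiQ ⁻¹' {i}).ncard = G.m / 2
    omega

end HATSetup
namespace HATSetup

variable {V : Type u} (G : HATSetup V)

lemma qtriv (hm2 : 2 < G.m) {g : Equiv.Perm V} (hg : g ∈ autGroup G.E)
    (h : ∀ v, G.mkQ (g v) = G.mkQ v) : ∀ v, g v = v := by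
  intro v
  have h1 : g v ∈ ({v, G.itw v} : Set V) := by
    rcases G.mk_eq_iff.mp (h v) with h' | h'
    · left; exact h'.symm
    · right
      rw [Set.mem_singleton_iff]
      have h2 := congrArg G.itw h'
      rw [G.itw_invol] at h2
      exact h2.symm
  have h2 : g v ∈ ({v, G.otw v} : Set V) := by
    have hEf : G.E (g v) (g (G.fstOut v)) := (hg v (G.fstOut v)).mp (G.edge_fstOut v)
    have hmk : G.mkQ (g (G.fstOut v)) = G.mkQ (G.fstOut v) := h (G.fstOut v)
    have hEf2 : G.E (g v) (G.fstOut v) := by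
      rcases G.mk_eq_iff.mp hmk with h' | h'
      · rwa [← h'] at hEf
      · have h2 := congrArg G.itw h'
        rw [G.itw_invol] at h2
        rw [← h2] at hEf
        have := G.edge_itw hEf
        rwa [G.itw_invol] at this
    have : g v ∈ inSet G.E (G.fstOut v) := hEf2
    rwa [G.lem_inw (G.edge_fstOut v)] at this
  rcases h1 with h1 | h1
  · exact h1
  · rcases h2 with h2 | h2
    · exact h2
    · exfalso
      rw [Set.mem_singleton_iff] at h1 h2
      rw [h1] at h2
      exact G.itw_ne_otw hm2 v h2

lemma shift0_inv {g : Equiv.Perm V} (h : ∀ x, G.φ (g x) = G.φ x) (x : V) :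
    G.φ (g⁻¹ x) = G.φ x := by
  have h2 := h (g⁻¹ x)
  rw [Equiv.Perm.inv_def, Equiv.apply_symm_apply] at h2
  exact h2.symm

lemma qdet (hm2 : 2 < G.m) {g1 g2 : Equiv.Perm V}
    (hg1 : g1 ∈ autGroup G.E) (hg2 : g2 ∈ autGroup G.E)
    (h : ∀ v, G.mkQ (g1 v) = G.mkQ (g2 v)) : ∀ v, g1 v = g2 v := by
  have haut : g2⁻¹ * g1 ∈ autGroup G.E := mul_mem (inv_mem hg2) hg1
  have hq : ∀ v, G.mkQ ((g2⁻¹ * g1) v) = G.mkQ v := by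
    intro v
    rcases G.mk_eq_iff.mp (h v) with h' | h'
    · show G.mkQ (g2⁻¹ (g1 v)) = G.mkQ v
      rw [← h', Equiv.Perm.inv_def, Equiv.symm_apply_apply]
    · show G.mkQ (g2⁻¹ (g1 v)) = G.mkQ v
      have : g1 v = G.itw (g2 v) := by rw [h', G.itw_invol]
      rw [this, G.aut_itw (inv_mem hg2) (g2 v), Equiv.Perm.inv_def, Equiv.symm_apply_apply]
      exact G.mk_itw v
  have := G.qtriv hm2 haut hq
  intro v
  have h2 := this v
  show g1 v = g2 v
  have : g2⁻¹ (g1 v) = v := h2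
  have := congrArg g2 this
  rwa [Equiv.Perm.inv_def, Equiv.apply_symm_apply] at this

lemma ocl_ne (hm2 : 2 < G.m) (v : V) :
    G.mkQ (G.fstOut v) ≠ G.mkQ (G.fstOut (G.itw v)) := by
  intro hcon
  have hins := G.in_eq_of_mk_eq hcon
  have h1 : G.E v (G.fstOut (G.itw v)) := by
    have : v ∈ inSet G.E (G.fstOut v) := G.edge_fstOut v
    rw [hins] at this
    exact this
  exact G.no_common_out hm2 h1 (G.edge_fstOut (G.itw v))

lemma ocl_eq {v w : V} (h : G.E v w) : G.mkQ (G.fstOut v) = G.mkQ w :=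
  (G.out_mk_eq h (G.edge_fstOut v)).symm

lemma lift_exists_unique (hm2 : 2 < G.m) {b : Equiv.Perm G.QV} (hb : b ∈ autGroup G.EQ)
    (v : V) : ∃! w : V, G.mkQ w = b (G.mkQ v) ∧
      G.mkQ (G.fstOut w) = b (G.mkQ (G.fstOut v)) := by
  have hE' : G.EQ (b (G.mkQ v)) (b (G.mkQ (G.fstOut v))) :=
    (hb _ _).mp (G.EQ_mk (G.edge_fstOut v))
  obtain ⟨u, hu⟩ := G.mkQ_surjective (b (G.mkQ v))
  rw [← hu] at hE'
  obtain ⟨w, hEw | hEw, hw⟩ := G.EQ_iff.mp hE'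
  · refine ⟨u, ⟨hu, ?_⟩, ?_⟩
    · rw [G.ocl_eq hEw, hw]
    · rintro y ⟨hy1, hy2⟩
      -- y and u are in the same block with the same out-class
      have hyu : G.mkQ y = G.mkQ u := by rw [hy1, hu]
      rcases G.mk_eq_iff.mp hyu with h' | h'
      · exact h'.symm ▸ rfl
      · exfalso
        have : G.mkQ (G.fstOut y) = G.mkQ (G.fstOut u) := by
          rw [hy2, G.ocl_eq hEw, hw]
        rw [h'] at this
        exact G.ocl_ne hm2 y (by rw [← h'] at this ⊢; exact this.symm ▸ rfl)
  · refine ⟨G.itw u, ⟨by rw [G.mk_itw, hu], ?_⟩, ?_⟩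
    · rw [G.ocl_eq hEw, hw]
    · rintro y ⟨hy1, hy2⟩
      have hyu : G.mkQ y = G.mkQ (G.itw u) := by rw [hy1, G.mk_itw, hu]
      rcases G.mk_eq_iff.mp hyu with h' | h'
      · exact h'.symm ▸ rfl
      · exfalso
        have hfst : G.mkQ (G.fstOut y) = G.mkQ (G.fstOut (G.itw u)) := by
          rw [hy2, G.ocl_eq hEw, hw]
        have hyitw : y = G.itw (G.itw u) := by rw [h', G.itw_invol]
        rw [hyitw] at hfst
        exact G.ocl_ne hm2 (G.itw u) hfst.symm

end HATSetup
namespace HATSetup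

open Cardinal

variable {V : Type u} (G : HATSetup V)

def A0T (G : HATSetup V) := {g : Equiv.Perm V // g ∈ autGroup G.E ∧ ∀ x, G.φ (g x) = G.φ x}

def EA2 (G : HATSetup V) : Prop :=
  ∀ g : Equiv.Perm V, g ∈ autGroup G.E → (∀ x, G.φ (g x) = G.φ x) →
    (∀ x, g (g x) = x) ∧
    ∀ h : Equiv.Perm V, h ∈ autGroup G.E → (∀ x, G.φ (h x) = G.φ x) →
      ∀ x, g (h x) = h (g x)

noncomputable def liftFun (hm2 : 2 < G.m) {b : Equiv.Perm G.QV} (hb : b ∈ autGroup G.EQ) :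
    V → V := fun v => (G.lift_exists_unique hm2 hb v).choose

lemma liftFun_mk (hm2 : 2 < G.m) {b : Equiv.Perm G.QV} (hb : b ∈ autGroup G.EQ) (v : V) :
    G.mkQ (G.liftFun hm2 hb v) = b (G.mkQ v) :=
  (G.lift_exists_unique hm2 hb v).choose_spec.1.1

lemma liftFun_fst (hm2 : 2 < G.m) {b : Equiv.Perm G.QV} (hb : b ∈ autGroup G.EQ) (v : V) :
    G.mkQ (G.fstOut (G.liftFun hm2 hb v)) = b (G.mkQ (G.fstOut v)) :=
  (G.lift_exists_unique hm2 hb v).choose_spec.1.2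

lemma liftFun_char (hm2 : 2 < G.m) {b : Equiv.Perm G.QV} (hb : b ∈ autGroup G.EQ) (v w : V)
    (h1 : G.mkQ w = b (G.mkQ v)) (h2 : G.mkQ (G.fstOut w) = b (G.mkQ (G.fstOut v))) :
    w = G.liftFun hm2 hb v :=
  (G.lift_exists_unique hm2 hb v).choose_spec.2 w ⟨h1, h2⟩

lemma liftFun_inv (hm2 : 2 < G.m) {b : Equiv.Perm G.QV} (hb : b ∈ autGroup G.EQ) (v : V) :
    G.liftFun hm2 (inv_mem hb) (G.liftFun hm2 hb v) = v := by
  symm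
  apply G.liftFun_char hm2 (inv_mem hb)
  · rw [G.liftFun_mk hm2 hb v]
    show G.mkQ v = b⁻¹ _
    rw [Equiv.Perm.inv_def, Equiv.symm_apply_apply]
  · rw [G.liftFun_fst hm2 hb v]
    show G.mkQ (G.fstOut v) = b⁻¹ _
    rw [Equiv.Perm.inv_def, Equiv.symm_apply_apply]

noncomputable def liftPerm (hm2 : 2 < G.m) {b : Equiv.Perm G.QV} (hb : b ∈ autGroup G.EQ) :
    Equiv.Perm V where
  toFun := G.liftFun hm2 hb
  invFun := G.liftFun hm2 (inv_mem hb)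
  left_inv := G.liftFun_inv hm2 hb
  right_inv := by
    intro v
    symm
    apply G.liftFun_char hm2 hb
    · rw [G.liftFun_mk hm2 (inv_mem hb) v]
      exact (Equiv.apply_symm_apply b (G.mkQ v)).symm
    · rw [G.liftFun_fst hm2 (inv_mem hb) v]
      exact (Equiv.apply_symm_apply b _).symm

lemma liftPerm_aut (hm2 : 2 < G.m) {b : Equiv.Perm G.QV} (hb : b ∈ autGroup G.EQ) :
    G.liftPerm hm2 hb ∈ autGroup G.E := by
  intro v w
  show G.E v w ↔ G.E (G.liftFun hm2 hb v) (G.liftFun hm2 hb w)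
  rw [G.edge_iff_mk (v := v) (w := w),
    G.edge_iff_mk (v := G.liftFun hm2 hb v) (w := G.liftFun hm2 hb w),
    G.liftFun_mk hm2 hb w, G.liftFun_fst hm2 hb v]
  exact ⟨fun h => by rw [h], fun h => b.injective h⟩

lemma liftPerm_shift (hm2 : 2 < G.m) {b : Equiv.Perm G.QV} (hb : b ∈ autGroup G.EQ)
    (hbsh : ∀ c, G.phiQ (b c) = G.phiQ c) (x : V) :
    G.φ (G.liftPerm hm2 hb x) = G.φ x := by
  have h1 : G.φ (G.liftFun hm2 hb x) = G.phiQ (G.mkQ (G.liftFun hm2 hb x)) := rfl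
  show G.φ (G.liftFun hm2 hb x) = G.φ x
  rw [h1, G.liftFun_mk hm2 hb x, hbsh]
  rfl

lemma countableV (G' : HATSetup V) : Countable V := by
  have huniv : (Set.univ : Set V) ⊆ ⋃ i : ℤ, (G'.φ ⁻¹' {i}) := by
    intro x _
    exact Set.mem_iUnion.mpr ⟨G'.φ x, rfl⟩
  have hc : (Set.univ : Set V).Countable :=
    Set.Countable.mono huniv (Set.countable_iUnion fun i => (G'.fib_finite i).countable)
  exact Set.countable_univ_iff.mp hc

lemma A0T_le : #G.A0T ≤ Cardinal.continuum.{u} := by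
  have : Countable V := countableV G
  have h1 : #G.A0T ≤ #(V → V) := by
    apply Cardinal.mk_le_of_injective (f := fun g : G.A0T => (g.val : V → V))
    intro g h hgh
    exact Subtype.ext (Equiv.coe_fn_injective hgh)
  have h2 : #(V → V) ≤ Cardinal.continuum.{u} := by
    rw [← Cardinal.power_def]
    calc #V ^ #V ≤ Cardinal.aleph0.{u} ^ #V :=
          Cardinal.power_le_power_right Cardinal.mk_le_aleph0
      _ ≤ Cardinal.aleph0.{u} ^ Cardinal.aleph0.{u} :=
          Cardinal.power_le_power_left Cardinal.aleph0_ne_zero Cardinal.mk_le_aleph0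
      _ = 2 ^ Cardinal.aleph0.{u} := Cardinal.power_self_eq le_rfl
      _ = Cardinal.continuum.{u} := Cardinal.two_power_aleph0
  exact h1.trans h2

lemma A0Q_le (hm2 : 2 < G.m) : #(G.GQ hm2).A0T ≤ #G.A0T := by
  have hinj : ∀ bp : (G.GQ hm2).A0T, ∃ gp : G.A0T,
      ∀ v : V, G.mkQ (gp.val v) = bp.val (G.mkQ v) := by
    rintro ⟨b, hb, hbsh⟩
    refine ⟨⟨G.liftPerm hm2 hb, G.liftPerm_aut hm2 hb, G.liftPerm_shift hm2 hb hbsh⟩, ?_⟩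
    intro v
    exact G.liftFun_mk hm2 hb v
  choose Φ hΦ using hinj
  apply Cardinal.mk_le_of_injective (f := Φ)
  intro b b' hbb
  apply Subtype.ext
  apply Equiv.ext
  intro c
  obtain ⟨v, rfl⟩ := G.mkQ_surjective c
  rw [← hΦ b v, ← hΦ b' v, hbb]

end HATSetup
namespace HATSetup

open Cardinal

variable {V : Type u} (G : HATSetup V)

lemma base_edge_iff (hb : G.m = 2) (u w : V) : G.E u w ↔ G.φ w = G.φ u + 1 := by
  constructor
  · exact G.hhom u w
  · intro hw
    have hsub := G.out_sub_fib u
    have heq : outSet G.E u = G.φ ⁻¹' {G.φ u + 1} :=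
      Set.eq_of_subset_of_ncard_le hsub (by rw [G.hfib, G.hout, hb]) (G.fib_finite _)
    have : w ∈ outSet G.E u := by
      rw [heq]
      exact hw
    exact this

lemma base_other (hb : G.m = 2) {x y : V} (h : G.φ y = G.φ x) : y = x ∨ y = G.itw x := by
  have hpair : G.φ ⁻¹' {G.φ x} = {x, G.itw x} := by
    apply pair_eq_of_subset (G.itw_ne x).symm
    · rw [G.hfib, hb]
    · exact G.fib_finite _
    · rfl
    · exact G.itw_level x
  have hy : y ∈ G.φ ⁻¹' {G.φ x} := h
  rw [hpair] at hy
  rcases hy with h' | h'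
  · exact Or.inl h'
  · exact Or.inr h'

lemma fix_other (hb : G.m = 2) {g : Equiv.Perm V} (hgsh : ∀ x, G.φ (g x) = G.φ x)
    {x : V} (h1 : g x = x) : g (G.itw x) = G.itw x := by
  have hlev : G.φ (g (G.itw x)) = G.φ x := by rw [hgsh, G.itw_level]
  rcases G.base_other hb hlev with h | h
  · exact absurd (g.injective (h.trans h1.symm)) (G.itw_ne x)
  · exact h

lemma move_other (hb : G.m = 2) {g : Equiv.Perm V} (hgsh : ∀ x, G.φ (g x) = G.φ x)
    {x : V} (h1 : g x = G.itw x) : g (G.itw x) = x := by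
  have hlev : G.φ (g (G.itw x)) = G.φ x := by rw [hgsh, G.itw_level]
  rcases G.base_other hb hlev with h | h
  · exact h
  · exact absurd (g.injective (h.trans h1.symm)) (G.itw_ne x)

lemma base_EA2 (hb : G.m = 2) : G.EA2 := by
  intro g hg hgsh
  constructor
  · intro x
    rcases G.base_other hb (hgsh x) with h1 | h1
    · rw [h1, h1]
    · rw [h1, G.move_other hb hgsh h1]
  · intro h hh hhsh x
    rcases G.base_other hb (hgsh x) with h1 | h1 <;>
      rcases G.base_other hb (hhsh x) with h2 | h2
    · rw [h2, h1, h2]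
    · rw [h2, h1, G.fix_other hb hgsh h1]
      exact h2.symm
    · rw [h2, h1]
      exact (G.fix_other hb hhsh h2).symm
    · rw [h2, h1, G.move_other hb hgsh h1, G.move_other hb hhsh h2]

noncomputable def baseSwap (hb : G.m = 2) (s : ℤ → Bool) : Equiv.Perm V :=
  Function.Involutive.toPerm (fun x => if s (G.φ x) then G.itw x else x) (by
    intro x
    by_cases h : s (G.φ x) = true
    · simp only [h, if_true]
      rw [if_pos (by rw [G.itw_level]; exact h), G.itw_invol]
    · simp only [if_neg h])

lemma baseSwap_apply (hb : G.m = 2) (s : ℤ → Bool) (x : V) :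
    G.baseSwap hb s x = if s (G.φ x) then G.itw x else x := rfl

lemma baseSwap_level (hb : G.m = 2) (s : ℤ → Bool) (x : V) :
    G.φ (G.baseSwap hb s x) = G.φ x := by
  rw [baseSwap_apply]
  by_cases h : s (G.φ x) = true
  · rw [if_pos h, G.itw_level]
  · rw [if_neg h]

lemma baseSwap_aut (hb : G.m = 2) (s : ℤ → Bool) : G.baseSwap hb s ∈ autGroup G.E := by
  intro u w
  rw [G.base_edge_iff hb, G.base_edge_iff hb, G.baseSwap_level hb s, G.baseSwap_level hb s]

lemma base_card (hb : G.m = 2) : #G.A0T = Cardinal.continuum.{u} := by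
  refine le_antisymm G.A0T_le ?_
  have hinj : Function.Injective (fun s : ULift.{u} (ℤ → Bool) =>
      (⟨G.baseSwap hb s.down, G.baseSwap_aut hb s.down, G.baseSwap_level hb s.down⟩ : G.A0T)) := by
    intro s t hst
    apply ULift.ext
    funext i
    by_contra hne
    obtain ⟨v, hv⟩ := G.hsurj i
    have h1 : G.baseSwap hb s.down v = G.baseSwap hb t.down v := by
      have := congrArg Subtype.val hst
      exact congrFun (congrArg (fun (e : Equiv.Perm V) => (e : V → V)) this) v
    rw [G.baseSwap_apply, G.baseSwap_apply, hv] at h1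
    rcases Bool.eq_false_or_eq_true (s.down i) with h | h <;>
      rcases Bool.eq_false_or_eq_true (t.down i) with h' | h' <;>
        simp [h, h'] at h1 hne
    all_goals first
      | exact G.itw_ne v h1
      | exact G.itw_ne v h1.symm
  have hle := Cardinal.mk_le_of_injective hinj
  rw [Cardinal.mk_uLift] at hle
  have hmk : #(ℤ → Bool) = Cardinal.continuum.{0} := by
    rw [← Cardinal.power_def Bool ℤ, Cardinal.mk_bool, Cardinal.mk_int,
      Cardinal.two_power_aleph0]
  rw [hmk, Cardinal.lift_continuum] at hle
  exact hle

lemma qperm_shift {g : Equiv.Perm V} (hg : g ∈ autGroup G.E)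
    (hgsh : ∀ x, G.φ (g x) = G.φ x) (c : G.QV) :
    G.phiQ ((G.qperm hg) c) = G.phiQ c := by
  obtain ⟨v, rfl⟩ := G.mkQ_surjective c
  rw [G.qperm_mk hg]
  exact hgsh v

theorem key : ∀ (n : ℕ) {V : Type u} (G : HATSetup V), G.m = n →
    G.EA2 ∧ #G.A0T = Cardinal.continuum.{u} := by
  intro n
  induction n using Nat.strong_induction_on with
  | _ n ih =>
    intro V G hn
    by_cases hb : G.m = 2
    · exact ⟨G.base_EA2 hb, G.base_card hb⟩
    · have hm2 : 2 < G.m := lt_of_le_of_ne G.hm (Ne.symm hb)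
      have hmeq : (G.GQ hm2).m = G.m / 2 := rfl
      have hlt : (G.GQ hm2).m < n := by
        rw [hmeq]
        omega
      obtain ⟨hEAQ, hcardQ⟩ := ih _ hlt (G.GQ hm2) rfl
      constructor
      · intro g hg hgsh
        have hq : G.qperm hg ∈ autGroup (G.GQ hm2).E := G.qperm_aut hg
        have hqsh : ∀ c, (G.GQ hm2).φ ((G.qperm hg) c) = (G.GQ hm2).φ c :=
          G.qperm_shift hg hgsh
        obtain ⟨hsq, hcomm⟩ := hEAQ (G.qperm hg) hq hqsh
        constructor
        · have hmul : (g * g) ∈ autGroup G.E := mul_mem hg hg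
          have hq2 : ∀ v, G.mkQ ((g * g) v) = G.mkQ v := by
            intro v
            have h := hsq (G.mkQ v)
            simp only [G.qperm_mk hg] at h
            simpa [Equiv.Perm.mul_apply] using h
          intro x
          have := G.qtriv hm2 hmul hq2 x
          simpa [Equiv.Perm.mul_apply] using this
        · intro h hh hhsh
          have hqh : G.qperm hh ∈ autGroup (G.GQ hm2).E := G.qperm_aut hh
          have hqhsh : ∀ c, (G.GQ hm2).φ ((G.qperm hh) c) = (G.GQ hm2).φ c :=
            G.qperm_shift hh hhsh
          have hcm := hcomm (G.qperm hh) hqh hqhsh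
          have h1 : (g * h) ∈ autGroup G.E := mul_mem hg hh
          have h2 : (h * g) ∈ autGroup G.E := mul_mem hh hg
          have hq3 : ∀ v, G.mkQ ((g * h) v) = G.mkQ ((h * g) v) := by
            intro v
            have hc := hcm (G.mkQ v)
            simp only [G.qperm_mk hg, G.qperm_mk hh] at hc
            simpa [Equiv.Perm.mul_apply] using hc
          intro x
          have := G.qdet hm2 h1 h2 hq3 x
          simpa [Equiv.Perm.mul_apply] using this
      · refine le_antisymm G.A0T_le ?_
        calc Cardinal.continuum.{u} = #(G.GQ hm2).A0T := hcardQ.symm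
          _ ≤ #G.A0T := G.A0Q_le hm2

end HATSetup
section DeriveIn

variable {V : Type u}

lemma derive_hin (E : V → V → Prop) (φ : V → ℤ)
    (hhat : HighlyArcTransitive E)
    (hout : ∀ v, (outSet E v).ncard = 2)
    (hhom : ∀ u v, E u v → φ v = φ u + 1)
    (m : ℕ) (hm : 2 < m) (hfib : ∀ i, (φ ⁻¹' {i}).ncard = m) :
    ∀ v, (inSet E v).ncard = 2 := by
  classical
  have fib_fin : ∀ i : ℤ, (φ ⁻¹' {i}).Finite := by
    intro i
    by_contra h
    have := Set.Infinite.ncard (by simpa using h)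
    rw [hfib i] at this
    omega
  have out_sub : ∀ v, outSet E v ⊆ φ ⁻¹' {φ v + 1} := by
    intro v w hw
    exact hhom v w hw
  have in_sub : ∀ v, inSet E v ⊆ φ ⁻¹' {φ v - 1} := by
    intro v w hw
    have := hhom w v hw
    simp only [Set.mem_preimage, Set.mem_singleton_iff]
    omega
  have out_fin : ∀ v, (outSet E v).Finite := fun v => (fib_fin _).subset (out_sub v)
  have in_fin : ∀ v, (inSet E v).Finite := fun v => (fib_fin _).subset (in_sub v)
  -- in-valency is constant
  have vtrans : ∀ u v : V, ∃ a ∈ autGroup E, (a : Equiv.Perm V) u = v := by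
    intro u v
    obtain ⟨a, ha, haeq⟩ := hhat 0 (fun _ => u) (fun _ => v)
      (fun i => i.elim0) (fun i => i.elim0)
    exact ⟨a, ha, haeq 0⟩
  have in_const : ∀ u v : V, (inSet E u).ncard = (inSet E v).ncard := by
    intro u v
    obtain ⟨a, ha, rfl⟩ := vtrans u v
    have himg : a '' inSet E u = inSet E (a u) := by
      ext w
      constructor
      · rintro ⟨x, hx, rfl⟩
        exact (ha x u).mp hx
      · intro hw
        refine ⟨a.symm w, ?_, by simp⟩
        have hw' : E (a (a.symm w)) (a u) := by
          rwa [Equiv.apply_symm_apply]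
        exact (ha (a.symm w) u).mpr hw'
    rw [← himg, Set.ncard_image_of_injective _ a.injective]
  intro v
  set c : ℕ := (inSet E v).ncard with hc
  -- double counting between levels (φ v) and (φ v + 1)
  set i : ℤ := φ v - 1 with hi
  set A : Finset V := (fib_fin i).toFinset with hA
  set B : Finset V := (fib_fin (i+1)).toFinset with hB
  set P : Finset (V × V) := (A ×ˢ B).filter (fun p => E p.1 p.2) with hP
  have hmemA : ∀ p ∈ P, p.1 ∈ A := by
    intro p hp
    rw [hP, Finset.mem_filter, Finset.mem_product] at hp
    exact hp.1.1
  have hmemB : ∀ p ∈ P, p.2 ∈ B := by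
    intro p hp
    rw [hP, Finset.mem_filter, Finset.mem_product] at hp
    exact hp.1.2
  have h1 := Finset.card_eq_sum_card_fiberwise (f := Prod.fst) (s := P) (t := A) hmemA
  have h2 := Finset.card_eq_sum_card_fiberwise (f := Prod.snd) (s := P) (t := B) hmemB
  have hfibA : ∀ a ∈ A, (P.filter (fun p => p.1 = a)).card = 2 := by
    intro a haA
    have heq : P.filter (fun p => p.1 = a)
        = (out_fin a).toFinset.image (fun b => (a, b)) := by
      ext p
      simp only [hP, Finset.mem_filter, Finset.mem_product, Finset.mem_image,
        Set.Finite.mem_toFinset]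
      constructor
      · rintro ⟨⟨⟨_, hpB⟩, hpE⟩, hfst⟩
        exact ⟨p.2, by rwa [← hfst], by rw [← hfst]⟩
      · rintro ⟨b, hb, rfl⟩
        have hlev : φ b = i + 1 := by
          have := hhom a b hb
          have haF : φ a = i := by
            rw [hA, Set.Finite.mem_toFinset] at haA
            exact haA
          omega
        refine ⟨⟨⟨haA, ?_⟩, hb⟩, rfl⟩
        rw [hB, Set.Finite.mem_toFinset]
        exact hlev
    rw [heq, Finset.card_image_of_injective _ (by intro x y h; simpa using h)]
    rw [← Set.ncard_eq_toFinset_card _ (out_fin a)]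
    exact hout a
  have hfibB : ∀ b ∈ B, (P.filter (fun p => p.2 = b)).card = c := by
    intro b hbB
    have heq : P.filter (fun p => p.2 = b)
        = (in_fin b).toFinset.image (fun a => (a, b)) := by
      ext p
      simp only [hP, Finset.mem_filter, Finset.mem_product, Finset.mem_image,
        Set.Finite.mem_toFinset]
      constructor
      · rintro ⟨⟨⟨hpA, _⟩, hpE⟩, hsnd⟩
        exact ⟨p.1, by rwa [← hsnd], by rw [← hsnd]⟩
      · rintro ⟨a, ha, rfl⟩
        have hlev : φ a = i := by
          have := hhom a b ha
          have hbF : φ b = i + 1 := by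
            rw [hB, Set.Finite.mem_toFinset] at hbB
            exact hbB
          omega
        refine ⟨⟨⟨?_, hbB⟩, ha⟩, rfl⟩
        rw [hA, Set.Finite.mem_toFinset]
        exact hlev
    rw [heq, Finset.card_image_of_injective _ (by intro x y h; simpa using h)]
    rw [← Set.ncard_eq_toFinset_card _ (in_fin b)]
    exact in_const b v
  have hcardA : A.card = m := by
    rw [hA, ← Set.ncard_eq_toFinset_card _ (fib_fin i)]
    exact hfib i
  have hcardB : B.card = m := by
    rw [hB, ← Set.ncard_eq_toFinset_card _ (fib_fin (i+1))]
    exact hfib (i+1)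
  rw [Finset.sum_congr rfl hfibA, Finset.sum_const, smul_eq_mul, hcardA] at h1
  rw [Finset.sum_congr rfl hfibB, Finset.sum_const, smul_eq_mul, hcardB] at h2
  rw [h1] at h2
  -- m * 2 = m * c
  have : c = 2 := by
    have hm0 : m ≠ 0 := by omega
    exact (Nat.eq_of_mul_eq_mul_left (by omega) h2.symm)
  rw [hc] at this
  exact this

end DeriveIn

open Cardinal

universe w

lemma rank_continuum_of_mk {M : Type w} [AddCommGroup M] [Module (ZMod 2) M]
    (h : #M = Cardinal.continuum.{w}) :
    Module.rank (ZMod 2) M = Cardinal.continuum.{w} := by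
  classical
  set ι := Module.Basis.ofVectorSpaceIndex (ZMod 2) M with hι
  have b : Module.Basis ι (ZMod 2) M := Module.Basis.ofVectorSpace (ZMod 2) M
  rw [← b.mk_eq_rank'']
  have hM : #M = #(ι →₀ ZMod 2) := Cardinal.mk_congr b.repr.toEquiv
  cases finite_or_infinite ι with
  | inl hfin =>
    exfalso
    have hemb : #(ι →₀ ZMod 2) ≤ #(ι → ZMod 2) :=
      Cardinal.mk_le_of_injective (f := fun f => (f : ι → ZMod 2))
        (fun f g hfg => Finsupp.ext fun a => congrFun hfg a)
    have hlt : #M < ℵ₀ := by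
      rw [hM]
      exact lt_of_le_of_lt hemb (Cardinal.lt_aleph0_of_finite _)
    rw [h] at hlt
    exact absurd hlt (not_lt.mpr Cardinal.aleph0_le_continuum)
  | inr hinf =>
    have hfs := Cardinal.mk_finsupp_lift_of_infinite ι (ZMod 2)
    have h2 : #(ZMod 2) = 2 := by
      simp [Cardinal.mk_fintype]
    rw [h2] at hfs
    rw [hfs] at hM
    simp only [Cardinal.lift_uzero, Cardinal.lift_two] at hM
    rw [h] at hM
    rcases le_total (#ι) 2 with hle | hle
    · exfalso
      rw [sup_eq_right.mpr ?_] at hM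
      · exact absurd hM.symm (ne_of_lt (by
          have h3 : (2 : Cardinal.{w}) < ℵ₀ := Cardinal.nat_lt_aleph0 2
          exact lt_of_lt_of_le h3 Cardinal.aleph0_le_continuum))
      · simpa using hle
    · rw [sup_eq_left.mpr (by simpa using hle)] at hM
      exact hM.symm

/-- In a two-ended highly-arc-transitive digraph of out-valency `2` with
fibre size `m > 2`, the stabilizer of a vertex in the automorphism group is an elementary
abelian `2`-group, isomorphic to `(ℤ/2)^ℤ`. -/
theorem two_ended_valency_two_stabilizer
    {V : Type*} (E : V → V → Prop)
    (h2 : TwoEnded E) (hhat : HighlyArcTransitive E)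
    (hout : ∀ v : V, (outSet E v).ncard = 2)
    (φ : V → ℤ) (hsurj : Function.Surjective φ)
    (hhom : ∀ u v : V, E u v → φ v = φ u + 1)
    (m : ℕ) (hm : 2 < m) (hfib : ∀ i : ℤ, (φ ⁻¹' {i}).ncard = m) :
    ∀ v : V, Nonempty (↥(vStab E v) ≃* (∀ _ : ℤ, Multiplicative (ZMod 2))) := by
  classical
  intro v
  set G : HATSetup V :=
    { E := E, φ := φ, m := m, hm := hm.le, hconn := h2.1, hhat := hhat,
      hout := hout, hin := derive_hin E φ hhat hout hhom m hm hfib,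
      hsurj := hsurj, hhom := hhom, hfib := hfib } with hG
  obtain ⟨hEA, hcard⟩ := HATSetup.key G.m G rfl
  have hperm_aut : ∀ n : ↥(vStab E v), ((n : ↥(autGroup E)) : Equiv.Perm V) ∈ autGroup E :=
    fun n => (n : ↥(autGroup E)).property
  have hfixv : ∀ n : ↥(vStab E v), ((n : ↥(autGroup E)) : Equiv.Perm V) v = v :=
    fun n => n.property
  have hshift : ∀ n : ↥(vStab E v), ∀ x, φ (((n : ↥(autGroup E)) : Equiv.Perm V) x) = φ x :=
    fun n x => G.shift0_of_fix (hperm_aut n) (hfixv n) x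
  have hsq : ∀ n : ↥(vStab E v), n * n = 1 := by
    intro n
    have h := (hEA _ (hperm_aut n) (hshift n)).1
    apply Subtype.ext
    apply Subtype.ext
    apply Equiv.ext
    intro x
    simpa using h x
  have hcomm : ∀ a b : ↥(vStab E v), a * b = b * a := by
    intro a b
    have h := (hEA _ (hperm_aut a) (hshift a)).2 _ (hperm_aut b) (hshift b)
    apply Subtype.ext
    apply Subtype.ext
    apply Equiv.ext
    intro x
    simpa using h x
  -- cardinality of the stabilizer
  have hNle : #(↥(vStab E v)) ≤ Cardinal.continuum := by
    have hinj : Function.Injective (fun n : ↥(vStab E v) =>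
        (⟨((n : ↥(autGroup E)) : Equiv.Perm V), hperm_aut n, hshift n⟩ : G.A0T)) := by
      intro a b hab
      have h' := congrArg (fun x : G.A0T => x.val) hab
      exact Subtype.ext (Subtype.ext h')
    calc #(↥(vStab E v)) ≤ #G.A0T := Cardinal.mk_le_of_injective hinj
      _ = Cardinal.continuum := hcard
  set S : Set V := Set.range (fun g : G.A0T => g.val v) with hS
  have hex : ∀ u : ↥S, ∃ gp : G.A0T, gp.val v = u.val := fun u => u.property
  choose t ht using hex
  have hstab : ∀ g : G.A0T, ((t ⟨g.val v, ⟨g, rfl⟩⟩).val⁻¹ * g.val) v = v := by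
    intro g
    have h1 : (t ⟨g.val v, ⟨g, rfl⟩⟩).val v = g.val v := ht ⟨g.val v, ⟨g, rfl⟩⟩
    show ((t ⟨g.val v, ⟨g, rfl⟩⟩).val⁻¹) (g.val v) = v
    have h2 := congrArg (fun x : V => (t ⟨g.val v, ⟨g, rfl⟩⟩).val⁻¹ x) h1
    beta_reduce at h2
    rw [Equiv.Perm.inv_def, Equiv.symm_apply_apply] at h2
    exact h2.symm
  set Ψ : G.A0T → ↥S × ↥(vStab E v) := fun g =>
    (⟨g.val v, ⟨g, rfl⟩⟩,
      ⟨⟨(t ⟨g.val v, ⟨g, rfl⟩⟩).val⁻¹ * g.val,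
        mul_mem (inv_mem (t ⟨g.val v, ⟨g, rfl⟩⟩).property.1) g.property.1⟩,
       hstab g⟩) with hΨ
  have hΨinj : Function.Injective Ψ := by
    intro g1 g2 h
    have h1 : g1.val v = g2.val v := congrArg (fun p => (Prod.fst p).val) h
    have hu : (⟨g1.val v, ⟨g1, rfl⟩⟩ : ↥S) = ⟨g2.val v, ⟨g2, rfl⟩⟩ := Subtype.ext h1
    have h2 : (t ⟨g1.val v, ⟨g1, rfl⟩⟩).val⁻¹ * g1.val
        = (t ⟨g2.val v, ⟨g2, rfl⟩⟩).val⁻¹ * g2.val := by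
      have := congrArg (fun p => (((Prod.snd p) : ↥(vStab E v)) : ↥(autGroup E)).val) h
      simpa [hΨ] using this
    rw [hu] at h2
    exact Subtype.ext (mul_left_cancel h2)
  have hSfin : S.Finite := by
    apply (G.fib_finite (φ v)).subset
    rintro u ⟨g, rfl⟩
    exact g.property.2 v
  have hprod := Cardinal.mk_le_of_injective hΨinj
  rw [Cardinal.mk_prod, Cardinal.lift_id, Cardinal.lift_id, hcard] at hprod
  have hSlt : #(↥S) < ℵ₀ := by
    haveI := hSfin.to_subtype
    exact Cardinal.lt_aleph0_of_finite _
  have hNge : Cardinal.continuum ≤ #(↥(vStab E v)) := by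
    rcases le_or_gt ℵ₀ (#(↥(vStab E v))) with hN | hN
    · have hstep : #(↥S) * #(↥(vStab E v)) ≤ #(↥(vStab E v)) * #(↥(vStab E v)) :=
        mul_le_mul_left (hSlt.le.trans hN) _
      rw [Cardinal.mul_eq_self hN] at hstep
      exact hprod.trans hstep
    · exfalso
      have hlt := Cardinal.mul_lt_aleph0 hSlt hN
      exact absurd (hprod.trans_lt hlt) (not_lt.mpr Cardinal.aleph0_le_continuum)
  have hNcard : #(↥(vStab E v)) = Cardinal.continuum := le_antisymm hNle hNge
  -- the stabilizer as a ZMod 2 vector space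
  letI : CommGroup (↥(vStab E v)) :=
    { (inferInstance : Group (↥(vStab E v))) with mul_comm := hcomm }
  letI : Module (ZMod 2) (Additive (↥(vStab E v))) :=
    AddCommGroup.zmodModule (n := 2) (by
      intro x
      rw [two_smul]
      exact hsq (Additive.toMul x))
  have hrank1 : Module.rank (ZMod 2) (Additive (↥(vStab E v))) = Cardinal.continuum := by
    apply rank_continuum_of_mk
    rw [← hNcard]
    exact Cardinal.mk_congr (Additive.ofMul.symm)
  have hrank2 : Module.rank (ZMod 2) (ℤ → ZMod 2) = Cardinal.continuum.{0} := by
    apply rank_continuum_of_mk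
    rw [← Cardinal.power_def (ZMod 2) ℤ, Cardinal.mk_int]
    have h2' : #(ZMod 2) = 2 := by simp [Cardinal.mk_fintype]
    rw [h2', Cardinal.two_power_aleph0]
  obtain ⟨e⟩ := nonempty_linearEquiv_of_lift_rank_eq (R := ZMod 2)
    (M := Additive (↥(vStab E v))) (M' := ℤ → ZMod 2)
    (by rw [hrank1, hrank2, Cardinal.lift_continuum, Cardinal.lift_continuum])
  refine ⟨{ toFun := fun n i => Multiplicative.ofAdd (e (Additive.ofMul n) i)
            invFun := fun f => Additive.toMul (e.symm (fun i => Multiplicative.toAdd (f i)))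
            left_inv := ?_
            right_inv := ?_
            map_mul' := ?_ }⟩
  · intro n
    simp
  · intro f
    funext i
    simp
  · intro a b
    funext i
    simp [ofMul_mul, map_add]
end
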